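/- arXiv:1208.3915 — 2 statements merged into one kernel-verified Lean document; each statement's English description precedes it below -/
import Mathlib

section
/- For all n ≥ 1, the number of triangulations of a convex (2n+1)-gon with vertices labeled 0, 1, ..., 2n that contain no diagonal {x, y} with x + y ≡ 1 (mod 2n+1) (i.e., no diagonal parallel to the side {0,1}) equals 2^{2n-1} * C_{n-1} - C_{2n-1}, where C_m denotes the m-th Catalan number. -/
def IsPolygonDiagonal (m : ℕ) (e : ℕ × ℕ) : Prop :=
  e.1 < e.2 ∧ e.2 < m ∧ e.1 + 2 ≤ e.2 ∧ ¬(e.1 = 0 ∧ e.2 = m - 1)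

def DiagonalsCross (e f : ℕ × ℕ) : Prop :=
  (e.1 < f.1 ∧ f.1 < e.2 ∧ e.2 < f.2) ∨ (f.1 < e.1 ∧ e.1 < f.2 ∧ f.2 < e.2)

def IsTriangulation (m : ℕ) (T : Finset (ℕ × ℕ)) : Prop :=
  (∀ e ∈ T, IsPolygonDiagonal m e) ∧
  (∀ e ∈ T, ∀ f ∈ T, ¬ DiagonalsCross e f) ∧
  T.card = m - 3

open Finset

attribute [local instance] Classical.propDecidable

namespace PolyTri

/-- `e` is a diagonal of the convex polygon whose vertex set is `S`. -/
def Diag (S : Finset ℕ) (e : ℕ × ℕ) : Prop :=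
  e.1 ∈ S ∧ e.2 ∈ S ∧ e.1 < e.2 ∧ (∃ c ∈ S, e.1 < c ∧ c < e.2) ∧ (∃ c ∈ S, c < e.1 ∨ e.2 < c)

def TriOn (S : Finset ℕ) (T : Finset (ℕ × ℕ)) : Prop :=
  (∀ e ∈ T, Diag S e) ∧ (∀ e ∈ T, ∀ f ∈ T, ¬ DiagonalsCross e f) ∧ T.card = S.card - 3

noncomputable def triF (S : Finset ℕ) (P : ℕ × ℕ → Prop) : Finset (Finset (ℕ × ℕ)) :=
  (S ×ˢ S).powerset.filter (fun T => TriOn S T ∧ ∀ e ∈ T, P e)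

noncomputable def inn (S : Finset ℕ) (a b : ℕ) : Finset ℕ := S.filter (fun x => a ≤ x ∧ x ≤ b)
noncomputable def out (S : Finset ℕ) (a b : ℕ) : Finset ℕ := S.filter (fun x => x ≤ a ∨ b ≤ x)

lemma mem_triF {S : Finset ℕ} {P : ℕ × ℕ → Prop} {T : Finset (ℕ × ℕ)} :
    T ∈ triF S P ↔ TriOn S T ∧ ∀ e ∈ T, P e := by
  unfold triF
  rw [mem_filter, mem_powerset, and_iff_right_iff_imp]
  rintro ⟨⟨h1, -, -⟩, -⟩ e he
  have := h1 e he
  rw [mem_product]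
  exact ⟨this.1, this.2.1⟩

noncomputable def triFc (S : Finset ℕ) (P : ℕ × ℕ → Prop) (R : Finset (ℕ × ℕ) → Prop) :
    Finset (Finset (ℕ × ℕ)) :=
  (S ×ˢ S).powerset.filter (fun T => (TriOn S T ∧ ∀ e ∈ T, P e) ∧ R T)

lemma mem_triFc {S : Finset ℕ} {P : ℕ × ℕ → Prop} {R : Finset (ℕ × ℕ) → Prop}
    {T : Finset (ℕ × ℕ)} : T ∈ triFc S P R ↔ (TriOn S T ∧ ∀ e ∈ T, P e) ∧ R T := by
  unfold triFc
  rw [mem_filter, mem_powerset, and_iff_right_iff_imp]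
  rintro ⟨⟨⟨h1, -, -⟩, -⟩, -⟩ e he
  have := h1 e he
  rw [mem_product]
  exact ⟨this.1, this.2.1⟩

lemma triFc_true (S : Finset ℕ) (P : ℕ × ℕ → Prop) :
    triFc S P (fun _ => True) = triF S P := by
  ext T
  rw [mem_triFc, mem_triF]
  tauto

lemma triFc_congr {S : Finset ℕ} {P : ℕ × ℕ → Prop} {R₁ R₂ : Finset (ℕ × ℕ) → Prop}
    (h : ∀ T, TriOn S T → (∀ e ∈ T, P e) → (R₁ T ↔ R₂ T)) : triFc S P R₁ = triFc S P R₂ := by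
  ext T
  rw [mem_triFc, mem_triFc]
  constructor
  · rintro ⟨⟨h1, h2⟩, h3⟩; exact ⟨⟨h1, h2⟩, (h T h1 h2).mp h3⟩
  · rintro ⟨⟨h1, h2⟩, h3⟩; exact ⟨⟨h1, h2⟩, (h T h1 h2).mpr h3⟩

lemma cross_self (e : ℕ × ℕ) : ¬ DiagonalsCross e e := by
  simp only [DiagonalsCross]; omega

lemma side_cases {a b x y : ℕ} (hxy : x < y)
    (h : ¬ DiagonalsCross (a, b) (x, y)) (hne : ¬(x = a ∧ y = b)) :
    (a ≤ x ∧ y ≤ b ∧ ¬(x = a ∧ y = b)) ∨ ((x ≤ a ∨ b ≤ x) ∧ (y ≤ a ∨ b ≤ y)) := by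
  simp only [DiagonalsCross, not_or] at h
  omega

lemma diag_up {S' S : Finset ℕ} {e : ℕ × ℕ} (h : S' ⊆ S) (hd : Diag S' e) : Diag S e := by
  obtain ⟨h1, h2, h3, ⟨c, hc, hc'⟩, ⟨c', hc2, hc2'⟩⟩ := hd
  exact ⟨h h1, h h2, h3, ⟨c, h hc, hc'⟩, ⟨c', h hc2, hc2'⟩⟩

lemma diag_inn {S : Finset ℕ} {a b x y : ℕ} (hd : Diag S (a, b)) (he : Diag S (x, y))
    (hax : a ≤ x) (hyb : y ≤ b) (hne : ¬(x = a ∧ y = b)) : Diag (inn S a b) (x, y) := by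
  obtain ⟨ha, hb, hab, -, -⟩ := hd
  obtain ⟨hx, hy, hxy, ⟨c, hc, hc1, hc2⟩, -⟩ := he
  refine ⟨by simp [inn, hx]; omega, by simp [inn, hy]; omega, hxy,
    ⟨c, by simp [inn, hc]; omega, hc1, hc2⟩, ?_⟩
  rcases eq_or_lt_of_le hax with rfl | hlt
  · exact ⟨b, by simp [inn, hb]; omega, by omega⟩
  · exact ⟨a, by simp [inn, ha]; omega, by omega⟩

lemma diag_out {S : Finset ℕ} {a b x y : ℕ} (hd : Diag S (a, b)) (he : Diag S (x, y))
    (hx : x ≤ a ∨ b ≤ x) (hy : y ≤ a ∨ b ≤ y) (hne : ¬(x = a ∧ y = b)) :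
    Diag (out S a b) (x, y) := by
  obtain ⟨ha, hb, hab, -, -⟩ := hd
  obtain ⟨hxS, hyS, hxy, ⟨c, hc, hc1, hc2⟩, ⟨c', hc', hcc⟩⟩ := he
  refine ⟨by simp [out, hxS]; omega, by simp [out, hyS]; omega, hxy, ?_, ?_⟩
  · -- between witness in out
    rcases hy with hy | hy
    · exact ⟨c, by simp [out, hc]; omega, hc1, hc2⟩
    · rcases hx with hx | hx
      · -- x ≤ a, b ≤ y
        rcases eq_or_lt_of_le hx with rfl | hlt
        · exact ⟨b, by simp [out, hb], by omega, by omega⟩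
        · exact ⟨a, by simp [out, ha], by omega, by omega⟩
      · exact ⟨c, by simp [out, hc]; omega, hc1, hc2⟩
  · -- outside witness in out
    rcases hy with hy | hy
    · exact ⟨b, by simp [out, hb], by omega⟩
    · rcases hx with hx | hx
      · exact ⟨c', by simp [out, hc']; omega, hcc⟩
      · exact ⟨a, by simp [out, ha], by omega⟩

lemma inn_edge_shape {S : Finset ℕ} {a b : ℕ} {e : ℕ × ℕ} (he : Diag (inn S a b) e) :
    a ≤ e.1 ∧ e.1 < e.2 ∧ e.2 ≤ b ∧ ¬(e.1 = a ∧ e.2 = b) := by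
  obtain ⟨h1, h2, h3, -, ⟨c, hc, hcc⟩⟩ := he
  simp only [inn, mem_filter] at h1 h2 hc
  refine ⟨h1.2.1, h3, h2.2.2, ?_⟩
  omega

lemma out_edge_shape {S : Finset ℕ} {a b : ℕ} {e : ℕ × ℕ} (hab : a < b)
    (he : Diag (out S a b) e) :
    (e.1 ≤ a ∨ b ≤ e.1) ∧ e.1 < e.2 ∧ (e.2 ≤ a ∨ b ≤ e.2) ∧ ¬(e.1 = a ∧ e.2 = b) := by
  obtain ⟨h1, h2, h3, ⟨c, hc, hc1, hc2⟩, -⟩ := he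
  simp only [out, mem_filter] at h1 h2 hc
  refine ⟨h1.2, h3, h2.2, ?_⟩
  omega

lemma not_cross_inn_out {a b x y u v : ℕ} (hax : a ≤ x) (hyb : y ≤ b) (hxy : x < y)
    (hu : u ≤ a ∨ b ≤ u) (hv : v ≤ a ∨ b ≤ v) (huv : u < v) :
    ¬ DiagonalsCross (x, y) (u, v) ∧ ¬ DiagonalsCross (u, v) (x, y) := by
  simp only [DiagonalsCross]; omega

lemma not_cross_d_inn {a b x y : ℕ} (hax : a ≤ x) (hyb : y ≤ b) (hxy : x < y) (hab : a < b) :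
    ¬ DiagonalsCross (a, b) (x, y) ∧ ¬ DiagonalsCross (x, y) (a, b) := by
  simp only [DiagonalsCross]; omega

lemma not_cross_d_out {a b x y : ℕ} (hx : x ≤ a ∨ b ≤ x) (hy : y ≤ a ∨ b ≤ y)
    (hxy : x < y) (hab : a < b) :
    ¬ DiagonalsCross (a, b) (x, y) ∧ ¬ DiagonalsCross (x, y) (a, b) := by
  simp only [DiagonalsCross]; omega

lemma inn_card_add_out_card {S : Finset ℕ} {a b : ℕ} (ha : a ∈ S) (hb : b ∈ S) (hab : a < b) :
    (inn S a b).card + (out S a b).card = S.card + 2 := by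
  have h1 : inn S a b ∪ out S a b = S := by
    ext x; simp only [inn, out, mem_union, mem_filter]
    constructor
    · rintro (⟨h, -⟩ | ⟨h, -⟩) <;> exact h
    · intro h; by_cases hc : a ≤ x ∧ x ≤ b
      · exact Or.inl ⟨h, hc⟩
      · exact Or.inr ⟨h, by omega⟩
  have h2 : inn S a b ∩ out S a b = {a, b} := by
    ext x; simp only [inn, out, mem_inter, mem_filter, mem_insert, mem_singleton]
    constructor
    · rintro ⟨⟨-, h1⟩, ⟨-, h2⟩⟩; omega
    · rintro (rfl | rfl)
      · exact ⟨⟨ha, by omega⟩, ⟨ha, by omega⟩⟩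
      · exact ⟨⟨hb, by omega⟩, ⟨hb, by omega⟩⟩
  have h3 : ({a, b} : Finset ℕ).card = 2 := by
    rw [card_insert_of_notMem (by simp; omega), card_singleton]
  have := Finset.card_union_add_card_inter (inn S a b) (out S a b)
  rw [h1, h2, h3] at this
  omega

lemma card_inn_ge {S : Finset ℕ} {a b : ℕ} (hd : Diag S (a, b)) : 3 ≤ (inn S a b).card := by
  obtain ⟨ha, hb, hab, ⟨c, hc, hc1, hc2⟩, -⟩ := hd
  have hsub : ({a, c, b} : Finset ℕ) ⊆ inn S a b := by
    intro x hx
    simp only [mem_insert, mem_singleton] at hx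
    rcases hx with rfl | rfl | rfl <;> simp [inn, ha, hb, hc] <;> omega
  have hcard : ({a, c, b} : Finset ℕ).card = 3 := by
    rw [card_insert_of_notMem (by simp; omega), card_insert_of_notMem (by simp; omega),
      card_singleton]
  calc 3 = ({a, c, b} : Finset ℕ).card := hcard.symm
    _ ≤ _ := card_le_card hsub

lemma card_out_ge {S : Finset ℕ} {a b : ℕ} (hd : Diag S (a, b)) : 3 ≤ (out S a b).card := by
  obtain ⟨ha, hb, hab, -, ⟨c, hc, hcc⟩⟩ := hd
  have hsub : ({a, b, c} : Finset ℕ) ⊆ out S a b := by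
    intro x hx
    simp only [mem_insert, mem_singleton] at hx
    rcases hx with rfl | rfl | rfl <;> simp [out, ha, hb, hc] <;> omega
  have hcard : ({a, b, c} : Finset ℕ).card = 3 := by
    rw [card_insert_of_notMem (by simp; omega), card_insert_of_notMem (by simp; omega),
      card_singleton]
  calc 3 = ({a, b, c} : Finset ℕ).card := hcard.symm
    _ ≤ _ := card_le_card hsub

lemma card_inn_lt {S : Finset ℕ} {a b : ℕ} (hd : Diag S (a, b)) : (inn S a b).card < S.card := by
  obtain ⟨ha, hb, hab, -, ⟨c, hc, hcc⟩⟩ := hd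
  apply Finset.card_lt_card
  have hsub : inn S a b ⊆ S := filter_subset _ _
  rw [Finset.ssubset_iff_of_subset hsub]
  exact ⟨c, hc, by simp [inn]; omega⟩

lemma card_out_lt {S : Finset ℕ} {a b : ℕ} (hd : Diag S (a, b)) : (out S a b).card < S.card := by
  obtain ⟨ha, hb, hab, ⟨c, hc, hc1, hc2⟩, -⟩ := hd
  apply Finset.card_lt_card
  have hsub : out S a b ⊆ S := filter_subset _ _
  rw [Finset.ssubset_iff_of_subset hsub]
  exact ⟨c, hc, by simp [out]; omega⟩

lemma pair_ne_of_comp {e d : ℕ × ℕ} (h : e ≠ d) : ¬(e.1 = d.1 ∧ e.2 = d.2) := by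
  rintro ⟨h1, h2⟩; exact h (Prod.ext h1 h2)

/-- Any set of pairwise non-crossing diagonals of the polygon on `S` has at most
`S.card - 3` elements. -/
lemma noncross_card_le : ∀ (N : ℕ) (S : Finset ℕ) (T : Finset (ℕ × ℕ)),
    S.card ≤ N → (∀ e ∈ T, Diag S e) → (∀ e ∈ T, ∀ f ∈ T, ¬ DiagonalsCross e f) →
    T.card ≤ S.card - 3 := by
  intro N
  induction N with
  | zero =>
    intro S T hS hd hnc
    have : T = ∅ := by
      rw [Finset.eq_empty_iff_forall_notMem]
      intro e he
      have h1 := (hd e he).1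
      have : S = ∅ := Finset.card_eq_zero.mp (by omega)
      rw [this] at h1; exact absurd h1 (notMem_empty _)
    simp [this]
  | succ N IH =>
    intro S T hS hd hnc
    rcases T.eq_empty_or_nonempty with rfl | ⟨d, hdT⟩
    · simp
    obtain ⟨a, b⟩ := d
    have hdd := hd _ hdT
    have hab : a < b := hdd.2.2.1
    set T1 := (T.erase (a, b)).filter (fun e => a ≤ e.1 ∧ e.2 ≤ b) with hT1
    set T2 := (T.erase (a, b)).filter (fun e => ¬(a ≤ e.1 ∧ e.2 ≤ b)) with hT2
    have hsplit : T1.card + T2.card + 1 = T.card := by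
      have hsub1 : T1 ⊆ T.erase (a, b) := filter_subset _ _
      have hT2' : T2 = T.erase (a, b) \ T1 := by
        ext e; rw [hT2, hT1, mem_sdiff, mem_filter, mem_filter]; tauto
      have hc2 : T2.card = (T.erase (a, b)).card - T1.card := by
        rw [hT2', card_sdiff_of_subset hsub1]
      have hc1 : T1.card ≤ (T.erase (a, b)).card := card_le_card hsub1
      have hce : (T.erase (a, b)).card = T.card - 1 := Finset.card_erase_of_mem hdT
      have h3 : 1 ≤ T.card := Finset.card_pos.mpr ⟨_, hdT⟩
      omega
    have hb1 : T1.card ≤ (inn S a b).card - 3 := by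
      apply IH (inn S a b) T1 (by have := card_inn_lt (S := S) (a := a) (b := b) hdd; omega)
      · intro e he
        rw [hT1, mem_filter, mem_erase] at he
        obtain ⟨⟨hne, heT⟩, h1, h2⟩ := he
        exact diag_inn hdd (by rw [show e = (e.1, e.2) from rfl] at heT ⊢; exact hd _ heT)
          h1 h2 (pair_ne_of_comp hne)
      · intro e he f hf
        rw [hT1, mem_filter, mem_erase] at he hf
        exact hnc _ he.1.2 _ hf.1.2
    have hb2 : T2.card ≤ (out S a b).card - 3 := by
      apply IH (out S a b) T2 (by have := card_out_lt (S := S) (a := a) (b := b) hdd; omega)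
      · intro e he
        rw [hT2, mem_filter, mem_erase] at he
        obtain ⟨⟨hne, heT⟩, hmid⟩ := he
        have heD : Diag S e := hd _ heT
        have hxy : e.1 < e.2 := heD.2.2.1
        have hside := side_cases hxy (by
            have := hnc _ hdT _ heT
            rw [show e = (e.1, e.2) from rfl] at this; exact this)
          (pair_ne_of_comp hne)
        rcases hside with ⟨hax, hyb, -⟩ | ⟨hx, hy⟩
        · exact absurd ⟨hax, hyb⟩ hmid
        · exact diag_out hdd (by rw [show e = (e.1, e.2) from rfl] at heT ⊢; exact hd _ heT)
            hx hy (pair_ne_of_comp hne)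
      · intro e he f hf
        rw [hT2, mem_filter, mem_erase] at he hf
        exact hnc _ he.1.2 _ hf.1.2
    have h4 := inn_card_add_out_card (S := S) (a := a) (b := b) hdd.1 hdd.2.1 hab
    have h5 := card_inn_ge (S := S) (a := a) (b := b) hdd
    have h6 := card_out_ge (S := S) (a := a) (b := b) hdd
    omega

lemma tri_maximal {S : Finset ℕ} {T : Finset (ℕ × ℕ)} {d : ℕ × ℕ}
    (hT : TriOn S T) (hd : Diag S d) (hdT : d ∉ T) :
    ∃ e ∈ T, DiagonalsCross d e ∨ DiagonalsCross e d := by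
  by_contra hcon
  push_neg at hcon
  have hcard4 : 4 ≤ S.card := by
    obtain ⟨h1, h2, h3, ⟨c, hc, hc1, hc2⟩, ⟨c', hc', hcc⟩⟩ := hd
    have hsub : ({d.1, d.2, c, c'} : Finset ℕ) ⊆ S := by
      intro x hx
      simp only [mem_insert, mem_singleton] at hx
      rcases hx with rfl | rfl | rfl | rfl <;> assumption
    have : ({d.1, d.2, c, c'} : Finset ℕ).card = 4 := by
      rw [card_insert_of_notMem (by simp; omega), card_insert_of_notMem (by simp; omega),
        card_insert_of_notMem (by simp; omega), card_singleton]
    calc 4 = ({d.1, d.2, c, c'} : Finset ℕ).card := this.symm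
      _ ≤ _ := card_le_card hsub
  have hle : (insert d T).card ≤ S.card - 3 := by
    apply noncross_card_le S.card S _ le_rfl
    · intro e he
      rcases Finset.mem_insert.mp he with rfl | he'
      · exact hd
      · exact hT.1 _ he'
    · intro e he f hf
      rcases Finset.mem_insert.mp he with rfl | he' <;>
        rcases Finset.mem_insert.mp hf with rfl | hf'
      · exact cross_self _
      · exact (hcon _ hf').1
      · exact (hcon _ he').2
      · exact hT.2.1 _ he' _ hf'
  rw [Finset.card_insert_of_notMem hdT, hT.2.2] at hle
  omega

lemma triF_small {S : Finset ℕ} {P : ℕ × ℕ → Prop} (h : S.card ≤ 3) : triF S P = {∅} := by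
  ext T
  rw [mem_triF, mem_singleton]
  constructor
  · rintro ⟨⟨-, -, hcard⟩, -⟩
    exact Finset.card_eq_zero.mp (by omega)
  · rintro rfl
    exact ⟨⟨fun e he => absurd he (notMem_empty _), fun e he => absurd he (notMem_empty _),
      by simp; omega⟩, fun e he => absurd he (notMem_empty _)⟩

lemma triF_congr {S : Finset ℕ} {P₁ P₂ : ℕ × ℕ → Prop}
    (h : ∀ e, Diag S e → (P₁ e ↔ P₂ e)) : triF S P₁ = triF S P₂ := by
  ext T
  rw [mem_triF, mem_triF]
  constructor
  · rintro ⟨hT, hP⟩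
    exact ⟨hT, fun e he => (h e (hT.1 e he)).mp (hP e he)⟩
  · rintro ⟨hT, hP⟩
    exact ⟨hT, fun e he => (h e (hT.1 e he)).mpr (hP e he)⟩

end PolyTri

namespace PolyTri

noncomputable def inPart (d : ℕ × ℕ) (T : Finset (ℕ × ℕ)) : Finset (ℕ × ℕ) :=
  (T.erase d).filter (fun e => d.1 ≤ e.1 ∧ e.2 ≤ d.2)

noncomputable def outPart (d : ℕ × ℕ) (T : Finset (ℕ × ℕ)) : Finset (ℕ × ℕ) :=
  (T.erase d).filter (fun e => ¬(d.1 ≤ e.1 ∧ e.2 ≤ d.2))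

lemma parts_card (d : ℕ × ℕ) (T : Finset (ℕ × ℕ)) (hdT : d ∈ T) :
    (inPart d T).card + (outPart d T).card + 1 = T.card := by
  have hsub1 : inPart d T ⊆ T.erase d := filter_subset _ _
  have hT2' : outPart d T = T.erase d \ inPart d T := by
    ext e; rw [outPart, inPart, mem_sdiff, mem_filter, mem_filter]; tauto
  have hc2 : (outPart d T).card = (T.erase d).card - (inPart d T).card := by
    rw [hT2', card_sdiff_of_subset hsub1]
  have hc1 : (inPart d T).card ≤ (T.erase d).card := card_le_card hsub1
  have hce : (T.erase d).card = T.card - 1 := Finset.card_erase_of_mem hdT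
  have h3 : 1 ≤ T.card := Finset.card_pos.mpr ⟨_, hdT⟩
  omega

lemma parts_tri {S : Finset ℕ} {T : Finset (ℕ × ℕ)} {a b : ℕ}
    (hd : Diag S (a, b)) (hT : TriOn S T) (hdT : (a, b) ∈ T) :
    TriOn (inn S a b) (inPart (a, b) T) ∧ TriOn (out S a b) (outPart (a, b) T) := by
  have hab : a < b := hd.2.2.1
  have hdiag1 : ∀ e ∈ inPart (a, b) T, Diag (inn S a b) e := by
    intro e he
    rw [inPart, mem_filter, mem_erase] at he
    obtain ⟨⟨hne, heT⟩, h1, h2⟩ := he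
    exact diag_inn hd (by rw [show e = (e.1, e.2) from rfl] at heT ⊢; exact hT.1 _ heT)
      h1 h2 (pair_ne_of_comp hne)
  have hdiag2 : ∀ e ∈ outPart (a, b) T, Diag (out S a b) e := by
    intro e he
    rw [outPart, mem_filter, mem_erase] at he
    obtain ⟨⟨hne, heT⟩, hmid⟩ := he
    have heD : Diag S e := hT.1 _ heT
    have hside := side_cases heD.2.2.1 (by
        have := hT.2.1 _ hdT _ heT
        rw [show e = (e.1, e.2) from rfl] at this; exact this)
      (pair_ne_of_comp hne)
    rcases hside with ⟨hax, hyb, -⟩ | ⟨hx, hy⟩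
    · exact absurd ⟨hax, hyb⟩ hmid
    · exact diag_out hd (by rw [show e = (e.1, e.2) from rfl] at heT ⊢; exact hT.1 _ heT)
        hx hy (pair_ne_of_comp hne)
  have hnc1 : ∀ e ∈ inPart (a, b) T, ∀ f ∈ inPart (a, b) T, ¬ DiagonalsCross e f := by
    intro e he f hf
    rw [inPart, mem_filter, mem_erase] at he hf
    exact hT.2.1 _ he.1.2 _ hf.1.2
  have hnc2 : ∀ e ∈ outPart (a, b) T, ∀ f ∈ outPart (a, b) T, ¬ DiagonalsCross e f := by
    intro e he f hf
    rw [outPart, mem_filter, mem_erase] at he hf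
    exact hT.2.1 _ he.1.2 _ hf.1.2
  have hb1 := noncross_card_le (inn S a b).card (inn S a b) _ le_rfl hdiag1 hnc1
  have hb2 := noncross_card_le (out S a b).card (out S a b) _ le_rfl hdiag2 hnc2
  have h4 := inn_card_add_out_card (S := S) (a := a) (b := b) hd.1 hd.2.1 hab
  have h5 := card_inn_ge (S := S) (a := a) (b := b) hd
  have h6 := card_out_ge (S := S) (a := a) (b := b) hd
  have h7 := parts_card (a, b) T hdT
  have h8 : T.card = S.card - 3 := hT.2.2
  have h9 : 4 ≤ S.card := by omega
  exact ⟨⟨hdiag1, hnc1, by omega⟩, ⟨hdiag2, hnc2, by omega⟩⟩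

lemma reassemble {S : Finset ℕ} {T₁ T₂ : Finset (ℕ × ℕ)} {a b : ℕ}
    (hd : Diag S (a, b)) (h1 : TriOn (inn S a b) T₁) (h2 : TriOn (out S a b) T₂) :
    TriOn S (insert (a, b) (T₁ ∪ T₂)) ∧ (a, b) ∉ T₁ ∪ T₂ ∧
      inPart (a, b) (insert (a, b) (T₁ ∪ T₂)) = T₁ ∧
      outPart (a, b) (insert (a, b) (T₁ ∪ T₂)) = T₂ := by
  have hab : a < b := hd.2.2.1
  have hsh1 : ∀ e ∈ T₁, a ≤ e.1 ∧ e.1 < e.2 ∧ e.2 ≤ b ∧ ¬(e.1 = a ∧ e.2 = b) :=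
    fun e he => inn_edge_shape (h1.1 e he)
  have hsh2 : ∀ e ∈ T₂, (e.1 ≤ a ∨ b ≤ e.1) ∧ e.1 < e.2 ∧ (e.2 ≤ a ∨ b ≤ e.2) ∧
      ¬(e.1 = a ∧ e.2 = b) := fun e he => out_edge_shape hab (h2.1 e he)
  have hd1 : (a, b) ∉ T₁ := fun h => (hsh1 _ h).2.2.2 ⟨rfl, rfl⟩
  have hd2 : (a, b) ∉ T₂ := fun h => (hsh2 _ h).2.2.2 ⟨rfl, rfl⟩
  have hdu : (a, b) ∉ T₁ ∪ T₂ := by rw [mem_union]; tauto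
  have hdisj : Disjoint T₁ T₂ := by
    rw [Finset.disjoint_left]
    intro e he1 he2
    have s1 := hsh1 _ he1
    have s2 := hsh2 _ he2
    omega
  -- non-crossing across all cases
  have hnc : ∀ e ∈ insert (a, b) (T₁ ∪ T₂), ∀ f ∈ insert (a, b) (T₁ ∪ T₂),
      ¬ DiagonalsCross e f := by
    intro e he f hf
    rw [mem_insert, mem_union] at he hf
    have epair : e = (e.1, e.2) := rfl
    have fpair : f = (f.1, f.2) := rfl
    rcases he with rfl | he1 | he2
    · rcases hf with rfl | hf1 | hf2
      · exact cross_self _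
      · have s := hsh1 _ hf1
        rw [fpair]; exact (not_cross_d_inn s.1 s.2.2.1 s.2.1 hab).1
      · have s := hsh2 _ hf2
        rw [fpair]; exact (not_cross_d_out s.1 s.2.2.1 s.2.1 hab).1
    · rcases hf with rfl | hf1 | hf2
      · have s := hsh1 _ he1
        rw [epair]; exact (not_cross_d_inn s.1 s.2.2.1 s.2.1 hab).2
      · exact h1.2.1 _ he1 _ hf1
      · have s := hsh1 _ he1
        have s2 := hsh2 _ hf2
        rw [epair, fpair]
        exact (not_cross_inn_out s.1 s.2.2.1 s.2.1 s2.1 s2.2.2.1 s2.2.1).1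
    · rcases hf with rfl | hf1 | hf2
      · have s := hsh2 _ he2
        rw [epair]; exact (not_cross_d_out s.1 s.2.2.1 s.2.1 hab).2
      · have s := hsh1 _ hf1
        have s2 := hsh2 _ he2
        rw [epair, fpair]
        exact (not_cross_inn_out s.1 s.2.2.1 s.2.1 s2.1 s2.2.2.1 s2.2.1).2
      · exact h2.2.1 _ he2 _ hf2
  have hdiag : ∀ e ∈ insert (a, b) (T₁ ∪ T₂), Diag S e := by
    intro e he
    rw [mem_insert, mem_union] at he
    rcases he with rfl | he1 | he2
    · exact hd
    · exact diag_up (filter_subset _ _) (h1.1 _ he1)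
    · exact diag_up (filter_subset _ _) (h2.1 _ he2)
  have hcard : (insert (a, b) (T₁ ∪ T₂)).card = S.card - 3 := by
    rw [Finset.card_insert_of_notMem hdu, Finset.card_union_of_disjoint hdisj, h1.2.2, h2.2.2]
    have h4 := inn_card_add_out_card (S := S) (a := a) (b := b) hd.1 hd.2.1 hab
    have h5 := card_inn_ge (S := S) (a := a) (b := b) hd
    have h6 := card_out_ge (S := S) (a := a) (b := b) hd
    omega
  have herase : (insert (a, b) (T₁ ∪ T₂)).erase (a, b) = T₁ ∪ T₂ :=
    Finset.erase_insert hdu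
  have hip : inPart (a, b) (insert (a, b) (T₁ ∪ T₂)) = T₁ := by
    rw [inPart, herase]
    ext e
    rw [mem_filter, mem_union]
    constructor
    · rintro ⟨he1 | he2, hc⟩
      · exact he1
      · exfalso; have s2 := hsh2 _ he2; dsimp only at hc; omega
    · intro he
      have s := hsh1 _ he
      exact ⟨Or.inl he, by dsimp only; omega⟩
  have hop : outPart (a, b) (insert (a, b) (T₁ ∪ T₂)) = T₂ := by
    rw [outPart, herase]
    ext e
    rw [mem_filter, mem_union]
    constructor
    · rintro ⟨he1 | he2, hc⟩
      · exfalso; have s := hsh1 _ he1; dsimp only at hc; omega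
      · exact he2
    · intro he
      have s2 := hsh2 _ he
      exact ⟨Or.inr he, by dsimp only; omega⟩
  exact ⟨⟨hdiag, hnc, hcard⟩, hdu, hip, hop⟩

lemma split_card (S : Finset ℕ) (P : ℕ × ℕ → Prop) (Q : Finset (ℕ × ℕ) → Prop) (a b : ℕ)
    (hd : Diag S (a, b)) (hPd : P (a, b)) :
    (triFc S P (fun T => (a, b) ∈ T ∧ Q (outPart (a, b) T))).card
      = (triF (inn S a b) P).card * (triFc (out S a b) P Q).card := by
  rw [← Finset.card_product]
  apply Finset.card_bij' (fun T _ => (inPart (a, b) T, outPart (a, b) T))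
      (fun p _ => insert (a, b) (p.1 ∪ p.2))
  · -- forward maps into target
    intro T hT
    rw [mem_triFc] at hT
    obtain ⟨⟨hTri, hP⟩, hdT, hQ⟩ := hT
    have hparts := parts_tri hd hTri hdT
    rw [mem_product]
    constructor
    · rw [mem_triF]
      refine ⟨hparts.1, fun e he => ?_⟩
      rw [inPart, mem_filter, mem_erase] at he
      exact hP _ he.1.2
    · rw [mem_triFc]
      refine ⟨⟨hparts.2, fun e he => ?_⟩, hQ⟩
      rw [outPart, mem_filter, mem_erase] at he
      exact hP _ he.1.2
  · -- backward maps into source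
    intro p hp
    rw [mem_product] at hp
    obtain ⟨hp1, hp2⟩ := hp
    rw [mem_triF] at hp1
    rw [mem_triFc] at hp2
    obtain ⟨⟨hT2, hP2⟩, hQ2⟩ := hp2
    obtain ⟨hT1, hP1⟩ := hp1
    have hre := reassemble hd hT1 hT2
    rw [mem_triFc]
    refine ⟨⟨hre.1, ?_⟩, Finset.mem_insert_self _ _, ?_⟩
    · intro e he
      rw [mem_insert, mem_union] at he
      rcases he with rfl | he1 | he2
      · exact hPd
      · exact hP1 _ he1
      · exact hP2 _ he2
    · rw [hre.2.2.2]; exact hQ2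
  · -- left inverse
    intro T hT
    rw [mem_triFc] at hT
    obtain ⟨-, hdT, -⟩ := hT
    have : inPart (a, b) T ∪ outPart (a, b) T = T.erase (a, b) := by
      ext e; rw [mem_union, inPart, outPart, mem_filter, mem_filter]; tauto
    rw [this, Finset.insert_erase hdT]
  · -- right inverse
    intro p hp
    rw [mem_product] at hp
    obtain ⟨hp1, hp2⟩ := hp
    rw [mem_triF] at hp1
    rw [mem_triFc] at hp2
    have hre := reassemble hd hp1.1 hp2.1.1
    exact Prod.ext hre.2.2.1 hre.2.2.2

lemma split_card' (S : Finset ℕ) (P : ℕ × ℕ → Prop) (Q : Finset (ℕ × ℕ) → Prop) (a b : ℕ)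
    (hd : Diag S (a, b)) (hPd : P (a, b)) (R : Finset (ℕ × ℕ) → Prop)
    (hR : ∀ T, TriOn S T → (∀ e ∈ T, P e) →
      (R T ↔ ((a, b) ∈ T ∧ Q (outPart (a, b) T)))) :
    (triFc S P R).card
      = (triF (inn S a b) P).card * (triFc (out S a b) P Q).card := by
  rw [triFc_congr hR]
  exact split_card S P Q a b hd hPd

lemma relabel (S S' : Finset ℕ) (g g' : ℕ → ℕ) (P' : ℕ × ℕ → Prop)
    (h1 : ∀ x ∈ S, g x ∈ S') (h2 : ∀ y ∈ S', g' y ∈ S) (h3 : ∀ x ∈ S, g' (g x) = x)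
    (h4 : ∀ y ∈ S', g (g' y) = y) (h5 : ∀ x ∈ S, ∀ y ∈ S, (x < y ↔ g x < g y)) :
    (triF S (fun e => P' (g e.1, g e.2))).card = (triF S' P').card := by
  have h5' : ∀ x ∈ S', ∀ y ∈ S', (x < y ↔ g' x < g' y) := by
    intro x hx y hy
    rw [h5 _ (h2 _ hx) _ (h2 _ hy), h4 _ hx, h4 _ hy]
  have dtrans : ∀ e, Diag S e → Diag S' (g e.1, g e.2) := by
    rintro ⟨x, y⟩ ⟨hx, hy, hxy, ⟨c, hc, hc1, hc2⟩, ⟨c', hc', hcc⟩⟩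
    refine ⟨h1 _ hx, h1 _ hy, (h5 _ hx _ hy).mp hxy,
      ⟨g c, h1 _ hc, (h5 _ hx _ hc).mp hc1, (h5 _ hc _ hy).mp hc2⟩,
      ⟨g c', h1 _ hc', ?_⟩⟩
    rcases hcc with h | h
    · exact Or.inl ((h5 _ hc' _ hx).mp h)
    · exact Or.inr ((h5 _ hy _ hc').mp h)
  have dtrans' : ∀ e, Diag S' e → Diag S (g' e.1, g' e.2) := by
    rintro ⟨x, y⟩ ⟨hx, hy, hxy, ⟨c, hc, hc1, hc2⟩, ⟨c', hc', hcc⟩⟩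
    refine ⟨h2 _ hx, h2 _ hy, (h5' _ hx _ hy).mp hxy,
      ⟨g' c, h2 _ hc, (h5' _ hx _ hc).mp hc1, (h5' _ hc _ hy).mp hc2⟩,
      ⟨g' c', h2 _ hc', ?_⟩⟩
    rcases hcc with h | h
    · exact Or.inl ((h5' _ hc' _ hx).mp h)
    · exact Or.inr ((h5' _ hy _ hc').mp h)
  have ctrans : ∀ e f, Diag S e → Diag S f →
      (DiagonalsCross e f ↔ DiagonalsCross (g e.1, g e.2) (g f.1, g f.2)) := by
    rintro ⟨x, y⟩ ⟨u, v⟩ hde hdf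
    obtain ⟨hx, hy, -, -, -⟩ := hde
    obtain ⟨hu, hv, -, -, -⟩ := hdf
    simp only [DiagonalsCross]
    rw [← h5 _ hx _ hu, ← h5 _ hu _ hy, ← h5 _ hy _ hv, ← h5 _ hu _ hx, ← h5 _ hx _ hv,
      ← h5 _ hv _ hy]
  have hScard : S'.card = S.card := by
    have himg : S.image g = S' := by
      apply Finset.Subset.antisymm
      · intro y hy
        rw [Finset.mem_image] at hy
        obtain ⟨x, hx, rfl⟩ := hy
        exact h1 _ hx
      · intro y hy
        rw [Finset.mem_image]
        exact ⟨g' y, h2 _ hy, h4 _ hy⟩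
    rw [← himg, Finset.card_image_of_injOn]
    intro x hx y hy hxy
    rw [← h3 _ hx, ← h3 _ hy, hxy]
  have emap_injOn : ∀ (T : Finset (ℕ × ℕ)), (∀ e ∈ T, Diag S e) →
      ∀ e₁ ∈ T, ∀ e₂ ∈ T, (g e₁.1, g e₁.2) = (g e₂.1, g e₂.2) → e₁ = e₂ := by
    intro T hdiag e₁ he₁ e₂ he₂ heq
    have d1 := hdiag _ he₁
    have d2 := hdiag _ he₂
    rw [Prod.mk.injEq] at heq
    apply Prod.ext
    · rw [← h3 _ d1.1, ← h3 _ d2.1, heq.1]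
    · rw [← h3 _ d1.2.1, ← h3 _ d2.2.1, heq.2]
  rw [← Finset.card_image_of_injOn (f := fun T => T.image (fun e => (g e.1, g e.2)))
    (s := triF S fun e => P' (g e.1, g e.2)) ?inj]
  case inj =>
    intro T₁ hT₁ T₂ hT₂ himg
    rw [mem_coe, mem_triF] at hT₁ hT₂
    -- recover T from image via g'
    have hrec : ∀ (T : Finset (ℕ × ℕ)), (∀ e ∈ T, Diag S e) →
        (T.image (fun e => (g e.1, g e.2))).image (fun e => (g' e.1, g' e.2)) = T := by
      intro T hdiag
      rw [Finset.image_image]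
      have : ∀ e ∈ T, ((fun e => (g' e.1, g' e.2)) ∘ (fun e => (g e.1, g e.2))) e = id e := by
        intro e he
        have d := hdiag _ he
        simp only [Function.comp_apply, id_eq]
        rw [h3 _ d.1, h3 _ d.2.1]
      rw [Finset.image_congr this, Finset.image_id]
    dsimp only at himg
    rw [← hrec T₁ hT₁.1.1, himg, hrec T₂ hT₂.1.1]
  congr 1
  apply Finset.Subset.antisymm
  · intro T' hT'
    rw [Finset.mem_image] at hT'
    obtain ⟨T, hT, rfl⟩ := hT'
    rw [mem_triF] at hT ⊢
    obtain ⟨⟨hdg, hnc, hcd⟩, hP⟩ := hT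
    refine ⟨⟨?_, ?_, ?_⟩, ?_⟩
    · intro e he
      rw [Finset.mem_image] at he
      obtain ⟨f, hf, rfl⟩ := he
      exact dtrans _ (hdg _ hf)
    · intro e he f hf
      rw [Finset.mem_image] at he hf
      obtain ⟨e₀, he₀, rfl⟩ := he
      obtain ⟨f₀, hf₀, rfl⟩ := hf
      rw [← ctrans _ _ (hdg _ he₀) (hdg _ hf₀)]
      exact hnc _ he₀ _ hf₀
    · rw [Finset.card_image_of_injOn (emap_injOn T hdg), hcd, hScard]
    · intro e he
      rw [Finset.mem_image] at he
      obtain ⟨f, hf, rfl⟩ := he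
      exact hP _ hf
  · intro T' hT'
    rw [mem_triF] at hT'
    obtain ⟨⟨hdg, hnc, hcd⟩, hP⟩ := hT'
    rw [Finset.mem_image]
    refine ⟨T'.image (fun e => (g' e.1, g' e.2)), ?_, ?_⟩
    · rw [mem_triF]
      refine ⟨⟨?_, ?_, ?_⟩, ?_⟩
      · intro e he
        rw [Finset.mem_image] at he
        obtain ⟨f, hf, rfl⟩ := he
        exact dtrans' _ (hdg _ hf)
      · intro e he f hf
        rw [Finset.mem_image] at he hf
        obtain ⟨e₀, he₀, rfl⟩ := he
        obtain ⟨f₀, hf₀, rfl⟩ := hf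
        have d₀ := hdg _ he₀
        have d₁ := hdg _ hf₀
        rw [ctrans _ _ (dtrans' _ d₀) (dtrans' _ d₁)]
        simp only [h4 _ d₀.1, h4 _ d₀.2.1, h4 _ d₁.1, h4 _ d₁.2.1]
        exact hnc _ he₀ _ hf₀
      · rw [Finset.card_image_of_injOn, hcd, hScard]
        intro e₁ he₁ e₂ he₂ heq
        rw [mem_coe] at he₁ he₂
        have d1 := hdg _ he₁

        have d2 := hdg _ he₂
        rw [Prod.mk.injEq] at heq
        apply Prod.ext
        · rw [← h4 _ d1.1, ← h4 _ d2.1, heq.1]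
        · rw [← h4 _ d1.2.1, ← h4 _ d2.2.1, heq.2]
      · intro e he
        rw [Finset.mem_image] at he
        obtain ⟨f, hf, rfl⟩ := he
        have d := hdg _ hf
        simp only []
        rw [h4 _ d.1, h4 _ d.2.1]
        exact hP _ hf
    · -- image of preimage is T'
      rw [Finset.image_image]
      have : ∀ e ∈ T', ((fun e => (g e.1, g e.2)) ∘ (fun e => (g' e.1, g' e.2))) e = id e := by
        intro e he
        have d := hdg _ he
        simp only [Function.comp_apply, id_eq]
        rw [h4 _ d.1, h4 _ d.2.1]
      rw [Finset.image_congr this, Finset.image_id]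

lemma diag_range_iff {M x y : ℕ} (hM : 2 ≤ M) :
    Diag (range M) (x, y) ↔ x < y ∧ y < M ∧ x + 2 ≤ y ∧ ¬(x = 0 ∧ y = M - 1) := by
  constructor
  · rintro ⟨hx, hy, hxy, ⟨c, hc, hc1, hc2⟩, ⟨c', hc', hcc⟩⟩
    rw [mem_range] at hx hy hc hc'
    omega
  · rintro ⟨h1, h2, h3, h4⟩
    refine ⟨by rw [mem_range]; omega, by rw [mem_range]; omega, h1,
      ⟨x + 1, by rw [mem_range]; omega, by omega, by omega⟩, ?_⟩
    rcases Nat.eq_zero_or_pos x with rfl | hx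
    · exact ⟨M - 1, by rw [mem_range]; omega, by omega⟩
    · exact ⟨0, by rw [mem_range]; omega, by omega⟩

lemma diag_Icc_iff {a b x y : ℕ} :
    Diag (Icc a b) (x, y) ↔ a ≤ x ∧ x < y ∧ y ≤ b ∧ x + 2 ≤ y ∧ ¬(x = a ∧ y = b) := by
  constructor
  · rintro ⟨hx, hy, hxy, ⟨c, hc, hc1, hc2⟩, ⟨c', hc', hcc⟩⟩
    rw [mem_Icc] at hx hy hc hc'
    omega
  · rintro ⟨h1, h2, h3, h4, h5⟩
    refine ⟨by rw [mem_Icc]; omega, by rw [mem_Icc]; omega, h2,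
      ⟨x + 1, by rw [mem_Icc]; omega, by omega, by omega⟩, ?_⟩
    rcases eq_or_lt_of_le h1 with rfl | hx
    · exact ⟨b, by rw [mem_Icc]; omega, by omega⟩
    · exact ⟨a, by rw [mem_Icc]; omega, by omega⟩

lemma isTri_iff {m : ℕ} {T : Finset (ℕ × ℕ)} (hm : 3 ≤ m) :
    IsTriangulation m T ↔ TriOn (range m) T := by
  have hdiag : ∀ e : ℕ × ℕ, IsPolygonDiagonal m e ↔ Diag (range m) e := by
    rintro ⟨x, y⟩
    rw [diag_range_iff (by omega), IsPolygonDiagonal]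
  unfold IsTriangulation TriOn
  rw [Finset.card_range]
  constructor
  · rintro ⟨hA, hB, hC⟩
    exact ⟨fun e he => (hdiag e).mp (hA e he), hB, hC⟩
  · rintro ⟨hA, hB, hC⟩
    exact ⟨fun e he => (hdiag e).mpr (hA e he), hB, hC⟩

/-- number of triangulations of the convex `p`-gon -/
noncomputable def u (p : ℕ) : ℕ := (triF (range p) (fun _ => True)).card

lemma u_small {p : ℕ} (h : p ≤ 3) : u p = 1 := by
  rw [u, triF_small (by rw [card_range]; omega), card_singleton]

lemma triF_Icc_card (a b : ℕ) (P' : ℕ × ℕ → Prop) (hab : a ≤ b) :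
    (triF (Icc a b) (fun e => P' (e.1 - a, e.2 - a))).card
      = (triF (range (b + 1 - a)) P').card := by
  apply relabel (Icc a b) (range (b + 1 - a)) (fun x => x - a) (fun y => y + a) P'
  · intro x hx; rw [mem_Icc] at hx; rw [mem_range]; omega
  · intro y hy; rw [mem_range] at hy; rw [mem_Icc]; omega
  · intro x hx; rw [mem_Icc] at hx; omega
  · intro y hy; rw [mem_range] at hy; omega
  · intro x hx y hy; rw [mem_Icc] at hx hy; omega

lemma triF_Icc_card_top (a b : ℕ) (hab : a ≤ b) :
    (triF (Icc a b) (fun _ => True)).card = u (b + 1 - a) := by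
  rw [u, ← triF_Icc_card a b (fun _ => True) hab]

end PolyTri

namespace PolyTri

noncomputable def X0 (M : ℕ) (T : Finset (ℕ × ℕ)) : Finset ℕ :=
  (range M).filter (fun w => 0 < w ∧ ((0, w) ∈ T ∨ w = 1))

noncomputable def tv (M : ℕ) (T : Finset (ℕ × ℕ)) : ℕ := (X0 M T).sup id

lemma tv_spec {M : ℕ} {T : Finset (ℕ × ℕ)} (hM : 4 ≤ M) (hT : TriOn (range M) T) :
    1 ≤ tv M T ∧ tv M T ≤ M - 2 ∧ ((0, tv M T) ∈ T ∨ tv M T = 1) ∧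
      ((tv M T, M - 1) ∈ T ∨ tv M T = M - 2) := by
  have h1X : 1 ∈ X0 M T := by
    rw [X0, mem_filter, mem_range]; exact ⟨by omega, by omega, Or.inr rfl⟩
  obtain ⟨v, hvX, hsup⟩ := Finset.exists_mem_eq_sup (X0 M T) ⟨1, h1X⟩ id
  have htv : tv M T = v := hsup
  rw [X0, mem_filter, mem_range] at hvX
  obtain ⟨hvM, hv0, hv⟩ := hvX
  have hvle : ∀ w ∈ X0 M T, w ≤ v := by
    intro w hw
    have := Finset.le_sup (f := id) hw
    rw [hsup] at this; exact this
  have hvM2 : v ≤ M - 2 := by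
    by_contra hcon
    have hveq : v = M - 1 := by omega
    rcases hv with hv | hv
    · have := hT.1 _ hv
      rw [diag_range_iff (by omega)] at this
      omega
    · omega
  have hmain : (v, M - 1) ∈ T ∨ v = M - 2 := by
    by_contra hcon
    push_neg at hcon
    obtain ⟨hnotmem, hne⟩ := hcon
    have hdvm : Diag (range M) (v, M - 1) := by
      rw [diag_range_iff (by omega)]; omega
    obtain ⟨e, heT, hcr⟩ := tri_maximal hT hdvm hnotmem
    have heD := hT.1 _ heT
    have hxy : e.1 < e.2 := heD.2.2.1
    have hy : e.2 < M := by
      have := heD.2.1; rw [mem_range] at this; exact this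
    have hcr' : e.1 < v ∧ v < e.2 ∧ e.2 < M - 1 := by
      rcases hcr with hcr | hcr <;> simp only [DiagonalsCross] at hcr <;> omega
    rcases hv with hv | hv
    · rcases Nat.eq_zero_or_pos e.1 with hx0 | hx0
      · have heX : e.2 ∈ X0 M T := by
          rw [X0, mem_filter, mem_range]
          refine ⟨by omega, by omega, Or.inl ?_⟩
          rw [show ((0 : ℕ), e.2) = e from by rw [← hx0]] at *
          exact heT
        have := hvle _ heX; omega
      · have hcross : DiagonalsCross (0, v) e := by
          simp only [DiagonalsCross]; omega
        exact hT.2.1 _ hv _ heT hcross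
    · -- v = 1
      have hx0 : e.1 = 0 := by omega
      have heX : e.2 ∈ X0 M T := by
        rw [X0, mem_filter, mem_range]
        refine ⟨by omega, by omega, Or.inl ?_⟩
        rw [show ((0 : ℕ), e.2) = e from by rw [← hx0]] at *
        exact heT
      have := hvle _ heX; omega
  rw [htv]
  exact ⟨by omega, hvM2, hv, hmain⟩

lemma tv_eq_iff {M : ℕ} {T : Finset (ℕ × ℕ)} (hM : 4 ≤ M) (hT : TriOn (range M) T)
    (v : ℕ) : tv M T = v ↔
      (1 ≤ v ∧ v ≤ M - 2 ∧ ((0, v) ∈ T ∨ v = 1) ∧ ((v, M - 1) ∈ T ∨ v = M - 2)) := by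
  obtain ⟨s1, s2, s3, s4⟩ := tv_spec hM hT
  constructor
  · rintro rfl; exact ⟨s1, s2, s3, s4⟩
  · rintro ⟨c1, c2, c3, c4⟩
    apply le_antisymm
    · -- tv ≤ v
      by_contra hcon
      push_neg at hcon
      have hw1 : (0, tv M T) ∈ T := by
        rcases s3 with h | h
        · exact h
        · omega
      rcases c4 with c4 | c4
      · have hcross : DiagonalsCross (0, tv M T) (v, M - 1) := by
          simp only [DiagonalsCross]; omega
        exact hT.2.1 _ hw1 _ c4 hcross
      · omega
    · -- v ≤ tv
      have hvX : v ∈ X0 M T := by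
        rw [X0, mem_filter, mem_range]
        exact ⟨by omega, by omega, c3⟩
      have := Finset.le_sup (f := id) hvX
      exact this

lemma inn_range_eq {M a b : ℕ} (hb : b < M) : inn (range M) a b = Icc a b := by
  ext x; simp only [inn, mem_filter, mem_range, mem_Icc]; omega

lemma card_triple_le (a b c : ℕ) : ({a, b, c} : Finset ℕ).card ≤ 3 := by
  apply le_trans (Finset.card_insert_le _ _)
  have : ({b, c} : Finset ℕ).card ≤ 2 := by
    apply le_trans (Finset.card_insert_le _ _)
    simp
  omega

lemma fiber_card {M v : ℕ} (hM : 4 ≤ M) (hv1 : 1 ≤ v) (hv2 : v ≤ M - 2) :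
    (triFc (range M) (fun _ => True) (fun T => tv M T = v)).card
      = u (v + 1) * u (M - v) := by
  rcases eq_or_lt_of_le hv1 with hveq | hvgt
  · -- v = 1
    have hvne : v ≠ M - 2 := by omega
    rw [split_card' (range M) (fun _ => True) (fun _ => True) v (M - 1)
      (by rw [diag_range_iff (by omega)]; omega) trivial _ (fun T hTri hP => by
        rw [tv_eq_iff hM hTri v]
        constructor
        · rintro ⟨-, -, -, h4 | h4⟩
          · exact ⟨h4, trivial⟩
          · omega
        · rintro ⟨h4, -⟩; exact ⟨hv1, hv2, Or.inr hveq.symm, Or.inl h4⟩)]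
    rw [inn_range_eq (by omega), triF_Icc_card_top v (M - 1) (by omega)]
    have hout : out (range M) v (M - 1) = {0, v, M - 1} := by
      ext x
      simp only [out, mem_filter, mem_range, mem_insert, mem_singleton]
      omega
    rw [triFc_true, hout, triF_small (le_trans (card_triple_le 0 v (M - 1)) (by omega)),
      card_singleton]
    rw [show M - 1 + 1 - v = M - v from by omega, u_small (p := v + 1) (by omega)]
    ring
  · rcases eq_or_lt_of_le hv2 with hveq | hvlt
    · -- v = M - 2 (and v ≥ 2)
      rw [split_card' (range M) (fun _ => True) (fun _ => True) 0 v
        (by rw [diag_range_iff (by omega)]; omega) trivial _ (fun T hTri hP => by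
          rw [tv_eq_iff hM hTri v]
          constructor
          · rintro ⟨-, -, h3 | h3, -⟩
            · exact ⟨h3, trivial⟩
            · omega
          · rintro ⟨h3, -⟩; exact ⟨hv1, hv2, Or.inl h3, Or.inr hveq⟩)]
      rw [inn_range_eq (by omega), triF_Icc_card_top 0 v (by omega)]
      have hout : out (range M) 0 v = {0, v, M - 1} := by
        ext x
        simp only [out, mem_filter, mem_range, mem_insert, mem_singleton]
        omega
      rw [triFc_true, hout, triF_small (le_trans (card_triple_le 0 v (M - 1)) (by omega)),
        card_singleton]
      rw [show v + 1 - 0 = v + 1 from by omega, show M - v = 2 from by omega,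
        u_small (p := 2) (by omega)]
    · -- 2 ≤ v ≤ M - 3
      have hQiff : ∀ T : Finset (ℕ × ℕ),
          ((v, M - 1) ∈ outPart (0, v) T ↔ (v, M - 1) ∈ T) := by
        intro T
        rw [outPart, mem_filter, mem_erase]
        constructor
        · rintro ⟨⟨-, h⟩, -⟩; exact h
        · intro h
          refine ⟨⟨?_, h⟩, by dsimp only; omega⟩
          rw [Ne, Prod.ext_iff]; dsimp only; omega
      rw [split_card' (range M) (fun _ => True) (fun T₂ => (v, M - 1) ∈ T₂) 0 v
        (by rw [diag_range_iff (by omega)]; omega) trivial _ (fun T hTri hP => by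
          try dsimp only
          rw [hQiff T, tv_eq_iff hM hTri v]
          constructor
          · rintro ⟨-, -, h3 | h3, h4 | h4⟩
            · exact ⟨h3, h4⟩
            · omega
            · omega
            · omega
          · rintro ⟨h3, h4⟩; exact ⟨hv1, hv2, Or.inl h3, Or.inl h4⟩)]
      rw [inn_range_eq (by omega), triF_Icc_card_top 0 v (by omega)]
      -- second factor
      have hS2 : out (range M) 0 v = insert 0 (Icc v (M - 1)) := by
        ext x
        simp only [out, mem_filter, mem_range, mem_insert, mem_Icc]
        omega
      rw [hS2]
      have hd2 : Diag (insert 0 (Icc v (M - 1))) (v, M - 1) := by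
        refine ⟨by simp [mem_Icc]; omega, by simp [mem_Icc]; omega, by omega,
          ⟨v + 1, by simp [mem_Icc]; omega, by omega, by omega⟩,
          ⟨0, by simp, by omega⟩⟩
      rw [split_card' (insert 0 (Icc v (M - 1))) (fun _ => True) (fun _ => True)
        v (M - 1) hd2 trivial (fun T₂ => (v, M - 1) ∈ T₂)
        (fun T _ _ => ⟨fun h => ⟨h, trivial⟩, fun h => h.1⟩)]
      have hinn2 : inn (insert 0 (Icc v (M - 1))) v (M - 1) = Icc v (M - 1) := by
        ext x
        simp only [inn, mem_filter, mem_insert, mem_Icc]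
        omega
      have hout2 : out (insert 0 (Icc v (M - 1))) v (M - 1) = {0, v, M - 1} := by
        ext x
        simp only [out, mem_filter, mem_insert, mem_Icc, mem_singleton]
        omega
      rw [triFc_true, hinn2, hout2, triF_Icc_card_top v (M - 1) (by omega),
        triF_small (le_trans (card_triple_le 0 v (M - 1)) (by omega)), card_singleton]
      rw [show M - 1 + 1 - v = M - v from by omega, show v + 1 - 0 = v + 1 from by omega]
      ring

lemma u_rec {M : ℕ} (hM : 4 ≤ M) :
    u M = ∑ i ∈ range (M - 2), u (i + 2) * u (M - 1 - i) := by
  rw [u, Finset.card_eq_sum_card_fiberwise (f := fun T => tv M T - 1) (t := range (M - 2))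
    (fun T hT => by
      rw [Finset.mem_coe, mem_triF] at hT
      have := tv_spec hM hT.1
      rw [Finset.mem_coe, mem_range]; dsimp only; omega)]
  apply Finset.sum_congr rfl
  intro i hi
  rw [mem_range] at hi
  have hcong : (triF (range M) (fun _ => True)).filter (fun T => (fun T => tv M T - 1) T = i)
      = triFc (range M) (fun _ => True) (fun T => tv M T = i + 1) := by
    ext T
    rw [mem_filter, mem_triF, mem_triFc]
    constructor
    · rintro ⟨⟨hTri, hP⟩, hfib⟩
      have := tv_spec hM hTri
      exact ⟨⟨hTri, hP⟩, by dsimp only at hfib; omega⟩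
    · rintro ⟨⟨hTri, hP⟩, hfib⟩
      have := tv_spec hM hTri
      exact ⟨⟨hTri, hP⟩, by dsimp only; omega⟩
  rw [hcong, fiber_card hM (by omega) (by omega)]
  rw [show M - (i + 1) = M - 1 - i from by omega]

lemma u_catalan : ∀ p : ℕ, u (p + 2) = catalan p := by
  intro p
  induction p using Nat.strong_induction_on with
  | _ p IH =>
    rcases le_or_gt p 1 with hp | hp
    · interval_cases p
      · rw [u_small (by omega)]; simp
      · rw [u_small (by omega)]; simp
    · have hM : 4 ≤ p + 2 := by omega
      rw [u_rec hM]
      have h := catalan_succ' (p - 1)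
      rw [Finset.Nat.sum_antidiagonal_eq_sum_range_succ_mk] at h
      dsimp only at h
      rw [show (p - 1).succ = p from by omega, show p - 1 + 1 = p from by omega] at h
      rw [show p + 2 - 2 = p from rfl, h]
      apply Finset.sum_congr rfl
      intro i hi
      rw [mem_range] at hi
      rw [IH i (by omega), show p + 2 - 1 - i = (p - 1 - i) + 2 from by omega,
        IH (p - 1 - i) (by omega)]

end PolyTri

namespace PolyTri

noncomputable def reflmap (M : ℕ) (e : ℕ × ℕ) : ℕ × ℕ :=
  if e.1 = 0 then (0, M - e.2) else (M - e.2, M - e.1)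

lemma reflmap_zero {M y : ℕ} : reflmap M (0, y) = (0, M - y) := by simp [reflmap]

lemma reflmap_pos {M x y : ℕ} (hx : x ≠ 0) : reflmap M (x, y) = (M - y, M - x) := by
  simp [reflmap, hx]

lemma rdiag {M : ℕ} (hM : 3 ≤ M) {e : ℕ × ℕ} (hD : Diag (range M) e) :
    Diag (range M) (reflmap M e) := by
  obtain ⟨x, y⟩ := e
  rw [diag_range_iff (by omega)] at hD
  by_cases hx : x = 0
  · subst hx
    rw [reflmap_zero, diag_range_iff (by omega)]
    omega
  · rw [reflmap_pos hx, diag_range_iff (by omega)]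
    omega

lemma rinv {M : ℕ} (hM : 3 ≤ M) {e : ℕ × ℕ} (hD : Diag (range M) e) :
    reflmap M (reflmap M e) = e := by
  obtain ⟨x, y⟩ := e
  rw [diag_range_iff (by omega)] at hD
  by_cases hx : x = 0
  · subst hx
    rw [reflmap_zero, reflmap_zero]
    have : M - (M - y) = y := by omega
    rw [this]
  · rw [reflmap_pos hx, reflmap_pos (by omega : M - y ≠ 0)]
    have h1 : M - (M - x) = x := by omega
    have h2 : M - (M - y) = y := by omega
    rw [h1, h2]

lemma rcross {M : ℕ} (hM : 3 ≤ M) {e f : ℕ × ℕ} (hD1 : Diag (range M) e)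
    (hD2 : Diag (range M) f) (hc : DiagonalsCross e f) :
    DiagonalsCross (reflmap M e) (reflmap M f) := by
  obtain ⟨x, y⟩ := e
  obtain ⟨u, v⟩ := f
  rw [diag_range_iff (by omega)] at hD1 hD2
  simp only [DiagonalsCross] at hc
  by_cases hx : x = 0 <;> by_cases hu : u = 0
  · subst hx; subst hu
    rw [reflmap_zero, reflmap_zero]
    simp only [DiagonalsCross]
    omega
  · subst hx
    rw [reflmap_zero, reflmap_pos hu]
    simp only [DiagonalsCross]
    omega
  · subst hu
    rw [reflmap_pos hx, reflmap_zero]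
    simp only [DiagonalsCross]
    omega
  · rw [reflmap_pos hx, reflmap_pos hu]
    simp only [DiagonalsCross]
    omega

lemma refl_card {M : ℕ} (hM : 3 ≤ M) (P P' : ℕ × ℕ → Prop)
    (hPP' : ∀ e, Diag (range M) e → (P e ↔ P' (reflmap M e))) :
    (triF (range M) P).card = (triF (range M) P').card := by
  have hPP'' : ∀ e, Diag (range M) e → (P' e ↔ P (reflmap M e)) := by
    intro e hD
    have h2 := hPP' (reflmap M e) (rdiag hM hD)
    rw [rinv hM hD] at h2
    exact h2.symm
  have key : ∀ (Q Q' : ℕ × ℕ → Prop), (∀ e, Diag (range M) e → (Q e ↔ Q' (reflmap M e))) →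
      ∀ T ∈ triF (range M) Q, T.image (reflmap M) ∈ triF (range M) Q' := by
    intro Q Q' hQQ T hT
    rw [mem_triF] at hT ⊢
    obtain ⟨⟨hdg, hnc, hcd⟩, hP⟩ := hT
    refine ⟨⟨?_, ?_, ?_⟩, ?_⟩
    · intro e he
      rw [Finset.mem_image] at he
      obtain ⟨f, hf, rfl⟩ := he
      exact rdiag hM (hdg _ hf)
    · intro e he f hf hcr
      rw [Finset.mem_image] at he hf
      obtain ⟨e₀, he₀, rfl⟩ := he
      obtain ⟨f₀, hf₀, rfl⟩ := hf
      have := rcross hM (rdiag hM (hdg _ he₀)) (rdiag hM (hdg _ hf₀)) hcr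
      rw [rinv hM (hdg _ he₀), rinv hM (hdg _ hf₀)] at this
      exact hnc _ he₀ _ hf₀ this
    · rw [Finset.card_image_of_injOn, hcd]
      intro e₁ he₁ e₂ he₂ heq
      rw [mem_coe] at he₁ he₂
      rw [← rinv hM (hdg _ he₁), heq, rinv hM (hdg _ he₂)]
    · intro e he
      rw [Finset.mem_image] at he
      obtain ⟨f, hf, rfl⟩ := he
      exact (hQQ _ (hdg _ hf)).mp (hP _ hf)
  have invol : ∀ (Q : ℕ × ℕ → Prop), ∀ T ∈ triF (range M) Q,
      (T.image (reflmap M)).image (reflmap M) = T := by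
    intro Q T hT
    rw [mem_triF] at hT
    rw [Finset.image_image]
    have : ∀ e ∈ T, (reflmap M ∘ reflmap M) e = id e := by
      intro e he
      simp only [Function.comp_apply, id_eq]
      exact rinv hM (hT.1.1 _ he)
    rw [Finset.image_congr this, Finset.image_id]
  exact Finset.card_bij' (fun T _ => T.image (reflmap M)) (fun T _ => T.image (reflmap M))
    (key P P' hPP') (key P' P hPP'') (invol P) (invol P')

noncomputable def Acnt (k : ℕ) : ℕ :=
  (triF (range (2*k+1)) (fun e => e.1 + e.2 ≠ 2*k+2)).card

noncomputable def Acnt' (k : ℕ) : ℕ :=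
  (triF (range (2*k+1)) (fun e => e.1 + e.2 ≠ 2*k)).card

lemma Acnt'_eq (k : ℕ) (hk : 1 ≤ k) : Acnt' k = Acnt k := by
  apply refl_card (by omega)
  rintro ⟨x, y⟩ hD
  rw [diag_range_iff (by omega)] at hD
  by_cases hx : x = 0
  · subst hx
    rw [reflmap_zero]
    dsimp only
    omega
  · rw [reflmap_pos hx]
    dsimp only
    omega

lemma Acnt_one : Acnt 1 = 1 := by
  rw [Acnt, triF_small (by rw [card_range]), card_singleton]

/-- the classifying value: the largest `j ∈ [2, n]` with the forbidden diagonal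
`(j, 2n+2-j)` present, or `0` if none. -/
noncomputable def phi (n : ℕ) (T : Finset (ℕ × ℕ)) : ℕ :=
  ((Icc 2 n).filter (fun j => (j, 2*n+2-j) ∈ T)).sup id

lemma phi_cases (n : ℕ) (T : Finset (ℕ × ℕ)) :
    phi n T = 0 ∨ (phi n T ∈ Icc 2 n ∧ (phi n T, 2*n+2-phi n T) ∈ T) := by
  rcases Finset.eq_empty_or_nonempty ((Icc 2 n).filter (fun j => (j, 2*n+2-j) ∈ T)) with
    he | hne
  · left; rw [phi, he, Finset.sup_empty]; rfl
  · right
    obtain ⟨v, hv, hsup⟩ := Finset.exists_mem_eq_sup _ hne id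
    rw [phi, hsup]
    rw [mem_filter] at hv
    exact ⟨hv.1, hv.2⟩

lemma le_phi {n j : ℕ} {T : Finset (ℕ × ℕ)} (h2 : 2 ≤ j) (hj : j ≤ n)
    (hd : (j, 2*n+2-j) ∈ T) : j ≤ phi n T := by
  have h : j ∈ (Icc 2 n).filter (fun j => (j, 2*n+2-j) ∈ T) := by
    rw [mem_filter, mem_Icc]; exact ⟨⟨h2, hj⟩, hd⟩
  exact Finset.le_sup (f := id) h

lemma phi_eq_j_iff {n j : ℕ} (h2 : 2 ≤ j) (hj : j ≤ n) (T : Finset (ℕ × ℕ)) :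
    phi n T = j ↔
      ((j, 2*n+2-j) ∈ T ∧ ∀ j', j < j' → j' ≤ n → (j', 2*n+2-j') ∉ T) := by
  constructor
  · intro h
    rcases phi_cases n T with h0 | ⟨hmem, hdT⟩
    · omega
    · rw [h] at hdT
      refine ⟨hdT, fun j' h1 h2' hmem' => ?_⟩
      have : j' ≤ phi n T := le_phi (by omega) h2' hmem'
      omega
  · rintro ⟨hdT, hnone⟩
    apply le_antisymm
    · apply Finset.sup_le
      intro j' hj'
      rw [mem_filter, mem_Icc] at hj'
      show j' ≤ j
      by_contra hcon
      exact hnone j' (by omega) (by omega) hj'.2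
    · exact le_phi h2 hj hdT

lemma sum_edge_eq {n : ℕ} {T : Finset (ℕ × ℕ)} (hT : TriOn (range (2*n+1)) T)
    {e : ℕ × ℕ} (he : e ∈ T) (hsum : e.1 + e.2 = 2*n+2) :
    2 ≤ e.1 ∧ e.1 ≤ n ∧ e = (e.1, 2*n+2-e.1) := by
  have hD := hT.1 _ he
  obtain ⟨h1, h2, h3, -, -⟩ := hD
  rw [mem_range] at h1 h2
  exact ⟨by omega, by omega, Prod.ext rfl (by dsimp only; omega)⟩

lemma fiber0 (n : ℕ) (hn : 2 ≤ n) :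
    (triF (range (2*n+1)) (fun _ => True)).filter (fun T => phi n T = 0)
      = triF (range (2*n+1)) (fun e => e.1 + e.2 ≠ 2*n+2) := by
  ext T
  rw [mem_filter, mem_triF, mem_triF]
  constructor
  · rintro ⟨⟨hTri, -⟩, hphi⟩
    refine ⟨hTri, fun e he hsum => ?_⟩
    obtain ⟨ha, hb, hc⟩ := sum_edge_eq hTri he hsum
    have : e.1 ≤ phi n T := le_phi ha hb (by rw [← hc]; exact he)
    omega
  · rintro ⟨hTri, hP⟩
    refine ⟨⟨hTri, fun _ _ => trivial⟩, ?_⟩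
    rcases phi_cases n T with h0 | ⟨hmem, hdT⟩
    · exact h0
    · exfalso
      rw [mem_Icc] at hmem
      exact hP _ hdT (by dsimp only; omega)

lemma collapse_card {n j : ℕ} (h2 : 2 ≤ j) (hj : j ≤ n) :
    (triF (out (range (2*n+1)) j (2*n+2-j)) (fun _ => True)).card = u (2*j) := by
  rw [u]
  apply relabel _ _ (fun x => if x ≤ j then x else x - (2*n+1-2*j))
    (fun y => if y ≤ j then y else y + (2*n+1-2*j)) (fun _ => True)
  · intro x hx
    simp only [out, mem_filter, mem_range] at hx
    rw [mem_range]
    split_ifs <;> omega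
  · intro y hy
    rw [mem_range] at hy
    simp only [out, mem_filter, mem_range]
    split_ifs <;> omega
  · intro x hx
    simp only [out, mem_filter, mem_range] at hx
    split_ifs <;> omega
  · intro y hy
    rw [mem_range] at hy
    split_ifs <;> omega
  · intro x hx y hy
    simp only [out, mem_filter, mem_range] at hx hy
    split_ifs <;> omega

lemma fiberj {n j : ℕ} (hn : 2 ≤ n) (h2 : 2 ≤ j) (hj : j ≤ n) :
    ((triF (range (2*n+1)) (fun _ => True)).filter (fun T => phi n T = j)).card
      = catalan (2*j-2) * Acnt' (n-j+1) := by
  have h1 : (triF (range (2*n+1)) (fun _ => True)).filter (fun T => phi n T = j)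
      = triFc (range (2*n+1)) (fun e => e.1 + e.2 = 2*n+2 → e.1 ≤ j)
          (fun T => (j, 2*n+2-j) ∈ T) := by
    ext T
    rw [mem_filter, mem_triF, mem_triFc]
    constructor
    · rintro ⟨⟨hTri, -⟩, hphi⟩
      rw [phi_eq_j_iff h2 hj] at hphi
      obtain ⟨hdT, hnone⟩ := hphi
      refine ⟨⟨hTri, fun e he hsum => ?_⟩, hdT⟩
      obtain ⟨ha, hb, hc⟩ := sum_edge_eq hTri he hsum
      by_contra hcon
      exact hnone e.1 (by omega) hb (by rw [← hc]; exact he)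
    · rintro ⟨⟨hTri, hP⟩, hdT⟩
      refine ⟨⟨hTri, fun _ _ => trivial⟩, ?_⟩
      rw [phi_eq_j_iff h2 hj]
      refine ⟨hdT, fun j' hlt hle hmem => ?_⟩
      have := hP _ hmem (by dsimp only; omega)
      dsimp only at this
      omega
  rw [h1]
  have hdj : Diag (range (2*n+1)) (j, 2*n+2-j) := by
    rw [diag_range_iff (by omega)]; omega
  rw [split_card' (range (2*n+1)) (fun e => e.1 + e.2 = 2*n+2 → e.1 ≤ j) (fun _ => True)
    j (2*n+2-j) hdj (fun _ => le_refl j) (fun T => (j, 2*n+2-j) ∈ T)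
    (fun T _ _ => ⟨fun h => ⟨h, trivial⟩, fun h => h.1⟩)]
  have houter : (triFc (out (range (2*n+1)) j (2*n+2-j))
      (fun e => e.1 + e.2 = 2*n+2 → e.1 ≤ j) (fun _ => True)).card = catalan (2*j-2) := by
    rw [triFc_true]
    have hcg : triF (out (range (2*n+1)) j (2*n+2-j))
          (fun e => e.1 + e.2 = 2*n+2 → e.1 ≤ j)
        = triF (out (range (2*n+1)) j (2*n+2-j)) (fun _ => True) := by
      apply triF_congr
      intro e hD
      have hs := out_edge_shape (by omega : j < 2*n+2-j) hD
      constructor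
      · intro _; trivial
      · intro _ hsum
        omega
    have hc : u (2*j) = catalan (2*j-2) := by
      have h := u_catalan (2*j-2)
      rw [show 2*j-2+2 = 2*j from by omega] at h
      exact h
    rw [hcg, collapse_card h2 hj, hc]
  have hinner : (triF (inn (range (2*n+1)) j (2*n+2-j))
      (fun e => e.1 + e.2 = 2*n+2 → e.1 ≤ j)).card = Acnt' (n-j+1) := by
    rw [inn_range_eq (by omega)]
    have hcg : triF (Icc j (2*n+2-j)) (fun e => e.1 + e.2 = 2*n+2 → e.1 ≤ j)
        = triF (Icc j (2*n+2-j))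
            (fun e => (fun z : ℕ × ℕ => z.1 + z.2 ≠ 2*(n-j+1)) (e.1 - j, e.2 - j)) := by
      apply triF_congr
      rintro ⟨x, y⟩ hD
      rw [diag_Icc_iff] at hD
      dsimp only
      omega
    rw [hcg, triF_Icc_card j (2*n+2-j) (fun z : ℕ × ℕ => z.1 + z.2 ≠ 2*(n-j+1)) (by omega)]
    rw [Acnt', show 2*n+2-j+1-j = 2*(n-j+1)+1 from by omega]
  rw [houter, hinner]
  ring

lemma main_rec (n : ℕ) (hn : 2 ≤ n) :
    catalan (2*n-1) = Acnt n + ∑ i ∈ range (n-1), catalan (2*i+2) * Acnt (n-1-i) := by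
  have hu : u (2*n+1) = catalan (2*n-1) := by
    rw [show 2*n+1 = (2*n-1)+2 from by omega, u_catalan]
  rw [← hu, u]
  rw [Finset.card_eq_sum_card_fiberwise (f := phi n) (t := insert 0 (Icc 2 n))
    (fun T hT => by
      rcases phi_cases n T with h0 | ⟨hmem, -⟩
      · rw [h0]; exact mem_insert_self _ _
      · exact mem_insert_of_mem hmem)]
  rw [Finset.sum_insert (by simp)]
  congr 1
  · rw [fiber0 n hn, Acnt]
  · rw [show n - 1 = (Icc 2 n).card from by rw [Nat.card_Icc]; omega]
    rw [Finset.sum_bij' (i := fun j _ => j - 2) (j := fun i _ => i + 2)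
      (s := Icc 2 n) (t := range (Icc 2 n).card)]
    · intro j hj
      rw [mem_Icc] at hj
      rw [mem_range, Nat.card_Icc]
      omega
    · intro i hi
      rw [mem_range, Nat.card_Icc] at hi
      rw [mem_Icc]
      omega
    · intro j hj
      rw [mem_Icc] at hj
      omega
    · intro i hi
      omega
    · intro j hj
      rw [mem_Icc] at hj
      rw [Nat.card_Icc, show 2*(j-2)+2 = 2*j-2 from by omega,
        show n+1-2-(j-2) = n-j+1 from by omega, fiberj hn (by omega) (by omega),
        Acnt'_eq _ (by omega)]

end PolyTri


open Finset PowerSeries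

private lemma sum_range_double {M : Type*} [AddCommMonoid M] (f : ℕ → M) (k : ℕ) :
    ∑ i ∈ Finset.range (2*k), f i = ∑ a ∈ Finset.range k, (f (2*a) + f (2*a+1)) := by
  induction k with
  | zero => simp
  | succ k ih =>
    have h : 2*(k+1) = (2*k)+1+1 := by ring
    rw [h, Finset.sum_range_succ, Finset.sum_range_succ, ih, Finset.sum_range_succ]
    abel

private lemma cat_rel1 (k : ℕ) :
    catalan (2*k+2) = 2 * ∑ i ∈ range (k+1), catalan (2*i) * catalan (2*(k-i)+1) := by
  have h := catalan_succ' (2*k+1)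
  rw [Finset.Nat.sum_antidiagonal_eq_sum_range_succ_mk] at h
  dsimp only at h
  have h2 : (2*k+1).succ = 2*(k+1) := by omega
  rw [h2] at h
  rw [sum_range_double (fun i => catalan i * catalan (2*k+1-i)) (k+1)] at h
  have e1 : ∀ a ∈ range (k+1), catalan (2*a) * catalan (2*k+1-2*a) + catalan (2*a+1) * catalan (2*k+1-(2*a+1))
      = catalan (2*a) * catalan (2*(k-a)+1) + catalan (2*a+1) * catalan (2*(k-a)) := by
    intro a ha; simp only [mem_range] at ha
    rw [show 2*k+1-2*a = 2*(k-a)+1 from by omega, show 2*k+1-(2*a+1) = 2*(k-a) from by omega]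
  rw [Finset.sum_congr rfl e1, Finset.sum_add_distrib] at h
  have e2 : ∑ a ∈ range (k+1), catalan (2*a+1) * catalan (2*(k-a))
      = ∑ a ∈ range (k+1), catalan (2*a) * catalan (2*(k-a)+1) := by
    rw [← Finset.sum_range_reflect]
    apply Finset.sum_congr rfl
    intro a ha; simp only [mem_range] at ha
    rw [mul_comm]
    rw [show 2*(k+1-1-a)+1 = 2*(k-a)+1 from by omega, show 2*(k-(k+1-1-a)) = 2*a from by omega]
  rw [e2] at h
  rw [show 2*k+2 = 2*k+1+1 from by ring, h, two_mul]

private lemma cat_rel2 (k : ℕ) :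
    catalan (2*k+1) = (∑ i ∈ range (k+1), catalan (2*i) * catalan (2*(k-i)))
      + ∑ i ∈ range k, catalan (2*i+1) * catalan (2*(k-1-i)+1) := by
  have h := catalan_succ' (2*k)
  rw [Finset.Nat.sum_antidiagonal_eq_sum_range_succ_mk] at h
  dsimp only at h
  rw [show (2*k).succ = 2*k+1 from rfl, Finset.sum_range_succ] at h
  rw [sum_range_double (fun i => catalan i * catalan (2*k-i)) k] at h
  have e1 : ∀ a ∈ range k, catalan (2*a) * catalan (2*k-2*a) + catalan (2*a+1) * catalan (2*k-(2*a+1))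
      = catalan (2*a) * catalan (2*(k-a)) + catalan (2*a+1) * catalan (2*(k-1-a)+1) := by
    intro a ha; simp only [mem_range] at ha
    rw [show 2*k-2*a = 2*(k-a) from by omega, show 2*k-(2*a+1) = 2*(k-1-a)+1 from by omega]
  rw [Finset.sum_congr rfl e1, Finset.sum_add_distrib] at h
  rw [show 2*k+1 = 2*k+1 from rfl, h, Finset.sum_range_succ]
  rw [show 2*k-2*k = 2*(k-k) from by omega]
  ring

noncomputable def Fc : PowerSeries ℤ := PowerSeries.mk fun k => (catalan (2*k) : ℤ)
noncomputable def Oc : PowerSeries ℤ := PowerSeries.mk fun k => (catalan (2*k+1) : ℤ)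
noncomputable def Dc : PowerSeries ℤ := PowerSeries.mk fun k => ((4:ℤ)^k * catalan k)

private lemma ps4 : (4 : PowerSeries ℤ) = (PowerSeries.C (R := ℤ)) 4 := (map_ofNat (PowerSeries.C (R := ℤ)) 4).symm
private lemma ps2 : (2 : PowerSeries ℤ) = (PowerSeries.C (R := ℤ)) 2 := (map_ofNat (PowerSeries.C (R := ℤ)) 2).symm

private lemma coeff_prod_mk (f g : ℕ → ℤ) (n : ℕ) :
    (coeff n) (PowerSeries.mk f * PowerSeries.mk g)
      = ∑ i ∈ range (n+1), f i * g (n - i) := by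
  rw [PowerSeries.coeff_mul, Finset.Nat.sum_antidiagonal_eq_sum_range_succ_mk]
  simp [PowerSeries.coeff_mk]

private lemma Fc_eq : Fc = 1 + 2 * (X * (Fc * Oc)) := by
  ext n
  rw [map_add, ps2, PowerSeries.coeff_C_mul]
  cases n with
  | zero =>
    rw [PowerSeries.coeff_zero_X_mul]
    simp [Fc, PowerSeries.coeff_mk]
  | succ k =>
    rw [PowerSeries.coeff_one, if_neg (Nat.succ_ne_zero k), PowerSeries.coeff_succ_X_mul, zero_add]
    rw [show Fc * Oc = PowerSeries.mk (fun k => (catalan (2*k):ℤ)) * PowerSeries.mk (fun k => (catalan (2*k+1):ℤ)) from rfl]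
    rw [coeff_prod_mk, Fc, PowerSeries.coeff_mk]
    rw [show 2*(k+1) = 2*k+2 from by ring]
    exact_mod_cast cat_rel1 k

private lemma Oc_eq : Oc = Fc * Fc + X * (Oc * Oc) := by
  ext n
  rw [map_add]
  rw [show Fc * Fc = PowerSeries.mk (fun k => (catalan (2*k):ℤ)) * PowerSeries.mk (fun k => (catalan (2*k):ℤ)) from rfl]
  rw [show Oc * Oc = PowerSeries.mk (fun k => (catalan (2*k+1):ℤ)) * PowerSeries.mk (fun k => (catalan (2*k+1):ℤ)) from rfl]
  cases n with
  | zero =>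
    rw [PowerSeries.coeff_zero_X_mul, coeff_prod_mk]
    simp [Oc, PowerSeries.coeff_mk]
  | succ k =>
    rw [PowerSeries.coeff_succ_X_mul, coeff_prod_mk, coeff_prod_mk, Oc, PowerSeries.coeff_mk]
    have h := cat_rel2 (k+1)
    rw [show k+1-1 = k from rfl] at h
    rw [show 2*(k+1)+1 = 2*k+3 from by ring] at h ⊢
    exact_mod_cast h

private lemma Dc_eq : Dc = 1 + 4 * (X * (Dc * Dc)) := by
  ext n
  rw [map_add, ps4, PowerSeries.coeff_C_mul]
  cases n with
  | zero =>
    rw [PowerSeries.coeff_zero_X_mul]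
    simp [Dc, PowerSeries.coeff_mk]
  | succ k =>
    rw [PowerSeries.coeff_one, if_neg (Nat.succ_ne_zero k), PowerSeries.coeff_succ_X_mul, zero_add]
    rw [show Dc * Dc = PowerSeries.mk (fun k => ((4:ℤ)^k * catalan k)) * PowerSeries.mk (fun k => ((4:ℤ)^k * catalan k)) from rfl]
    rw [coeff_prod_mk, Dc, PowerSeries.coeff_mk]
    have h := catalan_succ' k
    rw [Finset.Nat.sum_antidiagonal_eq_sum_range_succ_mk] at h
    dsimp only at h
    rw [h]
    push_cast
    rw [Finset.mul_sum, Finset.mul_sum]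
    apply Finset.sum_congr rfl
    intro i hi; simp only [mem_range] at hi
    have e : (4:ℤ)^i * 4^(k-i) = 4^k := by rw [← pow_add]; congr 1; omega
    calc (4:ℤ)^(k+1) * (catalan i * catalan (k-i))
        = (4^i * 4^(k-i) * 4) * (catalan i * catalan (k-i)) := by rw [e]; ring
      _ = 4 * (4^i * catalan i * (4^(k-i) * catalan (k-i))) := by ring

private lemma D_unique (A B : PowerSeries ℤ) (hA : A = 1 + 4*(X*(A*A))) (hB : B = 1 + 4*(X*(B*B))) :
    A = B := by
  ext n
  induction n using Nat.strong_induction_on with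
  | _ n IH =>
    have e : ∀ (P : PowerSeries ℤ) (k : ℕ), (coeff (k+1)) (1 + 4*(X*(P*P)))
        = 4 * ∑ p ∈ antidiagonal k, (coeff p.1) P * (coeff p.2) P := by
      intro P k
      rw [map_add, ps4, PowerSeries.coeff_C_mul, PowerSeries.coeff_one,
        if_neg (Nat.succ_ne_zero k), PowerSeries.coeff_succ_X_mul, zero_add,
        PowerSeries.coeff_mul]
    cases n with
    | zero =>
      rw [hA, hB, map_add, map_add, ps4, PowerSeries.coeff_C_mul, PowerSeries.coeff_C_mul,
        PowerSeries.coeff_zero_X_mul, PowerSeries.coeff_zero_X_mul]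
    | succ k =>
      rw [hA, hB, e, e]
      congr 1
      apply Finset.sum_congr rfl
      intro p hp
      rw [Finset.HasAntidiagonal.mem_antidiagonal] at hp
      rw [IH p.1 (by omega), IH p.2 (by omega)]

private lemma Dc_eq_Fc_sq : Dc = Fc * Fc := by
  apply D_unique _ _ Dc_eq
  linear_combination (Fc + 1 - 2*X*Fc*Oc) * Fc_eq + 4*X*Fc*Fc*Oc_eq

private lemma key_series : Oc + Fc * Oc = 2 * (Fc * Dc) := by
  rw [Dc_eq_Fc_sq]
  linear_combination 2*Fc*Oc_eq - Oc*Fc_eq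

private lemma AL (k : ℕ) :
    (catalan (2*k+1) : ℤ) + ∑ i ∈ range (k+1), (catalan (2*i) : ℤ) * catalan (2*(k-i)+1)
      = 2 * ∑ i ∈ range (k+1), (catalan (2*i) : ℤ) * (4^(k-i) * catalan (k-i)) := by
  have h := congrArg (coeff k) key_series
  rw [map_add] at h
  rw [show (coeff k) (2 * (Fc * Dc)) = 2 * (coeff k) (Fc * Dc) from by
      rw [ps2, PowerSeries.coeff_C_mul]] at h
  rw [show Fc * Oc = PowerSeries.mk (fun k => (catalan (2*k):ℤ)) * PowerSeries.mk (fun k => (catalan (2*k+1):ℤ)) from rfl] at h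
  rw [show Fc * Dc = PowerSeries.mk (fun k => (catalan (2*k):ℤ)) * PowerSeries.mk (fun k => ((4:ℤ)^k * catalan k)) from rfl] at h
  rw [coeff_prod_mk, coeff_prod_mk, Oc, PowerSeries.coeff_mk] at h
  exact h

lemma cat_bridge (k : ℕ) (hk : 1 ≤ k) :
    (catalan (2*k+1) : ℤ) - ∑ i ∈ range k, (catalan (2*i+2) : ℤ) *
        ((2:ℤ)^(2*(k-i)-1) * catalan (k-i-1) - catalan (2*(k-i)-1))
      = 2^(2*k+1) * catalan k - catalan (2*k+1) := by
  obtain ⟨g, hgdef⟩ : ∃ g : ℕ → ℤ, ∀ a, g a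
      = (catalan (2*a):ℤ) * ((2:ℤ)^(2*(k-a)+1) * catalan (k-a) - catalan (2*(k-a)+1)) :=
    ⟨_, fun a => rfl⟩
  have hterm : ∀ i ∈ range k, (catalan (2*i+2) : ℤ) *
        ((2:ℤ)^(2*(k-i)-1) * catalan (k-i-1) - catalan (2*(k-i)-1)) = g (i+1) := by
    intro i hi; simp only [mem_range] at hi
    rw [hgdef, show 2*(i+1) = 2*i+2 from by ring, show 2*(k-(i+1))+1 = 2*(k-i)-1 from by omega,
      show k-(i+1) = k-i-1 from by omega]
  rw [Finset.sum_congr rfl hterm]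
  have hs := Finset.sum_range_succ' g k
  have hexp : ∑ a ∈ range (k+1), g a
      = 2 * (∑ i ∈ range (k+1), (catalan (2*i) : ℤ) * (4^(k-i) * catalan (k-i)))
        - ∑ i ∈ range (k+1), (catalan (2*i) : ℤ) * catalan (2*(k-i)+1) := by
    rw [Finset.mul_sum, ← Finset.sum_sub_distrib]
    apply Finset.sum_congr rfl
    intro a ha; simp only [mem_range] at ha
    rw [hgdef]
    have hpow : (2:ℤ)^(2*(k-a)+1) = 2 * 4^(k-a) := by
      have h4 : ((2:ℤ))^2 = 4 := by norm_num
      rw [pow_succ, pow_mul, h4]; ring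
    rw [hpow]; ring
  have hg0 : g 0 = 2^(2*k+1) * catalan k - catalan (2*k+1) := by
    rw [hgdef]; simp
  have hAL := AL k
  rw [hexp, hg0] at hs
  linarith [hAL, hs]

open Finset PolyTri in
lemma Acnt_eq : ∀ n : ℕ, 1 ≤ n → (Acnt n : ℤ) = 2^(2*n-1) * catalan (n-1) - catalan (2*n-1) := by
  intro n
  induction n using Nat.strong_induction_on with
  | _ n IH =>
    intro hn
    rcases eq_or_lt_of_le hn with h1 | h2
    · rw [← h1]
      rw [show Acnt 1 = 1 from Acnt_one]
      norm_num
    · have hrec := main_rec n (by omega)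
      have hcast : (Acnt n : ℤ) = (catalan (2*n-1) : ℤ)
          - ∑ i ∈ range (n-1), (catalan (2*i+2) : ℤ) * (Acnt (n-1-i) : ℤ) := by
        have h := congrArg (Nat.cast : ℕ → ℤ) hrec
        push_cast at h
        linarith [h]
      rw [hcast]
      have hterm : ∀ i ∈ range (n-1), (catalan (2*i+2):ℤ) * (Acnt (n-1-i):ℤ)
          = (catalan (2*i+2):ℤ) *
            ((2:ℤ)^(2*(n-1-i)-1) * catalan (n-1-i-1) - catalan (2*(n-1-i)-1)) := by
        intro i hi
        rw [mem_range] at hi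
        rw [IH (n-1-i) (by omega) (by omega)]
      rw [Finset.sum_congr rfl hterm]
      have hb := cat_bridge (n-1) (by omega)
      rw [show 2*n-1 = 2*(n-1)+1 from by omega]
      exact hb

open Finset PolyTri in
theorem count_triangulations_avoiding_parallel_to_01_odd (n : ℕ) (hn : 1 ≤ n) :
    ({T : Finset (ℕ × ℕ) | IsTriangulation (2 * n + 1) T ∧
        ∀ e ∈ T, (e.1 + e.2) % (2 * n + 1) ≠ 1}.ncard : ℤ) =
      2 ^ (2 * n - 1) * catalan (n - 1) - catalan (2 * n - 1) := by
  have hset : {T : Finset (ℕ × ℕ) | IsTriangulation (2 * n + 1) T ∧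
      ∀ e ∈ T, (e.1 + e.2) % (2 * n + 1) ≠ 1}
      = ↑(PolyTri.triF (range (2*n+1)) (fun e => e.1 + e.2 ≠ 2*n+2)) := by
    ext T
    simp only [Set.mem_setOf_eq, Finset.mem_coe]
    rw [PolyTri.mem_triF, PolyTri.isTri_iff (by omega)]
    constructor
    · rintro ⟨hT, hP⟩
      refine ⟨hT, fun e he hsum => ?_⟩
      have := hP e he
      rw [hsum, show 2*n+2 = (2*n+1)+1 from by omega, Nat.add_mod_left,
        Nat.mod_eq_of_lt (by omega)] at this
      exact this rfl
    · rintro ⟨hT, hP⟩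
      refine ⟨hT, fun e he => ?_⟩
      have hD := hT.1 _ he
      obtain ⟨h1m, h2m, h3, ⟨c, hc, hc1, hc2⟩, -⟩ := hD
      rw [mem_range] at h1m h2m
      have hs := hP e he
      intro hmod
      rcases lt_or_ge (e.1 + e.2) (2*n+1) with hlt | hge
      · rw [Nat.mod_eq_of_lt hlt] at hmod
        omega
      · rw [Nat.mod_eq_sub_mod hge, Nat.mod_eq_of_lt (by omega)] at hmod
        omega
  rw [hset, Set.ncard_coe_finset]
  exact Acnt_eq n hn
end

section
/- For n ≥ 2 and k ≥ 1, the number of triangulations of a convex 2n-gon with vertices 0, ..., 2n-1 containing exactly k diagonals {x,y} with x+y ≡ 1 (mod 2n) equals ∑ over compositions (i_1,...,i_{k+1}) of n-1 into k+1 positive parts of 2^{k+1} * C_{2i_1-1} * ... * C_{2i_{k+1}-1}, where C_m denotes the m-th Catalan number. -/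
namespace TriProof

open Finset
open scoped Classical

lemma cross_symm {e f : ℕ×ℕ} : DiagonalsCross e f ↔ DiagonalsCross f e := by
  unfold DiagonalsCross; tauto

/-- relabeling map for the part of the polygon inside diagonal (a,b) -/
def inMap (a : ℕ) (e : ℕ×ℕ) : ℕ×ℕ := (e.1 - a, e.2 - a)

def inInv (a : ℕ) (e : ℕ×ℕ) : ℕ×ℕ := (e.1 + a, e.2 + a)

/-- relabeling map for the part of the polygon outside diagonal (a,b) -/
def outMap (m b : ℕ) (e : ℕ×ℕ) : ℕ×ℕ :=
  if b ≤ e.1 then (e.1 - b, e.2 - b)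
  else if b ≤ e.2 then (e.2 - b, e.1 + (m - b))
  else (e.1 + (m-b), e.2 + (m-b))

def outInv (m b : ℕ) (e : ℕ×ℕ) : ℕ×ℕ :=
  if e.2 ≤ m - 1 - b then (e.1 + b, e.2 + b)
  else if e.1 ≤ m - 1 - b then (e.2 - (m - b), e.1 + b)
  else (e.1 - (m-b), e.2 - (m-b))

lemma inMap_diag {m a b x y : ℕ} (hd : IsPolygonDiagonal m (a,b))
    (he : IsPolygonDiagonal m (x,y)) (h1 : a ≤ x) (h2 : y ≤ b) (hne : ¬(x = a ∧ y = b)) :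
    IsPolygonDiagonal (b - a + 1) (inMap a (x,y)) := by
  simp only [IsPolygonDiagonal, inMap] at *; omega

lemma inMap_cross {a x y u v : ℕ} (h1 : a ≤ x) (h2 : a ≤ u) :
    DiagonalsCross (inMap a (x,y)) (inMap a (u,v)) ↔ DiagonalsCross (x,y) (u,v) := by
  simp only [DiagonalsCross, inMap] at *; omega

lemma outMap_diag {m a b x y : ℕ} (hd : IsPolygonDiagonal m (a,b))
    (he : IsPolygonDiagonal m (x,y)) (h1 : x ≤ a ∨ b ≤ x) (h2 : y ≤ a ∨ b ≤ y)
    (hne : ¬(x = a ∧ y = b)) :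
    IsPolygonDiagonal (m - b + a + 1) (outMap m b (x,y)) := by
  simp only [IsPolygonDiagonal, outMap] at *
  split_ifs <;> simp only [] <;> omega

lemma outMap_cross {m a b x y u v : ℕ} (hd : IsPolygonDiagonal m (a,b))
    (he : IsPolygonDiagonal m (x,y)) (hf : IsPolygonDiagonal m (u,v))
    (h1 : x ≤ a ∨ b ≤ x) (h2 : y ≤ a ∨ b ≤ y) (h3 : u ≤ a ∨ b ≤ u) (h4 : v ≤ a ∨ b ≤ v) :
    DiagonalsCross (outMap m b (x,y)) (outMap m b (u,v)) ↔ DiagonalsCross (x,y) (u,v) := by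
  simp only [IsPolygonDiagonal, DiagonalsCross, outMap] at *
  split_ifs <;> simp only [] <;> omega

lemma classify {m a b x y : ℕ} (hd : IsPolygonDiagonal m (a,b))
    (he : IsPolygonDiagonal m (x,y)) (hnc : ¬ DiagonalsCross (x,y) (a,b)) :
    (a ≤ x ∧ y ≤ b) ∨ ((x ≤ a ∨ b ≤ x) ∧ (y ≤ a ∨ b ≤ y)) := by
  simp only [IsPolygonDiagonal, DiagonalsCross] at *; omega

lemma card_le_of_noncrossing (m : ℕ) : ∀ T : Finset (ℕ×ℕ),
    (∀ e ∈ T, IsPolygonDiagonal m e) → (∀ e ∈ T, ∀ f ∈ T, ¬ DiagonalsCross e f) →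
    T.card ≤ m - 3 := by
  induction m using Nat.strong_induction_on with
  | _ m IH =>
    intro T hdiag hnc
    rcases T.eq_empty_or_nonempty with rfl | ⟨⟨a,b⟩, hab⟩
    · simp
    have hd := hdiag _ hab
    obtain ⟨hd1, hd2, hd3, hd4⟩ := id hd
    simp only at hd1 hd2 hd3 hd4
    set T1 : Finset (ℕ×ℕ) :=
      T.filter (fun e => (a ≤ e.1 ∧ e.2 ≤ b) ∧ ¬(e.1 = a ∧ e.2 = b)) with hT1
    set T2 : Finset (ℕ×ℕ) :=
      T.filter (fun e => ((e.1 ≤ a ∨ b ≤ e.1) ∧ (e.2 ≤ a ∨ b ≤ e.2)) ∧ ¬(e.1 = a ∧ e.2 = b))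
      with hT2
    have hsub : T ⊆ insert (a,b) (T1 ∪ T2) := by
      intro ⟨x,y⟩ hxy
      rcases eq_or_ne ((x,y) : ℕ×ℕ) (a,b) with h | h
      · simp [h]
      have h' : ¬(x = a ∧ y = b) := by simpa [Prod.ext_iff] using h
      rcases classify hd (hdiag _ hxy) (hnc _ hxy _ hab) with h1 | h1
      · simp only [mem_insert, mem_union, hT1, mem_filter]
        exact Or.inr (Or.inl ⟨hxy, h1, h'⟩)
      · simp only [mem_insert, mem_union, hT2, mem_filter]
        exact Or.inr (Or.inr ⟨hxy, h1, h'⟩)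
    have hmem1 : ∀ p ∈ T1, ((p.1, p.2) ∈ T ∧ (a ≤ p.1 ∧ p.2 ≤ b) ∧ ¬(p.1 = a ∧ p.2 = b)) := by
      intro p hp; simpa [hT1] using hp
    have hmem2 : ∀ p ∈ T2, ((p.1, p.2) ∈ T ∧
        ((p.1 ≤ a ∨ b ≤ p.1) ∧ (p.2 ≤ a ∨ b ≤ p.2)) ∧ ¬(p.1 = a ∧ p.2 = b)) := by
      intro p hp; simpa [hT2] using hp
    -- bound on T1
    have hb1 : T1.card ≤ (b - a + 1) - 3 := by
      have hinj : Set.InjOn (inMap a) ↑T1 := by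
        intro ⟨x,y⟩ hx ⟨u,v⟩ hu hequ
        obtain ⟨hT, ⟨hx1, -⟩, -⟩ := hmem1 _ (by simpa using hx)
        obtain ⟨hT', ⟨hu1, -⟩, -⟩ := hmem1 _ (by simpa using hu)
        obtain ⟨e1, -, -, -⟩ := hdiag _ hT
        obtain ⟨f1, -, -, -⟩ := hdiag _ hT'
        simp only at e1 f1 hx1 hu1
        simp only [inMap, Prod.mk.injEq] at hequ ⊢
        omega
      rw [← Finset.card_image_of_injOn hinj]
      apply IH (b - a + 1) (by omega)
      · intro e he
        obtain ⟨⟨x,y⟩, hxy, rfl⟩ := Finset.mem_image.1 he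
        obtain ⟨hT, ⟨h1, h2⟩, h3⟩ := hmem1 _ hxy
        exact inMap_diag hd (hdiag _ hT) h1 h2 h3
      · intro e he f hf
        obtain ⟨⟨x,y⟩, hxy, rfl⟩ := Finset.mem_image.1 he
        obtain ⟨⟨u,v⟩, huv, rfl⟩ := Finset.mem_image.1 hf
        obtain ⟨hT, ⟨h1, h2⟩, h3⟩ := hmem1 _ hxy
        obtain ⟨hT', ⟨h1', h2'⟩, h3'⟩ := hmem1 _ huv
        rw [inMap_cross h1 h1']
        exact hnc _ hT _ hT'
    have hb2 : T2.card ≤ (m - b + a + 1) - 3 := by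
      have hinj : Set.InjOn (outMap m b) ↑T2 := by
        intro ⟨x,y⟩ hx ⟨u,v⟩ hu hequ
        obtain ⟨hT, ⟨hx1, hx2⟩, -⟩ := hmem2 _ (by simpa using hx)
        obtain ⟨hT', ⟨hu1, hu2⟩, -⟩ := hmem2 _ (by simpa using hu)
        obtain ⟨e1, e2, e3, e4⟩ := hdiag _ hT
        obtain ⟨f1, f2, f3, f4⟩ := hdiag _ hT'
        simp only at e1 e2 e3 e4 f1 f2 f3 f4 hx1 hx2 hu1 hu2
        simp only [outMap] at hequ
        split_ifs at hequ <;> simp only [Prod.mk.injEq] at hequ ⊢ <;> omega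
      rw [← Finset.card_image_of_injOn hinj]
      apply IH (m - b + a + 1) (by omega)
      · intro e he
        obtain ⟨⟨x,y⟩, hxy, rfl⟩ := Finset.mem_image.1 he
        obtain ⟨hT, ⟨h1, h2⟩, h3⟩ := hmem2 _ hxy
        exact outMap_diag hd (hdiag _ hT) h1 h2 h3
      · intro e he f hf
        obtain ⟨⟨x,y⟩, hxy, rfl⟩ := Finset.mem_image.1 he
        obtain ⟨⟨u,v⟩, huv, rfl⟩ := Finset.mem_image.1 hf
        obtain ⟨hT, ⟨h1, h2⟩, h3⟩ := hmem2 _ hxy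
        obtain ⟨hT', ⟨h1', h2'⟩, h3'⟩ := hmem2 _ huv
        rw [outMap_cross hd (hdiag _ hT) (hdiag _ hT') h1 h2 h1' h2']
        exact hnc _ hT _ hT'
    calc T.card ≤ (insert ((a,b) : ℕ×ℕ) (T1 ∪ T2)).card := Finset.card_le_card hsub
      _ ≤ (T1 ∪ T2).card + 1 := Finset.card_insert_le _ _
      _ ≤ T1.card + T2.card + 1 := by
          have := Finset.card_union_le T1 T2; omega
      _ ≤ m - 3 := by omega

end TriProof
noncomputable section
namespace TriProof2
open Finset TriProof
open scoped Classical

def triSet (m : ℕ) : Finset (Finset (ℕ×ℕ)) :=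
  ((Finset.range m ×ˢ Finset.range m).powerset).filter (fun T => IsTriangulation m T)

lemma mem_triSet {m : ℕ} {T : Finset (ℕ×ℕ)} : T ∈ triSet m ↔ IsTriangulation m T := by
  simp only [triSet, mem_filter, mem_powerset, and_iff_right_iff_imp]
  intro h e he
  obtain ⟨a1, a2, a3, a4⟩ := h.1 e he
  simp only [Finset.mem_product, Finset.mem_range]
  omega

lemma triangulation_small {m : ℕ} (hm : m ≤ 3) {T : Finset (ℕ×ℕ)} :
    IsTriangulation m T ↔ T = ∅ := by
  constructor
  · intro ⟨h1, h2, h3⟩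
    rw [← Finset.card_eq_zero]; omega
  · rintro rfl
    exact ⟨by simp, by simp, by simp; omega⟩

lemma triSet_small {m : ℕ} (hm : m ≤ 3) : triSet m = {∅} := by
  ext T; simp [mem_triSet, triangulation_small hm]

/-- apex condition: `v` is the apex of the triangle over the side `(0, m-1)`,
with a minimality condition making it unique. -/
def apexP (m v : ℕ) (T : Finset (ℕ×ℕ)) : Prop :=
  (v = 1 ∨ (0,v) ∈ T) ∧ (v = m-2 ∨ (v,m-1) ∈ T) ∧ ∀ w, w < v → (w,m-1) ∉ T

lemma apex_unique {m : ℕ} (hm : 4 ≤ m) {T : Finset (ℕ×ℕ)} {v v' : ℕ}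
    (hv : 1 ≤ v ∧ v ≤ m-2) (hv' : 1 ≤ v' ∧ v' ≤ m-2)
    (h : apexP m v T) (h' : apexP m v' T) : v = v' := by
  by_contra hne
  rcases Nat.lt_or_ge v v' with hlt | hge
  · have := h'.2.2 v hlt
    rcases h.2.1 with h1 | h1
    · omega
    · exact this h1
  · have hlt : v' < v := by omega
    have := h.2.2 v' hlt
    rcases h'.2.1 with h1 | h1
    · omega
    · exact this h1

lemma exists_apex {m : ℕ} (hm : 4 ≤ m) {T : Finset (ℕ×ℕ)} (hT : IsTriangulation m T) :
    ∃ v, (1 ≤ v ∧ v ≤ m-2) ∧ apexP m v T := by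
  have hex : ∃ w, ((w, m-1) ∈ T ∨ w = m - 2) := ⟨m-2, Or.inr rfl⟩
  set v := Nat.find hex with hv
  have hspec : ((v, m-1) ∈ T ∨ v = m - 2) := Nat.find_spec hex
  have hmin : ∀ w, w < v → ¬((w, m-1) ∈ T ∨ w = m - 2) := fun w hw => Nat.find_min hex hw
  have hvle : v ≤ m - 2 := Nat.find_le (Or.inr rfl)
  have hv1 : 1 ≤ v := by
    by_contra h0
    have hv0 : v = 0 := by omega
    rcases hspec with h1 | h1
    · rw [hv0] at h1
      obtain ⟨a1, a2, a3, a4⟩ := hT.1 _ h1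
      exact a4 ⟨rfl, rfl⟩
    · omega
  refine ⟨v, ⟨hv1, hvle⟩, ?_, hspec.symm, fun w hw hmem => hmin w hw (Or.inl hmem)⟩
  -- show v = 1 ∨ (0, v) ∈ T
  by_contra hc
  push_neg at hc
  obtain ⟨hcv, hcm⟩ := hc
  have hv2 : 2 ≤ v := by omega
  -- T ∪ {(0,v)} is a noncrossing family of diagonals, contradiction with card bound
  have hdiag : IsPolygonDiagonal m (0, v) := by
    refine ⟨by simp only; omega, by omega, by simpa using hv2, by omega⟩
  have hnc : ∀ e ∈ T, ¬ DiagonalsCross e (0, v) := by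
    rintro ⟨x, y⟩ hxy hcross
    obtain ⟨a1, a2, a3, a4⟩ := hT.1 _ hxy
    simp only at a1 a2 a3 a4
    have hxv : 0 < x ∧ x < v ∧ v < y := by
      rcases hcross with ⟨b1, b2, b3⟩ | ⟨b1, b2, b3⟩
      · simp only at b1 b2 b3; omega
      · simp only at b1 b2 b3; omega
    rcases hspec with h1 | h1
    · rcases Nat.lt_or_ge y (m-1) with hy | hy
      · exact hT.2.1 _ hxy _ h1 (Or.inl (by simp only; omega))
      · have hy' : y = m - 1 := by omega
        exact hmin x (by omega) (Or.inl (hy' ▸ hxy))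
    · have hy' : y = m - 1 := by omega
      exact hmin x (by omega) (Or.inl (hy' ▸ hxy))
  have hcard : (insert ((0,v) : ℕ×ℕ) T).card ≤ m - 3 := by
    apply card_le_of_noncrossing m
    · intro e he
      rcases Finset.mem_insert.1 he with rfl | he'
      · exact hdiag
      · exact hT.1 _ he'
    · intro e he f hf
      rcases Finset.mem_insert.1 he with rfl | he' <;>
        rcases Finset.mem_insert.1 hf with rfl | hf'
      · rintro (⟨b1,b2,b3⟩|⟨b1,b2,b3⟩) <;> omega
      · rw [cross_symm]; exact hnc _ hf'
      · exact hnc _ he'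
      · exact hT.2.1 _ he' _ hf'
  rw [Finset.card_insert_of_notMem hcm, hT.2.2] at hcard
  omega

end TriProof2
namespace TriProof3
open Finset TriProof TriProof2
open scoped Classical

def leftF (v : ℕ) (T : Finset (ℕ×ℕ)) : Finset (ℕ×ℕ) :=
  T.filter (fun e => e.2 ≤ v ∧ ¬(e.1 = 0 ∧ e.2 = v))

def rightF (m v : ℕ) (T : Finset (ℕ×ℕ)) : Finset (ℕ×ℕ) :=
  T.filter (fun e => v ≤ e.1 ∧ ¬(e.1 = v ∧ e.2 = m-1))

def extras (m v : ℕ) : Finset (ℕ×ℕ) :=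
  (if 2 ≤ v then {((0:ℕ), v)} else ∅) ∪ (if v + 3 ≤ m then {(v, m-1)} else ∅)

def glue (m v : ℕ) (p : Finset (ℕ×ℕ) × Finset (ℕ×ℕ)) : Finset (ℕ×ℕ) :=
  (p.1 ∪ p.2.image (inInv v)) ∪ extras m v

lemma mem_extras {m v : ℕ} {e : ℕ×ℕ} :
    e ∈ extras m v ↔ ((2 ≤ v ∧ e = (0, v)) ∨ (v + 3 ≤ m ∧ e = (v, m-1))) := by
  unfold extras
  split_ifs with h1 h2 h3 <;> simp_all

lemma no_straddle {m v : ℕ} {T : Finset (ℕ×ℕ)}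
    (hT : IsTriangulation m T) (hA : apexP m v T) {x y : ℕ} (hxy : (x,y) ∈ T)
    (h1 : x < v) (h2 : v < y) : False := by
  obtain ⟨a1, a2, a3, a4⟩ := hT.1 _ hxy
  simp only at a1 a2 a3 a4
  rcases hA.2.1 with hv | hv
  · have hy : y = m - 1 := by omega
    exact hA.2.2 x h1 (hy ▸ hxy)
  · rcases Nat.lt_or_ge y (m-1) with hy | hy
    · exact hT.2.1 _ hxy _ hv (Or.inl ⟨h1, h2, hy⟩)
    · have hy' : y = m - 1 := by omega
      exact hA.2.2 x h1 (hy' ▸ hxy)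

lemma extras_card {m v : ℕ} (hv1 : 1 ≤ v) :
    (extras m v).card = (if 2 ≤ v then 1 else 0) + (if v + 3 ≤ m then 1 else 0) := by
  unfold extras
  have hne : ((0:ℕ), v) ∉ ({(v, m-1)} : Finset (ℕ×ℕ)) := by
    simp only [mem_singleton, Prod.mk.injEq, not_and]; intro h; omega
  split_ifs with h1 h2 h3
  · rw [show ({((0:ℕ),v)} : Finset (ℕ×ℕ)) ∪ {(v,m-1)} = insert ((0:ℕ),v) {(v,m-1)} from rfl,
      Finset.card_insert_of_notMem hne]; simp
  · simp
  · simp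
  · simp

lemma forward_parts {m v : ℕ} (hm : 4 ≤ m) (hv1 : 1 ≤ v) (hv2 : v ≤ m-2)
    {T : Finset (ℕ×ℕ)} (hT : IsTriangulation m T) (hA : apexP m v T) :
    leftF v T ∈ triSet (v+1) ∧ (rightF m v T).image (inMap v) ∈ triSet (m-v) := by
  have hdiag := hT.1
  have hnc := hT.2.1
  -- left part : diagonals of the (v+1)-gon
  have hLdiag : ∀ e ∈ leftF v T, IsPolygonDiagonal (v+1) e := by
    rintro ⟨x,y⟩ he
    rw [leftF, mem_filter] at he
    obtain ⟨hmem, hy, hne⟩ := he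
    obtain ⟨a1, a2, a3, a4⟩ := hdiag _ hmem
    simp only at a1 a2 a3 a4 hy hne ⊢
    exact ⟨a1, by omega, a3, by omega⟩
  have hLsub : leftF v T ⊆ T := Finset.filter_subset _ _
  have hLnc : ∀ e ∈ leftF v T, ∀ f ∈ leftF v T, ¬ DiagonalsCross e f :=
    fun e he f hf => hnc e (hLsub he) f (hLsub hf)
  have hLbound : (leftF v T).card ≤ (v+1) - 3 :=
    card_le_of_noncrossing (v+1) _ hLdiag hLnc
  -- right part
  have hRmem : ∀ e ∈ rightF m v T, e ∈ T ∧ v ≤ e.1 ∧ ¬(e.1 = v ∧ e.2 = m-1) := by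
    intro e he; rw [rightF, mem_filter] at he; exact ⟨he.1, he.2.1, he.2.2⟩
  have hRinj : Set.InjOn (inMap v) ↑(rightF m v T) := by
    intro ⟨x,y⟩ hx ⟨u,w⟩ hu hequ
    obtain ⟨hmx, hx1, -⟩ := hRmem _ (by simpa using hx)
    obtain ⟨hmu, hu1, -⟩ := hRmem _ (by simpa using hu)
    obtain ⟨a1, -, -, -⟩ := hdiag _ hmx
    obtain ⟨b1, -, -, -⟩ := hdiag _ hmu
    simp only at a1 b1 hx1 hu1
    simp only [inMap, Prod.mk.injEq] at hequ ⊢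
    omega
  have hRdiag : ∀ e ∈ (rightF m v T).image (inMap v), IsPolygonDiagonal (m-v) e := by
    intro e he
    obtain ⟨⟨x,y⟩, hxy, rfl⟩ := Finset.mem_image.1 he
    obtain ⟨hmem, hx1, hne⟩ := hRmem _ hxy
    obtain ⟨a1, a2, a3, a4⟩ := hdiag _ hmem
    simp only at a1 a2 a3 a4 hx1 hne
    simp only [inMap, IsPolygonDiagonal]
    refine ⟨by omega, by omega, by omega, by omega⟩
  have hRnc : ∀ e ∈ (rightF m v T).image (inMap v), ∀ f ∈ (rightF m v T).image (inMap v),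
      ¬ DiagonalsCross e f := by
    intro e he f hf
    obtain ⟨⟨x,y⟩, hxy, rfl⟩ := Finset.mem_image.1 he
    obtain ⟨⟨u,w⟩, huw, rfl⟩ := Finset.mem_image.1 hf
    obtain ⟨hmx, hx1, -⟩ := hRmem _ hxy
    obtain ⟨hmu, hu1, -⟩ := hRmem _ huw
    rw [inMap_cross hx1 hu1]
    exact hnc _ hmx _ hmu
  have hRcard : ((rightF m v T).image (inMap v)).card = (rightF m v T).card :=
    Finset.card_image_of_injOn hRinj
  have hRbound : (rightF m v T).card ≤ (m-v) - 3 := by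
    rw [← hRcard]
    exact card_le_of_noncrossing (m-v) _ hRdiag hRnc
  -- partition of T
  have hextras_sub : extras m v ⊆ T := by
    intro e he
    rcases mem_extras.1 he with ⟨h2v, rfl⟩ | ⟨h3m, rfl⟩
    · rcases hA.1 with h | h
      · omega
      · exact h
    · rcases hA.2.1 with h | h
      · omega
      · exact h
  have hcover : T = (leftF v T ∪ rightF m v T) ∪ extras m v := by
    apply Finset.Subset.antisymm
    · rintro ⟨x,y⟩ hxy
      obtain ⟨a1, a2, a3, a4⟩ := hdiag _ hxy
      simp only at a1 a2 a3 a4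
      simp only [mem_union, leftF, rightF, mem_filter, mem_extras]
      rcases Nat.lt_or_ge x v with hx | hx
      · rcases Nat.lt_or_ge v y with hy | hy
        · exact absurd (no_straddle hT hA hxy hx hy) (fun h => h)
        · by_cases hs : x = 0 ∧ y = v
          · exact Or.inr (Or.inl ⟨by omega, Prod.ext_iff.2 ⟨hs.1, hs.2⟩⟩)
          · exact Or.inl (Or.inl ⟨hxy, by omega, hs⟩)
      · by_cases hs : x = v ∧ y = m-1
        · exact Or.inr (Or.inr ⟨by omega, Prod.ext_iff.2 ⟨hs.1, hs.2⟩⟩)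
        · exact Or.inl (Or.inr ⟨hxy, hx, hs⟩)
    · intro e he
      rcases mem_union.1 he with h | h
      · rcases mem_union.1 h with h' | h'
        · exact Finset.filter_subset _ _ h'
        · exact Finset.filter_subset _ _ h'
      · exact hextras_sub h
  have hdisj1 : Disjoint (leftF v T) (rightF m v T) := by
    rw [Finset.disjoint_left]
    rintro ⟨x,y⟩ hx hy
    rw [leftF, mem_filter] at hx
    rw [rightF, mem_filter] at hy
    obtain ⟨a1, -, -, -⟩ := hdiag _ hx.1
    simp only at a1
    have := hx.2.1
    have := hy.2.1
    simp only at this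
    omega
  have hdisj2 : Disjoint (leftF v T ∪ rightF m v T) (extras m v) := by
    rw [Finset.disjoint_left]
    rintro ⟨x,y⟩ hx hy
    rcases mem_extras.1 hy with ⟨h2v, heq⟩ | ⟨h3m, heq⟩ <;>
      simp only [Prod.mk.injEq] at heq <;>
      obtain ⟨rfl, rfl⟩ := heq <;>
      rcases mem_union.1 hx with h | h <;>
      simp only [leftF, rightF, mem_filter] at h
    · exact absurd h.2.2 (by simp)
    · omega
    · obtain ⟨a1, a2, -, -⟩ := hdiag _ h.1
      simp only at a1 a2
      have := h.2.1
      try simp only at this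
      omega
    · exact absurd h.2.2 (by simp)
  have hcard : T.card = (leftF v T).card + (rightF m v T).card + (extras m v).card := by
    conv_lhs => rw [hcover]
    rw [Finset.card_union_of_disjoint hdisj2, Finset.card_union_of_disjoint hdisj1]
  have hTcard := hT.2.2
  have hex := extras_card (m := m) hv1
  have hcards : (leftF v T).card = (v+1) - 3 ∧ (rightF m v T).card = (m-v) - 3 := by
    split_ifs at hex <;> omega
  refine ⟨mem_triSet.2 ⟨hLdiag, hLnc, hcards.1⟩,
          mem_triSet.2 ⟨hRdiag, hRnc, by rw [hRcard]; exact hcards.2⟩⟩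

end TriProof3
namespace TriProof4
open Finset TriProof TriProof2 TriProof3
open scoped Classical

lemma nc_lr {v x y u w : ℕ} (hy : y ≤ v) (hu : v ≤ u) : ¬DiagonalsCross (x,y) (u,w) := by
  simp only [DiagonalsCross]; omega

lemma inInv_cross {v x y u w : ℕ} :
    DiagonalsCross (inInv v (x,y)) (inInv v (u,w)) ↔ DiagonalsCross (x,y) (u,w) := by
  simp only [DiagonalsCross, inInv]; omega

lemma cover {m v : ℕ} {T : Finset (ℕ×ℕ)} (hT : IsTriangulation m T) (hA : apexP m v T)
    (hv1 : 1 ≤ v) :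
    T = (leftF v T ∪ rightF m v T) ∪ extras m v := by
  have hdiag := hT.1
  have hextras_sub : extras m v ⊆ T := by
    intro e he
    rcases mem_extras.1 he with ⟨h2v, rfl⟩ | ⟨h3m, rfl⟩
    · rcases hA.1 with h | h
      · omega
      · exact h
    · rcases hA.2.1 with h | h
      · omega
      · exact h
  apply Finset.Subset.antisymm
  · rintro ⟨x,y⟩ hxy
    obtain ⟨a1, a2, a3, a4⟩ := hdiag _ hxy
    simp only at a1 a2 a3 a4
    simp only [mem_union, leftF, rightF, mem_filter, mem_extras]
    rcases Nat.lt_or_ge x v with hx | hx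
    · rcases Nat.lt_or_ge v y with hy | hy
      · exact absurd (no_straddle hT hA hxy hx hy) (fun h => h)
      · by_cases hs : x = 0 ∧ y = v
        · exact Or.inr (Or.inl ⟨by omega, Prod.ext_iff.2 ⟨hs.1, hs.2⟩⟩)
        · exact Or.inl (Or.inl ⟨hxy, by omega, hs⟩)
    · by_cases hs : x = v ∧ y = m-1
      · exact Or.inr (Or.inr ⟨by omega, Prod.ext_iff.2 ⟨hs.1, hs.2⟩⟩)
      · exact Or.inl (Or.inr ⟨hxy, hx, hs⟩)
  · intro e he
    rcases mem_union.1 he with h | h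
    · rcases mem_union.1 h with h' | h'
      · exact Finset.filter_subset _ _ h'
      · exact Finset.filter_subset _ _ h'
    · exact hextras_sub h

lemma glue_mem {m v : ℕ} (hm : 4 ≤ m) (hv1 : 1 ≤ v) (hv2 : v ≤ m-2)
    {T1 T2 : Finset (ℕ×ℕ)} (h1 : T1 ∈ triSet (v+1)) (h2 : T2 ∈ triSet (m-v)) :
    glue m v (T1, T2) ∈ triSet m ∧ apexP m v (glue m v (T1, T2)) := by
  obtain ⟨hd1, hn1, hc1⟩ := mem_triSet.1 h1
  obtain ⟨hd2, hn2, hc2⟩ := mem_triSet.1 h2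
  -- facts about each group
  have hF1 : ∀ e ∈ T1, e.1 < e.2 ∧ e.2 ≤ v ∧ e.1 + 2 ≤ e.2 ∧ ¬(e.1 = 0 ∧ e.2 = v) := by
    intro e he
    obtain ⟨a1, a2, a3, a4⟩ := hd1 _ he
    exact ⟨a1, by omega, a3, by simpa using a4⟩
  have hF2 : ∀ e ∈ T2, e.1 < e.2 ∧ e.2 < m - v ∧ e.1 + 2 ≤ e.2 ∧ ¬(e.1 = 0 ∧ e.2 = m-v-1) := by
    intro e he
    obtain ⟨a1, a2, a3, a4⟩ := hd2 _ he
    exact ⟨a1, a2, a3, by simpa using a4⟩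
  have hmem_glue : ∀ e, e ∈ glue m v (T1, T2) ↔
      (e ∈ T1 ∨ e ∈ T2.image (inInv v) ∨ e ∈ extras m v) := by
    intro e; simp [glue, mem_union, or_assoc]
  -- diagonal property
  have hdiag : ∀ e ∈ glue m v (T1, T2), IsPolygonDiagonal m e := by
    rintro ⟨x,y⟩ he
    rcases (hmem_glue _).1 he with h | h | h
    · obtain ⟨a1, a2, a3, a4⟩ := hF1 _ h
      simp only at a1 a2 a3 a4
      exact ⟨a1, by omega, a3, by simp only; omega⟩
    · obtain ⟨⟨x', y'⟩, hx', heq⟩ := Finset.mem_image.1 h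
      obtain ⟨a1, a2, a3, a4⟩ := hF2 _ hx'
      simp only [inInv, Prod.mk.injEq] at heq a1 a2 a3 a4
      obtain ⟨rfl, rfl⟩ := heq
      exact ⟨by simp only; omega, by simp only; omega, by simp only; omega, by simp only; omega⟩
    · rcases mem_extras.1 h with ⟨h2v, heq⟩ | ⟨h3m, heq⟩ <;>
        simp only [Prod.mk.injEq] at heq <;> obtain ⟨rfl, rfl⟩ := heq
      · exact ⟨by simp only; omega, by simp only; omega, by simp only; omega, by simp only; omega⟩
      · exact ⟨by simp only; omega, by simp only; omega, by simp only; omega, by simp only; omega⟩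
  -- noncrossing
  have hnc : ∀ e ∈ glue m v (T1, T2), ∀ f ∈ glue m v (T1, T2), ¬ DiagonalsCross e f := by
    rintro ⟨x,y⟩ he ⟨u,w⟩ hf
    rcases (hmem_glue _).1 he with h | h | h <;> rcases (hmem_glue _).1 hf with h' | h' | h'
    -- T1 vs T1
    · exact hn1 _ h _ h'
    -- T1 vs image
    · obtain ⟨⟨x', y'⟩, hx', heq⟩ := Finset.mem_image.1 h'
      obtain ⟨a1, a2, -, -⟩ := hF1 _ h
      simp only [inInv, Prod.mk.injEq] at heq
      obtain ⟨rfl, rfl⟩ := heq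
      exact nc_lr a2 (by omega)
    -- T1 vs extras
    · obtain ⟨a1, a2, -, -⟩ := hF1 _ h
      simp only at a1 a2
      rcases mem_extras.1 h' with ⟨h2v, heq⟩ | ⟨h3m, heq⟩ <;>
        simp only [Prod.mk.injEq] at heq <;> obtain ⟨rfl, rfl⟩ := heq <;>
        simp only [DiagonalsCross] <;> omega
    -- image vs T1
    · obtain ⟨⟨x', y'⟩, hx', heq⟩ := Finset.mem_image.1 h
      obtain ⟨a1, a2, -, -⟩ := hF1 _ h'
      simp only [inInv, Prod.mk.injEq] at heq
      obtain ⟨rfl, rfl⟩ := heq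
      rw [cross_symm]
      exact nc_lr a2 (by omega)
    -- image vs image
    · obtain ⟨⟨x', y'⟩, hx', heq⟩ := Finset.mem_image.1 h
      obtain ⟨⟨u', w'⟩, hu', heq'⟩ := Finset.mem_image.1 h'
      have hcc := hn2 _ hx' _ hu'
      simp only [inInv, Prod.mk.injEq] at heq heq'
      obtain ⟨rfl, rfl⟩ := heq
      obtain ⟨rfl, rfl⟩ := heq'
      simp only [DiagonalsCross] at hcc ⊢
      omega
    -- image vs extras
    · obtain ⟨⟨x', y'⟩, hx', heq⟩ := Finset.mem_image.1 h
      obtain ⟨a1, a2, a3, a4⟩ := hF2 _ hx'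
      simp only [inInv, Prod.mk.injEq] at heq a1 a2 a3 a4
      obtain ⟨rfl, rfl⟩ := heq
      rcases mem_extras.1 h' with ⟨h2v, heq'⟩ | ⟨h3m, heq'⟩ <;>
        simp only [Prod.mk.injEq] at heq' <;> obtain ⟨rfl, rfl⟩ := heq' <;>
        simp only [DiagonalsCross] <;> omega
    -- extras vs T1
    · obtain ⟨a1, a2, -, -⟩ := hF1 _ h'
      simp only at a1 a2
      rcases mem_extras.1 h with ⟨h2v, heq⟩ | ⟨h3m, heq⟩ <;>
        simp only [Prod.mk.injEq] at heq <;> obtain ⟨rfl, rfl⟩ := heq <;>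
        simp only [DiagonalsCross] <;> omega
    -- extras vs image
    · obtain ⟨⟨x', y'⟩, hx', heq⟩ := Finset.mem_image.1 h'
      obtain ⟨a1, a2, a3, a4⟩ := hF2 _ hx'
      simp only [inInv, Prod.mk.injEq] at heq a1 a2 a3 a4
      obtain ⟨rfl, rfl⟩ := heq
      rcases mem_extras.1 h with ⟨h2v, heq'⟩ | ⟨h3m, heq'⟩ <;>
        simp only [Prod.mk.injEq] at heq' <;> obtain ⟨rfl, rfl⟩ := heq' <;>
        simp only [DiagonalsCross] <;> omega
    -- extras vs extras
    · rcases mem_extras.1 h with ⟨h2v, heq⟩ | ⟨h3m, heq⟩ <;>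
        rcases mem_extras.1 h' with ⟨h2v', heq'⟩ | ⟨h3m', heq'⟩ <;>
        simp only [Prod.mk.injEq] at heq heq' <;>
        obtain ⟨rfl, rfl⟩ := heq <;> obtain ⟨rfl, rfl⟩ := heq' <;>
        simp only [DiagonalsCross] <;> omega
  -- cardinality
  have hinj : Function.Injective (inInv v) := by
    rintro ⟨x,y⟩ ⟨u,w⟩ h
    simp only [inInv, Prod.mk.injEq] at h ⊢
    omega
  have hdisj1 : Disjoint T1 (T2.image (inInv v)) := by
    rw [Finset.disjoint_left]
    rintro ⟨x,y⟩ hx hy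
    obtain ⟨-, a2, -, -⟩ := hF1 _ hx
    obtain ⟨⟨x', y'⟩, hx', heq⟩ := Finset.mem_image.1 hy
    obtain ⟨b1, -, -, -⟩ := hF2 _ hx'
    simp only [inInv, Prod.mk.injEq] at heq a2 b1
    omega
  have hdisj2 : Disjoint (T1 ∪ T2.image (inInv v)) (extras m v) := by
    rw [Finset.disjoint_left]
    rintro ⟨x,y⟩ hx hy
    rcases mem_extras.1 hy with ⟨h2v, heq⟩ | ⟨h3m, heq⟩ <;>
      simp only [Prod.mk.injEq] at heq <;> obtain ⟨rfl, rfl⟩ := heq <;>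
      rcases mem_union.1 hx with h | h
    · obtain ⟨-, -, -, a4⟩ := hF1 _ h
      exact a4 (by simp)
    · obtain ⟨⟨x', y'⟩, hx', heq⟩ := Finset.mem_image.1 h
      obtain ⟨b1, -, -, -⟩ := hF2 _ hx'
      simp only [inInv, Prod.mk.injEq] at heq b1
      omega
    · obtain ⟨-, a2, -, -⟩ := hF1 _ h
      simp only at a2
      omega
    · obtain ⟨⟨x', y'⟩, hx', heq⟩ := Finset.mem_image.1 h
      obtain ⟨b1, b2, b3, b4⟩ := hF2 _ hx'
      simp only [inInv, Prod.mk.injEq] at heq b1 b2 b3 b4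
      apply b4
      omega
  have hcard : (glue m v (T1, T2)).card = m - 3 := by
    rw [glue]
    rw [Finset.card_union_of_disjoint hdisj2, Finset.card_union_of_disjoint hdisj1,
      Finset.card_image_of_injective _ hinj, hc1, hc2, extras_card hv1]
    split_ifs <;> omega
  have hglue_tri : IsTriangulation m (glue m v (T1, T2)) := ⟨hdiag, hnc, hcard⟩
  refine ⟨mem_triSet.2 hglue_tri, ?_, ?_, ?_⟩
  · rcases Nat.lt_or_ge v 2 with h | h
    · left; omega
    · right
      rw [hmem_glue]
      exact Or.inr (Or.inr (mem_extras.2 (Or.inl ⟨h, rfl⟩)))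
  · rcases Nat.lt_or_ge (m-3) v with h | h
    · left; omega
    · right
      rw [hmem_glue]
      exact Or.inr (Or.inr (mem_extras.2 (Or.inr ⟨by omega, rfl⟩)))
  · intro w hw hmem
    rcases (hmem_glue _).1 hmem with h | h | h
    · obtain ⟨-, a2, -, -⟩ := hF1 _ h
      simp only at a2
      omega
    · obtain ⟨⟨x', y'⟩, hx', heq⟩ := Finset.mem_image.1 h
      obtain ⟨b1, b2, -, -⟩ := hF2 _ hx'
      simp only [inInv, Prod.mk.injEq] at heq b1 b2
      omega
    · rcases mem_extras.1 h with ⟨h2v, heq⟩ | ⟨h3m, heq⟩ <;>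
        simp only [Prod.mk.injEq] at heq <;> omega

end TriProof4
namespace TriProof5
open Finset TriProof TriProof2 TriProof3 TriProof4
open scoped Classical

lemma vsplit {m v : ℕ} (hm : 4 ≤ m) (hv1 : 1 ≤ v) (hv2 : v ≤ m-2) :
    ((triSet m).filter (fun T => apexP m v T)).card =
      (triSet (v+1)).card * (triSet (m-v)).card := by
  rw [← Finset.card_product]
  apply Finset.card_nbij' (i := fun T => (leftF v T, (rightF m v T).image (inMap v)))
    (j := fun p => glue m v p)
  all_goals simp only [Set.MapsTo, Set.LeftInvOn, Set.RightInvOn, Finset.mem_coe]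
  · intro T hT
    rw [mem_filter] at hT
    have hfp := forward_parts hm hv1 hv2 (mem_triSet.1 hT.1) hT.2
    exact Finset.mem_product.2 hfp
  · rintro ⟨T1, T2⟩ hp
    rw [Finset.mem_product] at hp
    have hg := glue_mem hm hv1 hv2 hp.1 hp.2
    exact mem_filter.2 ⟨hg.1, hg.2⟩
  · intro T hT
    rw [mem_filter] at hT
    have hTri := mem_triSet.1 hT.1
    have himg : ((rightF m v T).image (inMap v)).image (inInv v) = rightF m v T := by
      rw [Finset.image_image]
      have he : ∀ x ∈ rightF m v T, (inInv v ∘ inMap v) x = x := by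
        rintro ⟨x,y⟩ hx
        rw [rightF, mem_filter] at hx
        obtain ⟨hmem, hx1, -⟩ := hx
        obtain ⟨a1, -, -, -⟩ := hTri.1 _ hmem
        simp only at a1 hx1
        simp only [Function.comp_apply, inMap, inInv, Prod.mk.injEq]
        constructor <;> omega
      rw [Finset.image_congr he, Finset.image_id']
    show (leftF v T ∪ ((rightF m v T).image (inMap v)).image (inInv v)) ∪ extras m v = T
    rw [himg]
    exact (cover hTri hT.2 hv1).symm
  · rintro ⟨T1, T2⟩ hp
    rw [Finset.mem_product] at hp
    obtain ⟨h1, h2⟩ := hp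
    obtain ⟨hd1, hn1, hc1⟩ := mem_triSet.1 h1
    obtain ⟨hd2, hn2, hc2⟩ := mem_triSet.1 h2
    have hmem_glue : ∀ e, e ∈ glue m v (T1, T2) ↔
        (e ∈ T1 ∨ e ∈ T2.image (inInv v) ∨ e ∈ extras m v) := by
      intro e; simp [glue, mem_union, or_assoc]
    have hL : leftF v (glue m v (T1,T2)) = T1 := by
      ext ⟨x,y⟩
      rw [leftF, mem_filter, hmem_glue]
      constructor
      · rintro ⟨h | h | h, hy, hne⟩
        · exact h
        · exfalso
          obtain ⟨⟨x', y'⟩, hx', heq⟩ := Finset.mem_image.1 h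
          obtain ⟨a1, -, -, -⟩ := hd2 _ hx'
          simp only [inInv, Prod.mk.injEq] at heq a1
          simp only at hy
          omega
        · exfalso
          rcases mem_extras.1 h with ⟨h2v, heq⟩ | ⟨h3m, heq⟩ <;>
            simp only [Prod.mk.injEq] at heq <;> simp only at hy hne <;> omega
      · intro h
        obtain ⟨a1, a2, a3, a4⟩ := hd1 _ h
        simp only at a1 a2 a4 ⊢
        exact ⟨Or.inl h, by omega, by omega⟩
    have hR : rightF m v (glue m v (T1,T2)) = T2.image (inInv v) := by
      ext ⟨x,y⟩
      rw [rightF, mem_filter, hmem_glue]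
      constructor
      · rintro ⟨h | h | h, hx, hne⟩
        · exfalso
          obtain ⟨a1, a2, -, -⟩ := hd1 _ h
          simp only at a1 a2 hx
          omega
        · exact h
        · exfalso
          rcases mem_extras.1 h with ⟨h2v, heq⟩ | ⟨h3m, heq⟩ <;>
            simp only [Prod.mk.injEq] at heq <;> simp only at hx hne <;> omega
      · intro h
        obtain ⟨⟨x', y'⟩, hx', heq⟩ := Finset.mem_image.1 h
        obtain ⟨a1, a2, a3, a4⟩ := hd2 _ hx'
        simp only [inInv, Prod.mk.injEq] at heq a1 a2 a3 a4
        obtain ⟨rfl, rfl⟩ := heq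
        refine ⟨Or.inr (Or.inl h), by simp only; omega, by simp only; omega⟩
    have himg2 : (T2.image (inInv v)).image (inMap v) = T2 := by
      rw [Finset.image_image]
      have he : ∀ x ∈ T2, (inMap v ∘ inInv v) x = x := by
        rintro ⟨x,y⟩ hx
        simp only [Function.comp_apply, inMap, inInv, Prod.mk.injEq]
        constructor <;> omega
      rw [Finset.image_congr he, Finset.image_id']
    simp only [hL, hR, himg2]

lemma triSet_card : ∀ m, 2 ≤ m → (triSet m).card = catalan (m - 2) := by
  intro m
  induction m using Nat.strong_induction_on with
  | _ m IH =>
    intro hm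
    rcases Nat.lt_or_ge m 4 with h4 | h4
    · have h23 : m = 2 ∨ m = 3 := by omega
      rcases h23 with rfl | rfl <;> rw [triSet_small (by norm_num)] <;> simp
    · have hpart : triSet m = (Finset.Icc 1 (m-2)).biUnion
          (fun v => (triSet m).filter (fun T => apexP m v T)) := by
        apply Finset.Subset.antisymm
        · intro T hT
          obtain ⟨v, hvb, hA⟩ := exists_apex h4 (mem_triSet.1 hT)
          exact Finset.mem_biUnion.2 ⟨v, Finset.mem_Icc.2 hvb, Finset.mem_filter.2 ⟨hT, hA⟩⟩
        · intro T hT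
          obtain ⟨v, -, hT'⟩ := Finset.mem_biUnion.1 hT
          exact (Finset.mem_filter.1 hT').1
      rw [hpart, Finset.card_biUnion]
      swap
      · intro v hv v' hv' hne
        rw [Function.onFun, Finset.disjoint_left]
        intro T hT hT'
        rw [Finset.mem_filter] at hT hT'
        rw [Finset.mem_coe, Finset.mem_Icc] at hv hv'
        exact hne (apex_unique h4 hv hv' hT.2 hT'.2)
      have hval : ∀ v ∈ Finset.Icc 1 (m-2),
          ((triSet m).filter (fun T => apexP m v T)).card
            = catalan (v-1) * catalan (m-v-2) := by
        intro v hv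
        rw [Finset.mem_Icc] at hv
        rw [vsplit h4 hv.1 hv.2, IH (v+1) (by omega) (by omega), IH (m-v) (by omega) (by omega)]
        have : v + 1 - 2 = v - 1 := by omega
        rw [this]
      rw [Finset.sum_congr rfl hval]
      have hm2 : m - 2 = (m - 3) + 1 := by omega
      rw [hm2, catalan_succ']
      refine Finset.sum_nbij' (i := fun v => (v - 1, m - v - 2)) (j := fun p => p.1 + 1)
        ?_ ?_ ?_ ?_ ?_
      · intro v hv
        rw [Finset.mem_Icc] at hv
        simp only [Finset.HasAntidiagonal.mem_antidiagonal]
        omega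
      · intro p hp
        rw [Finset.HasAntidiagonal.mem_antidiagonal] at hp
        simp only [Finset.mem_Icc]
        omega
      · intro v hv
        rw [Finset.mem_Icc] at hv
        simp only
        omega
      · rintro ⟨p1, p2⟩ hp
        rw [Finset.HasAntidiagonal.mem_antidiagonal] at hp
        simp only [Prod.mk.injEq] at hp ⊢
        omega
      · intro v hv
        rfl

end TriProof5
namespace TriProof6
open Finset TriProof TriProof2 TriProof3 TriProof4 TriProof5
open scoped Classical

lemma mod_helper {s M : ℕ} (hM : 1 ≤ M) (hs : s < 2*M) :
    s % M = if s < M then s else s - M := by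
  split_ifs with h
  · exact Nat.mod_eq_of_lt h
  · rw [Nat.mod_eq_sub_mod (by omega), Nat.mod_eq_of_lt (by omega)]

/-- the antiparallel diagonals of the 2N-gon are exactly (c, 2N-1-c), 1 ≤ c ≤ N-2 -/
lemma class_shape {N x y : ℕ} (hN : 2 ≤ N) (he : IsPolygonDiagonal (2*N) (x,y))
    (hc : (x + y) % (2*N) = 2*N-1) :
    x + y = 2*N-1 ∧ 1 ≤ x ∧ x ≤ N-2 ∧ y = 2*N-1-x := by
  obtain ⟨a1, a2, a3, a4⟩ := he
  simp only at a1 a2 a3 a4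
  rw [mod_helper (by omega) (by omega)] at hc
  split_ifs at hc <;> omega

lemma class_dc {N c : ℕ} (hN : 2 ≤ N) (hc1 : 1 ≤ c) (hc2 : c ≤ N-2) :
    IsPolygonDiagonal (2*N) (c, 2*N-1-c) ∧ (c + (2*N-1-c)) % (2*N) = 2*N-1 := by
  refine ⟨⟨by simp only; omega, by simp only; omega, by simp only; omega, by simp only; omega⟩, ?_⟩
  rw [mod_helper (by omega) (by omega)]
  split_ifs <;> omega

lemma class_in {N c x y : ℕ} (hN : 2 ≤ N) (hc1 : 1 ≤ c) (hc2 : c ≤ N-2)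
    (he : IsPolygonDiagonal (2*N) (x,y)) (h1 : c ≤ x) (h2 : y ≤ 2*N-1-c)
    (hne : ¬(x = c ∧ y = 2*N-1-c)) :
    (x + y) % (2*N) = 2*N-1 ↔ ((x-c) + (y-c)) % (2*(N-c)) = 2*(N-c)-1 := by
  obtain ⟨a1, a2, a3, a4⟩ := he
  simp only at a1 a2 a3 a4
  rw [mod_helper (by omega) (by omega), mod_helper (by omega) (by omega)]
  split_ifs <;> omega

lemma class_out {N c x y : ℕ} (hN : 2 ≤ N) (hc1 : 1 ≤ c) (hc2 : c ≤ N-2)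
    (he : IsPolygonDiagonal (2*N) (x,y))
    (h1 : x ≤ c ∨ 2*N-1-c ≤ x) (h2 : y ≤ c ∨ 2*N-1-c ≤ y)
    (hne : ¬(x = c ∧ y = 2*N-1-c)) :
    (x + y) % (2*N) = 2*N-1 ↔
      ((outMap (2*N) (2*N-1-c) (x,y)).1 + (outMap (2*N) (2*N-1-c) (x,y)).2) % (2*(c+1))
        = 2*(c+1)-1 := by
  obtain ⟨a1, a2, a3, a4⟩ := he
  simp only at a1 a2 a3 a4
  have hsum : (outMap (2*N) (2*N-1-c) (x,y)).1 + (outMap (2*N) (2*N-1-c) (x,y)).2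
      < 2*(2*(c+1)) := by
    simp only [outMap]
    split_ifs <;> simp only [] <;> omega
  rw [mod_helper (by omega) (by omega), mod_helper (by omega) hsum]
  simp only [outMap] at *
  split_ifs at * <;> simp only [] at * <;> omega

lemma outInv_spec {m a b x y : ℕ} (hd : IsPolygonDiagonal m (a,b))
    (he : IsPolygonDiagonal (m - b + a + 1) (x,y)) :
    IsPolygonDiagonal m (outInv m b (x,y)) ∧
    ((outInv m b (x,y)).1 ≤ a ∨ b ≤ (outInv m b (x,y)).1) ∧
    ((outInv m b (x,y)).2 ≤ a ∨ b ≤ (outInv m b (x,y)).2) ∧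
    ¬((outInv m b (x,y)).1 = a ∧ (outInv m b (x,y)).2 = b) := by
  simp only [IsPolygonDiagonal, outInv] at *
  split_ifs <;> simp only [] <;> refine ⟨⟨?_,?_,?_,?_⟩,?_,?_,?_⟩ <;> omega

lemma outInv_left_inv {m a b x y : ℕ} (hd : IsPolygonDiagonal m (a,b))
    (he : IsPolygonDiagonal m (x,y)) (h1 : x ≤ a ∨ b ≤ x) (h2 : y ≤ a ∨ b ≤ y)
    (hne : ¬(x = a ∧ y = b)) :
    outInv m b (outMap m b (x,y)) = (x,y) := by
  simp only [IsPolygonDiagonal] at hd he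
  simp only [outMap, outInv]
  split_ifs <;> simp only [Prod.mk.injEq] <;> constructor <;> omega

lemma outInv_right_inv {m a b x y : ℕ} (hd : IsPolygonDiagonal m (a,b))
    (he : IsPolygonDiagonal (m - b + a + 1) (x,y)) :
    outMap m b (outInv m b (x,y)) = (x,y) := by
  simp only [IsPolygonDiagonal] at hd he
  simp only [outMap, outInv]
  split_ifs <;> simp only [Prod.mk.injEq] <;> constructor <;> omega

lemma mixed_nc {a b x y u w : ℕ} (h1 : a ≤ x) (h2 : y ≤ b)
    (h3 : u ≤ a ∨ b ≤ u) (h4 : w ≤ a ∨ b ≤ w) :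
    ¬ DiagonalsCross (x,y) (u,w) := by
  simp only [DiagonalsCross]; omega

lemma d_nc_in {a b x y : ℕ} (h1 : a ≤ x) (h2 : y ≤ b) :
    ¬ DiagonalsCross (x,y) (a,b) := by
  simp only [DiagonalsCross]; omega

lemma d_nc_out {a b u w : ℕ} (h3 : u ≤ a ∨ b ≤ u) (h4 : w ≤ a ∨ b ≤ w) :
    ¬ DiagonalsCross (u,w) (a,b) := by
  simp only [DiagonalsCross]; omega

end TriProof6
namespace TriProof7
open Finset TriProof TriProof2 TriProof3 TriProof4 TriProof5 TriProof6
open scoped Classical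

def clsP (N : ℕ) (e : ℕ×ℕ) : Prop := (e.1 + e.2) % (2*N) = 2*N-1

noncomputable def ESet (N k : ℕ) : Finset (Finset (ℕ×ℕ)) :=
  (triSet (2*N)).filter (fun T => (T.filter (clsP N)).card = k)

lemma mem_ESet {N k : ℕ} {T : Finset (ℕ×ℕ)} :
    T ∈ ESet N k ↔ IsTriangulation (2*N) T ∧ (T.filter (clsP N)).card = k := by
  rw [ESet, mem_filter, mem_triSet]

def inF (N c : ℕ) (T : Finset (ℕ×ℕ)) : Finset (ℕ×ℕ) :=
  T.filter (fun e => (c ≤ e.1 ∧ e.2 ≤ 2*N-1-c) ∧ ¬(e.1 = c ∧ e.2 = 2*N-1-c))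

def outF (N c : ℕ) (T : Finset (ℕ×ℕ)) : Finset (ℕ×ℕ) :=
  T.filter (fun e =>
    ((e.1 ≤ c ∨ 2*N-1-c ≤ e.1) ∧ (e.2 ≤ c ∨ 2*N-1-c ≤ e.2)) ∧ ¬(e.1 = c ∧ e.2 = 2*N-1-c))

lemma inInv_spec {m a b x y : ℕ} (hd : IsPolygonDiagonal m (a,b))
    (he : IsPolygonDiagonal (b-a+1) (x,y)) :
    IsPolygonDiagonal m (inInv a (x,y)) ∧ a ≤ x+a ∧ y+a ≤ b ∧ ¬(x+a = a ∧ y+a = b) := by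
  simp only [IsPolygonDiagonal, inInv] at *
  refine ⟨⟨?_,?_,?_,?_⟩,?_,?_,?_⟩ <;> omega

lemma inMap_left_inv {a x y : ℕ} (h : a ≤ x) (h2 : x ≤ y) :
    inInv a (inMap a (x,y)) = (x,y) := by
  simp only [inMap, inInv, Prod.mk.injEq]
  constructor <;> omega

lemma inMap_right_inv {a x y : ℕ} : inMap a (inInv a (x,y)) = (x,y) := by
  simp only [inMap, inInv, Prod.mk.injEq]
  constructor <;> omega

section Fiber

variable {N c k : ℕ}

lemma fiber_forward (hN : 2 ≤ N) (hc1 : 1 ≤ c) (hc2 : c ≤ N-2)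
    {T : Finset (ℕ×ℕ)} (hT : T ∈ ESet N k) (hdc : (c, 2*N-1-c) ∈ T)
    (hmin : ∀ i, i < c → (i, 2*N-1-i) ∉ T) :
    (outF N c T).image (outMap (2*N) (2*N-1-c)) ∈ ESet (c+1) 0 ∧
    (inF N c T).image (inMap c) ∈ ESet (N-c) (k-1) ∧
    T = insert (c, 2*N-1-c) (outF N c T ∪ inF N c T) ∧ 1 ≤ k := by
  obtain ⟨hTri, hcnt⟩ := mem_ESet.1 hT
  have hd : IsPolygonDiagonal (2*N) (c, 2*N-1-c) := (class_dc hN hc1 hc2).1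
  have hszo : 2*N - (2*N-1-c) + c + 1 = 2*(c+1) := by omega
  have hszi : (2*N-1-c) - c + 1 = 2*(N-c) := by omega
  have hinF : ∀ e ∈ inF N c T,
      e ∈ T ∧ (c ≤ e.1 ∧ e.2 ≤ 2*N-1-c) ∧ ¬(e.1 = c ∧ e.2 = 2*N-1-c) := by
    intro e he; rw [inF, mem_filter] at he; exact he
  have houtF : ∀ e ∈ outF N c T,
      e ∈ T ∧ ((e.1 ≤ c ∨ 2*N-1-c ≤ e.1) ∧ (e.2 ≤ c ∨ 2*N-1-c ≤ e.2)) ∧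
        ¬(e.1 = c ∧ e.2 = 2*N-1-c) := by
    intro e he; rw [outF, mem_filter] at he; exact he
  have hclassify : ∀ e ∈ T, e = (c, 2*N-1-c) ∨ e ∈ inF N c T ∨ e ∈ outF N c T := by
    rintro ⟨x,y⟩ he
    by_cases heq : ((x,y) : ℕ×ℕ) = (c, 2*N-1-c)
    · exact Or.inl heq
    · have hne : ¬(x = c ∧ y = 2*N-1-c) := by simpa [Prod.ext_iff] using heq
      rcases classify hd (hTri.1 _ he) (hTri.2.1 _ he _ hdc) with h | h
      · exact Or.inr (Or.inl (by rw [inF, mem_filter]; exact ⟨he, h, hne⟩))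
      · exact Or.inr (Or.inr (by rw [outF, mem_filter]; exact ⟨he, h, hne⟩))
  have hcover : T = insert (c, 2*N-1-c) (outF N c T ∪ inF N c T) := by
    apply Finset.Subset.antisymm
    · intro e he
      rcases hclassify e he with h | h | h
      · exact Finset.mem_insert.2 (Or.inl h)
      · exact Finset.mem_insert.2 (Or.inr (Finset.mem_union.2 (Or.inr h)))
      · exact Finset.mem_insert.2 (Or.inr (Finset.mem_union.2 (Or.inl h)))
    · intro e he
      rcases Finset.mem_insert.1 he with rfl | h
      · exact hdc
      · rcases Finset.mem_union.1 h with h | h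
        · exact (houtF _ h).1
        · exact (hinF _ h).1
  have hdnotin : (c, 2*N-1-c) ∉ outF N c T ∪ inF N c T := by
    intro h
    rcases Finset.mem_union.1 h with h | h
    · exact (houtF _ h).2.2 ⟨rfl, rfl⟩
    · exact (hinF _ h).2.2 ⟨rfl, rfl⟩
  have hdisjoint : Disjoint (outF N c T) (inF N c T) := by
    rw [Finset.disjoint_left]
    rintro ⟨x,y⟩ hx hy
    obtain ⟨hmem, ⟨ho1, ho2⟩, hone⟩ := houtF _ hx
    obtain ⟨-, ⟨hi1, hi2⟩, -⟩ := hinF _ hy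
    obtain ⟨a1, -, -, -⟩ := hTri.1 _ hmem
    simp only at a1 ho1 ho2 hi1 hi2 hone
    omega
  have hcardT : T.card = 1 + (outF N c T).card + (inF N c T).card := by
    conv_lhs => rw [hcover]
    rw [Finset.card_insert_of_notMem hdnotin, Finset.card_union_of_disjoint hdisjoint]
    omega
  -- the outer part
  have houtinj : Set.InjOn (outMap (2*N) (2*N-1-c)) ↑(outF N c T) := by
    intro ⟨x,y⟩ hx ⟨u,w⟩ hu hequ
    obtain ⟨hmx, ⟨hx1, hx2⟩, -⟩ := houtF _ (by simpa using hx)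
    obtain ⟨hmu, ⟨hu1, hu2⟩, -⟩ := houtF _ (by simpa using hu)
    obtain ⟨e1, e2, e3, e4⟩ := hTri.1 _ hmx
    obtain ⟨f1, f2, f3, f4⟩ := hTri.1 _ hmu
    simp only at e1 e2 e3 e4 f1 f2 f3 f4 hx1 hx2 hu1 hu2
    simp only [outMap] at hequ
    split_ifs at hequ <;> simp only [Prod.mk.injEq] at hequ ⊢ <;> omega
  have houtdiag : ∀ e ∈ (outF N c T).image (outMap (2*N) (2*N-1-c)),
      IsPolygonDiagonal (2*(c+1)) e := by
    intro e he
    obtain ⟨⟨x,y⟩, hxy, rfl⟩ := Finset.mem_image.1 he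
    obtain ⟨hmem, ⟨h1, h2⟩, h3⟩ := houtF _ hxy
    have := outMap_diag hd (hTri.1 _ hmem) h1 h2 h3
    rwa [hszo] at this
  have houtnc : ∀ e ∈ (outF N c T).image (outMap (2*N) (2*N-1-c)),
      ∀ f ∈ (outF N c T).image (outMap (2*N) (2*N-1-c)), ¬ DiagonalsCross e f := by
    intro e he f hf
    obtain ⟨⟨x,y⟩, hxy, rfl⟩ := Finset.mem_image.1 he
    obtain ⟨⟨u,w⟩, huw, rfl⟩ := Finset.mem_image.1 hf
    obtain ⟨hmx, ⟨hx1, hx2⟩, -⟩ := houtF _ hxy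
    obtain ⟨hmu, ⟨hu1, hu2⟩, -⟩ := houtF _ huw
    rw [outMap_cross hd (hTri.1 _ hmx) (hTri.1 _ hmu) hx1 hx2 hu1 hu2]
    exact hTri.2.1 _ hmx _ hmu
  have houtcard : ((outF N c T).image (outMap (2*N) (2*N-1-c))).card = (outF N c T).card :=
    Finset.card_image_of_injOn houtinj
  have houtbound : (outF N c T).card ≤ 2*(c+1) - 3 := by
    rw [← houtcard]
    exact card_le_of_noncrossing _ _ houtdiag houtnc
  -- the inner part
  have hininj : Set.InjOn (inMap c) ↑(inF N c T) := by
    intro ⟨x,y⟩ hx ⟨u,w⟩ hu hequ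
    obtain ⟨hmx, ⟨hx1, -⟩, -⟩ := hinF _ (by simpa using hx)
    obtain ⟨hmu, ⟨hu1, -⟩, -⟩ := hinF _ (by simpa using hu)
    obtain ⟨e1, -, -, -⟩ := hTri.1 _ hmx
    obtain ⟨f1, -, -, -⟩ := hTri.1 _ hmu
    simp only at e1 f1 hx1 hu1
    simp only [inMap, Prod.mk.injEq] at hequ ⊢
    omega
  have hindiag : ∀ e ∈ (inF N c T).image (inMap c), IsPolygonDiagonal (2*(N-c)) e := by
    intro e he
    obtain ⟨⟨x,y⟩, hxy, rfl⟩ := Finset.mem_image.1 he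
    obtain ⟨hmem, ⟨h1, h2⟩, h3⟩ := hinF _ hxy
    have := inMap_diag hd (hTri.1 _ hmem) h1 h2 h3
    rwa [hszi] at this
  have hinnc : ∀ e ∈ (inF N c T).image (inMap c), ∀ f ∈ (inF N c T).image (inMap c),
      ¬ DiagonalsCross e f := by
    intro e he f hf
    obtain ⟨⟨x,y⟩, hxy, rfl⟩ := Finset.mem_image.1 he
    obtain ⟨⟨u,w⟩, huw, rfl⟩ := Finset.mem_image.1 hf
    obtain ⟨hmx, ⟨hx1, -⟩, -⟩ := hinF _ hxy
    obtain ⟨hmu, ⟨hu1, -⟩, -⟩ := hinF _ huw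
    rw [inMap_cross hx1 hu1]
    exact hTri.2.1 _ hmx _ hmu
  have hincard : ((inF N c T).image (inMap c)).card = (inF N c T).card :=
    Finset.card_image_of_injOn hininj
  have hinbound : (inF N c T).card ≤ 2*(N-c) - 3 := by
    rw [← hincard]
    exact card_le_of_noncrossing _ _ hindiag hinnc
  have hTcard := hTri.2.2
  have hcards : (outF N c T).card = 2*(c+1) - 3 ∧ (inF N c T).card = 2*(N-c) - 3 := by
    omega
  -- class counts
  have houtclass : (outF N c T).filter (clsP N) = ∅ := by
    rw [Finset.eq_empty_iff_forall_notMem]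
    rintro ⟨x,y⟩ hmem
    rw [Finset.mem_filter] at hmem
    obtain ⟨hout, hcls⟩ := hmem
    obtain ⟨hmemT, ⟨h1, h2⟩, h3⟩ := houtF _ hout
    obtain ⟨s1, s2, s3, s4⟩ := class_shape hN (hTri.1 _ hmemT) hcls
    simp only at h1 h2 h3
    have hxc : x < c := by omega
    exact hmin x hxc (by rw [← s4]; exact hmemT)
  have hTclassEq : T.filter (clsP N) =
      insert (c, 2*N-1-c) ((inF N c T).filter (clsP N)) := by
    ext e
    rw [Finset.mem_filter, Finset.mem_insert, Finset.mem_filter]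
    constructor
    · rintro ⟨hmem, hcls⟩
      rcases hclassify e hmem with h | h | h
      · exact Or.inl h
      · exact Or.inr ⟨h, hcls⟩
      · exfalso
        have : e ∈ (outF N c T).filter (clsP N) := Finset.mem_filter.2 ⟨h, hcls⟩
        rw [houtclass] at this
        exact absurd this (Finset.notMem_empty _)
    · rintro (rfl | ⟨h, hcls⟩)
      · exact ⟨hdc, (class_dc hN hc1 hc2).2⟩
      · exact ⟨(hinF _ h).1, hcls⟩
  have hdnotinf : (c, 2*N-1-c) ∉ (inF N c T).filter (clsP N) := by
    intro h
    exact (hinF _ (Finset.mem_filter.1 h).1).2.2 ⟨rfl, rfl⟩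
  have hinclasscard : ((inF N c T).filter (clsP N)).card = k - 1 ∧ 1 ≤ k := by
    have : k = 1 + ((inF N c T).filter (clsP N)).card := by
      rw [← hcnt, hTclassEq, Finset.card_insert_of_notMem hdnotinf]
      omega
    omega
  -- image class counts
  have houtimgclass : (((outF N c T).image (outMap (2*N) (2*N-1-c))).filter (clsP (c+1))).card
      = 0 := by
    rw [Finset.filter_image]
    have hcongr : (outF N c T).filter (fun e => clsP (c+1) (outMap (2*N) (2*N-1-c) e))
        = (outF N c T).filter (clsP N) := by
      apply Finset.filter_congr
      rintro ⟨x,y⟩ hmem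
      obtain ⟨hmemT, ⟨h1, h2⟩, h3⟩ := houtF _ hmem
      exact (iff_comm.1 (class_out hN hc1 hc2 (hTri.1 _ hmemT) h1 h2 h3))
    rw [hcongr, houtclass]
    simp
  have hinimgclass : (((inF N c T).image (inMap c)).filter (clsP (N-c))).card = k - 1 := by
    rw [Finset.filter_image]
    have hcongr : (inF N c T).filter (fun e => clsP (N-c) (inMap c e))
        = (inF N c T).filter (clsP N) := by
      apply Finset.filter_congr
      rintro ⟨x,y⟩ hmem
      obtain ⟨hmemT, ⟨h1, h2⟩, h3⟩ := hinF _ hmem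
      exact (iff_comm.1 (class_in hN hc1 hc2 (hTri.1 _ hmemT) h1 h2 h3))
    rw [hcongr, Finset.card_image_of_injOn
      (hininj.mono (Finset.coe_subset.2 (Finset.filter_subset _ _)))]
    exact hinclasscard.1
  exact ⟨mem_ESet.2 ⟨⟨houtdiag, houtnc, by rw [houtcard]; exact hcards.1⟩, houtimgclass⟩,
    mem_ESet.2 ⟨⟨hindiag, hinnc, by rw [hincard]; exact hcards.2⟩, hinimgclass⟩,
    hcover, hinclasscard.2⟩

end Fiber
end TriProof7
namespace TriProof8
open Finset TriProof TriProof2 TriProof3 TriProof4 TriProof5 TriProof6 TriProof7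
open scoped Classical

lemma outMap_cross' {m a b : ℕ} {e f : ℕ×ℕ} (hd : IsPolygonDiagonal m (a,b))
    (he : IsPolygonDiagonal m e) (hf : IsPolygonDiagonal m f)
    (h1 : e.1 ≤ a ∨ b ≤ e.1) (h2 : e.2 ≤ a ∨ b ≤ e.2)
    (h3 : f.1 ≤ a ∨ b ≤ f.1) (h4 : f.2 ≤ a ∨ b ≤ f.2) :
    DiagonalsCross (outMap m b e) (outMap m b f) ↔ DiagonalsCross e f := by
  obtain ⟨x,y⟩ := e; obtain ⟨u,w⟩ := f
  exact outMap_cross hd he hf h1 h2 h3 h4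

lemma outInv_right_inv' {m a b : ℕ} {e : ℕ×ℕ} (hd : IsPolygonDiagonal m (a,b))
    (he : IsPolygonDiagonal (m - b + a + 1) e) : outMap m b (outInv m b e) = e := by
  obtain ⟨x,y⟩ := e; exact outInv_right_inv hd he

lemma class_out' {N c : ℕ} {e : ℕ×ℕ} (hN : 2 ≤ N) (hc1 : 1 ≤ c) (hc2 : c ≤ N-2)
    (he : IsPolygonDiagonal (2*N) e)
    (h1 : e.1 ≤ c ∨ 2*N-1-c ≤ e.1) (h2 : e.2 ≤ c ∨ 2*N-1-c ≤ e.2)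
    (hne : ¬(e.1 = c ∧ e.2 = 2*N-1-c)) :
    clsP N e ↔ clsP (c+1) (outMap (2*N) (2*N-1-c) e) := by
  obtain ⟨x,y⟩ := e; exact class_out hN hc1 hc2 he h1 h2 hne

lemma class_in' {N c : ℕ} {e : ℕ×ℕ} (hN : 2 ≤ N) (hc1 : 1 ≤ c) (hc2 : c ≤ N-2)
    (he : IsPolygonDiagonal (2*N) e)
    (h1 : c ≤ e.1) (h2 : e.2 ≤ 2*N-1-c) (hne : ¬(e.1 = c ∧ e.2 = 2*N-1-c)) :
    clsP N e ↔ clsP (N-c) (inMap c e) := by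
  obtain ⟨x,y⟩ := e; exact class_in hN hc1 hc2 he h1 h2 hne

noncomputable def fglue (N c : ℕ) (p : Finset (ℕ×ℕ) × Finset (ℕ×ℕ)) : Finset (ℕ×ℕ) :=
  insert (c, 2*N-1-c) (p.1.image (outInv (2*N) (2*N-1-c)) ∪ p.2.image (inInv c))

variable {N c k : ℕ}

lemma fiber_backward (hN : 2 ≤ N) (hc1 : 1 ≤ c) (hc2 : c ≤ N-2) (hk : 1 ≤ k)
    {T1 T2 : Finset (ℕ×ℕ)} (h1 : T1 ∈ ESet (c+1) 0) (h2 : T2 ∈ ESet (N-c) (k-1)) :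
    fglue N c (T1, T2) ∈ ESet N k ∧ ((c, 2*N-1-c) ∈ fglue N c (T1, T2) ∧
      ∀ i, i < c → (i, 2*N-1-i) ∉ fglue N c (T1, T2)) ∧
    outF N c (fglue N c (T1, T2)) = T1.image (outInv (2*N) (2*N-1-c)) ∧
    inF N c (fglue N c (T1, T2)) = T2.image (inInv c) := by
  obtain ⟨⟨hd1, hn1, hcc1⟩, hcls1⟩ := mem_ESet.1 h1
  obtain ⟨⟨hd2, hn2, hcc2⟩, hcls2⟩ := mem_ESet.1 h2
  have hd : IsPolygonDiagonal (2*N) (c, 2*N-1-c) := (class_dc hN hc1 hc2).1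
  have hszo : 2*N - (2*N-1-c) + c + 1 = 2*(c+1) := by omega
  have hszi : (2*N-1-c) - c + 1 = 2*(N-c) := by omega
  have hd1' : ∀ e ∈ T1, IsPolygonDiagonal (2*N - (2*N-1-c) + c + 1) e := by
    intro e he; rw [hszo]; exact hd1 _ he
  have hd2' : ∀ e ∈ T2, IsPolygonDiagonal ((2*N-1-c) - c + 1) e := by
    intro e he; rw [hszi]; exact hd2 _ he
  have hO : ∀ e ∈ T1.image (outInv (2*N) (2*N-1-c)), IsPolygonDiagonal (2*N) e ∧
      ((e.1 ≤ c ∨ 2*N-1-c ≤ e.1) ∧ (e.2 ≤ c ∨ 2*N-1-c ≤ e.2)) ∧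
      ¬(e.1 = c ∧ e.2 = 2*N-1-c) := by
    intro e he
    obtain ⟨⟨x,y⟩, hx, rfl⟩ := Finset.mem_image.1 he
    obtain ⟨s1, s2, s3, s4⟩ := outInv_spec hd (hd1' _ hx)
    exact ⟨s1, ⟨s2, s3⟩, s4⟩
  have hI : ∀ e ∈ T2.image (inInv c), IsPolygonDiagonal (2*N) e ∧
      (c ≤ e.1 ∧ e.2 ≤ 2*N-1-c) ∧ ¬(e.1 = c ∧ e.2 = 2*N-1-c) := by
    intro e he
    obtain ⟨⟨x,y⟩, hx, rfl⟩ := Finset.mem_image.1 he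
    obtain ⟨s1, s2, s3, s4⟩ := inInv_spec hd (hd2' _ hx)
    exact ⟨s1, ⟨s2, s3⟩, s4⟩
  have hmemg : ∀ e, e ∈ fglue N c (T1, T2) ↔
      (e = (c, 2*N-1-c) ∨ e ∈ T1.image (outInv (2*N) (2*N-1-c)) ∨ e ∈ T2.image (inInv c)) := by
    intro e; simp [fglue, Finset.mem_insert, Finset.mem_union, or_assoc]
  -- diagonal property
  have hdiag : ∀ e ∈ fglue N c (T1, T2), IsPolygonDiagonal (2*N) e := by
    intro e he
    rcases (hmemg e).1 he with rfl | h | h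
    · exact hd
    · exact (hO _ h).1
    · exact (hI _ h).1
  -- noncrossing
  have hnc : ∀ e ∈ fglue N c (T1, T2), ∀ f ∈ fglue N c (T1, T2), ¬ DiagonalsCross e f := by
    intro e he f hf
    rcases (hmemg e).1 he with rfl | h | h <;> rcases (hmemg f).1 hf with rfl | h' | h'
    · simp only [DiagonalsCross]; omega
    · obtain ⟨-, ⟨r1, r2⟩, -⟩ := hO _ h'
      rw [cross_symm]
      obtain ⟨u, w⟩ := f
      exact d_nc_out r1 r2
    · obtain ⟨-, ⟨r1, r2⟩, -⟩ := hI _ h'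
      rw [cross_symm]
      obtain ⟨u, w⟩ := f
      exact d_nc_in r1 r2
    · obtain ⟨-, ⟨r1, r2⟩, -⟩ := hO _ h
      obtain ⟨u, w⟩ := e
      exact d_nc_out r1 r2
    · -- O vs O
      obtain ⟨⟨x,y⟩, hx, rfl⟩ := Finset.mem_image.1 h
      obtain ⟨⟨u,w⟩, hu, rfl⟩ := Finset.mem_image.1 h'
      obtain ⟨sx1, ⟨sx2, sx3⟩, -⟩ := hO _ h
      obtain ⟨su1, ⟨su2, su3⟩, -⟩ := hO _ h'
      have hcr := outMap_cross' hd sx1 su1 sx2 sx3 su2 su3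
      rw [outInv_right_inv' hd (hd1' _ hx), outInv_right_inv' hd (hd1' _ hu)] at hcr
      exact fun hcc => hn1 _ hx _ hu (hcr.2 hcc)
    · -- O vs I
      obtain ⟨-, ⟨r1, r2⟩, -⟩ := hO _ h
      obtain ⟨-, ⟨s1, s2⟩, -⟩ := hI _ h'
      rw [cross_symm]
      obtain ⟨x, y⟩ := f
      obtain ⟨u, w⟩ := e
      exact mixed_nc s1 s2 r1 r2
    · obtain ⟨-, ⟨r1, r2⟩, -⟩ := hI _ h
      obtain ⟨x, y⟩ := e
      exact d_nc_in r1 r2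
    · -- I vs O
      obtain ⟨-, ⟨r1, r2⟩, -⟩ := hI _ h
      obtain ⟨-, ⟨s1, s2⟩, -⟩ := hO _ h'
      obtain ⟨x, y⟩ := e
      obtain ⟨u, w⟩ := f
      exact mixed_nc r1 r2 s1 s2
    · -- I vs I
      obtain ⟨⟨x,y⟩, hx, rfl⟩ := Finset.mem_image.1 h
      obtain ⟨⟨u,w⟩, hu, rfl⟩ := Finset.mem_image.1 h'
      exact fun hcc => hn2 _ hx _ hu (inInv_cross.1 hcc)
  -- disjointness and cardinality
  have hdnotin : (c, 2*N-1-c) ∉ T1.image (outInv (2*N) (2*N-1-c)) ∪ T2.image (inInv c) := by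
    intro h
    rcases Finset.mem_union.1 h with h | h
    · exact (hO _ h).2.2 ⟨rfl, rfl⟩
    · exact (hI _ h).2.2 ⟨rfl, rfl⟩
  have hdisjOI : Disjoint (T1.image (outInv (2*N) (2*N-1-c))) (T2.image (inInv c)) := by
    rw [Finset.disjoint_left]
    intro e he hf
    obtain ⟨⟨o1, -, -, -⟩, ⟨r1, r2⟩, rne⟩ := hO _ he
    obtain ⟨-, ⟨s1, s2⟩, -⟩ := hI _ hf
    omega
  have hOinj : Set.InjOn (outInv (2*N) (2*N-1-c)) ↑T1 := by
    intro e he f hf hef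
    have h1' := outInv_right_inv' hd (hd1' _ (by simpa using he))
    have h2' := outInv_right_inv' hd (hd1' _ (by simpa using hf))
    rw [← h1', ← h2', hef]
  have hIinj : Function.Injective (inInv c) := by
    rintro ⟨x,y⟩ ⟨u,w⟩ h
    simp only [inInv, Prod.mk.injEq] at h ⊢
    omega
  have hcard : (fglue N c (T1, T2)).card = 2*N - 3 := by
    rw [fglue]
    rw [Finset.card_insert_of_notMem hdnotin, Finset.card_union_of_disjoint hdisjOI,
      Finset.card_image_of_injOn hOinj, Finset.card_image_of_injective _ hIinj, hcc1, hcc2]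
    omega
  -- class count
  have hOclassfree : ∀ e ∈ T1.image (outInv (2*N) (2*N-1-c)), ¬ clsP N e := by
    intro e he hcls
    obtain ⟨⟨x,y⟩, hx, rfl⟩ := Finset.mem_image.1 he
    obtain ⟨s1, ⟨s2, s3⟩, s4⟩ := hO _ he
    have hiff := class_out' hN hc1 hc2 s1 s2 s3 s4
    rw [outInv_right_inv' hd (hd1' _ hx)] at hiff
    have : (x,y) ∈ T1.filter (clsP (c+1)) := Finset.mem_filter.2 ⟨hx, hiff.1 hcls⟩
    rw [Finset.card_eq_zero.1 hcls1] at this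
    exact absurd this (Finset.notMem_empty _)
  have hclasseq : (fglue N c (T1, T2)).filter (clsP N) =
      insert (c, 2*N-1-c) ((T2.image (inInv c)).filter (clsP N)) := by
    ext e
    rw [Finset.mem_filter, Finset.mem_insert, Finset.mem_filter]
    constructor
    · rintro ⟨hmem, hcls⟩
      rcases (hmemg e).1 hmem with rfl | h | h
      · exact Or.inl rfl
      · exact absurd hcls (hOclassfree _ h)
      · exact Or.inr ⟨h, hcls⟩
    · rintro (rfl | ⟨h, hcls⟩)
      · exact ⟨(hmemg _).2 (Or.inl rfl), (class_dc hN hc1 hc2).2⟩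
      · exact ⟨(hmemg _).2 (Or.inr (Or.inr h)), hcls⟩
  have hIclasscard : ((T2.image (inInv c)).filter (clsP N)).card = k - 1 := by
    rw [Finset.filter_image]
    have hcongr : T2.filter (fun e => clsP N (inInv c e)) = T2.filter (clsP (N-c)) := by
      apply Finset.filter_congr
      rintro ⟨x,y⟩ he
      obtain ⟨s1, s2, s3, s4⟩ := inInv_spec hd (hd2' _ he)
      have hiff := class_in' hN hc1 hc2 s1 s2 s3 s4
      rw [inMap_right_inv] at hiff
      exact hiff
    rw [hcongr, Finset.card_image_of_injective _ hIinj]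
    exact hcls2
  have hclscard : ((fglue N c (T1, T2)).filter (clsP N)).card = k := by
    rw [hclasseq, Finset.card_insert_of_notMem, hIclasscard]
    · omega
    · intro h
      exact (hI _ (Finset.mem_filter.1 h).1).2.2 ⟨rfl, rfl⟩
  -- the min condition
  have hming : ∀ i, i < c → (i, 2*N-1-i) ∉ fglue N c (T1, T2) := by
    intro i hi hmem
    rcases (hmemg _).1 hmem with heq | h | h
    · simp only [Prod.mk.injEq] at heq; omega
    · have hdiagi := (hO _ h).1
      obtain ⟨a1, a2, a3, a4⟩ := hdiagi
      simp only at a1 a2 a3 a4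
      have hi1 : 1 ≤ i := by omega
      have hi2 : i ≤ N - 2 := by omega
      exact hOclassfree _ h (class_dc hN hi1 hi2).2
    · obtain ⟨-, ⟨s1, -⟩, -⟩ := hI _ h
      simp only at s1
      omega
  -- component identifications
  have houtFg : outF N c (fglue N c (T1, T2)) = T1.image (outInv (2*N) (2*N-1-c)) := by
    ext e
    rw [outF, Finset.mem_filter]
    constructor
    · rintro ⟨hmem, ⟨r1, r2⟩, rne⟩
      rcases (hmemg _).1 hmem with rfl | h | h
      · exact absurd ⟨rfl, rfl⟩ rne
      · exact h
      · exfalso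
        obtain ⟨⟨o1, -, -, -⟩, ⟨s1, s2⟩, sne⟩ := hI _ h
        omega
    · intro h
      obtain ⟨-, ⟨r1, r2⟩, rne⟩ := hO _ h
      exact ⟨(hmemg _).2 (Or.inr (Or.inl h)), ⟨r1, r2⟩, rne⟩
  have hinFg : inF N c (fglue N c (T1, T2)) = T2.image (inInv c) := by
    ext e
    rw [inF, Finset.mem_filter]
    constructor
    · rintro ⟨hmem, ⟨r1, r2⟩, rne⟩
      rcases (hmemg _).1 hmem with rfl | h | h
      · exact absurd ⟨rfl, rfl⟩ rne
      · exfalso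
        obtain ⟨⟨o1, -, -, -⟩, ⟨s1, s2⟩, sne⟩ := hO _ h
        omega
      · exact h
    · intro h
      obtain ⟨-, ⟨r1, r2⟩, rne⟩ := hI _ h
      exact ⟨(hmemg _).2 (Or.inr (Or.inr h)), ⟨r1, r2⟩, rne⟩
  exact ⟨mem_ESet.2 ⟨⟨hdiag, hnc, hcard⟩, hclscard⟩,
    ⟨(hmemg _).2 (Or.inl rfl), hming⟩, houtFg, hinFg⟩

end TriProof8
namespace TriProof9
open Finset TriProof TriProof2 TriProof3 TriProof4 TriProof5 TriProof6 TriProof7 TriProof8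
open scoped Classical

variable {N c k : ℕ}

lemma fiber_card (hN : 2 ≤ N) (hc1 : 1 ≤ c) (hc2 : c ≤ N-2) (hk : 1 ≤ k) :
    ((ESet N k).filter (fun T => (c, 2*N-1-c) ∈ T ∧ ∀ i, i < c → (i, 2*N-1-i) ∉ T)).card =
      (ESet (c+1) 0).card * (ESet (N-c) (k-1)).card := by
  rw [← Finset.card_product]
  apply Finset.card_nbij'
    (i := fun T => ((outF N c T).image (outMap (2*N) (2*N-1-c)), (inF N c T).image (inMap c)))
    (j := fun p => fglue N c p)
  all_goals simp only [Set.MapsTo, Set.LeftInvOn, Set.RightInvOn, Finset.mem_coe]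
  · intro T hT
    rw [Finset.mem_filter] at hT
    obtain ⟨hE, hdc, hmin⟩ := hT
    obtain ⟨hOmem, hImem, -, -⟩ := fiber_forward hN hc1 hc2 hE hdc hmin
    exact Finset.mem_product.2 ⟨hOmem, hImem⟩
  · rintro ⟨T1, T2⟩ hp
    rw [Finset.mem_product] at hp
    obtain ⟨hg, hfib, -, -⟩ := fiber_backward hN hc1 hc2 hk hp.1 hp.2
    exact Finset.mem_filter.2 ⟨hg, hfib⟩
  · intro T hT
    rw [Finset.mem_filter] at hT
    obtain ⟨hE, hdc, hmin⟩ := hT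
    obtain ⟨-, -, hcover, -⟩ := fiber_forward hN hc1 hc2 hE hdc hmin
    have hTri := (mem_ESet.1 hE).1
    have hd : IsPolygonDiagonal (2*N) (c, 2*N-1-c) := (class_dc hN hc1 hc2).1
    have hOcol : ((outF N c T).image (outMap (2*N) (2*N-1-c))).image (outInv (2*N) (2*N-1-c))
        = outF N c T := by
      rw [Finset.image_image]
      have he : ∀ e ∈ outF N c T, (outInv (2*N) (2*N-1-c) ∘ outMap (2*N) (2*N-1-c)) e = e := by
        rintro ⟨x,y⟩ he
        rw [outF, Finset.mem_filter] at he
        obtain ⟨hmem, ⟨r1, r2⟩, rne⟩ := he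
        exact outInv_left_inv hd (hTri.1 _ hmem) r1 r2 rne
      rw [Finset.image_congr he, Finset.image_id']
    have hIcol : ((inF N c T).image (inMap c)).image (inInv c) = inF N c T := by
      rw [Finset.image_image]
      have he : ∀ e ∈ inF N c T, (inInv c ∘ inMap c) e = e := by
        rintro ⟨x,y⟩ he
        rw [inF, Finset.mem_filter] at he
        obtain ⟨hmem, ⟨r1, r2⟩, rne⟩ := he
        obtain ⟨a1, -, -, -⟩ := hTri.1 _ hmem
        exact inMap_left_inv r1 (le_of_lt a1)
      rw [Finset.image_congr he, Finset.image_id']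
    show insert (c, 2*N-1-c)
      ((((outF N c T).image (outMap (2*N) (2*N-1-c))).image (outInv (2*N) (2*N-1-c))) ∪
        (((inF N c T).image (inMap c)).image (inInv c))) = T
    rw [hOcol, hIcol]
    exact hcover.symm
  · rintro ⟨T1, T2⟩ hp
    rw [Finset.mem_product] at hp
    obtain ⟨hg, -, houtFg, hinFg⟩ := fiber_backward hN hc1 hc2 hk hp.1 hp.2
    have hd : IsPolygonDiagonal (2*N) (c, 2*N-1-c) := (class_dc hN hc1 hc2).1
    obtain ⟨⟨hd1, -, -⟩, -⟩ := mem_ESet.1 hp.1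
    have hd1' : ∀ e ∈ T1, IsPolygonDiagonal (2*N - (2*N-1-c) + c + 1) e := by
      intro e he
      rw [show 2*N - (2*N-1-c) + c + 1 = 2*(c+1) by omega]
      exact hd1 _ he
    have hOcol : (T1.image (outInv (2*N) (2*N-1-c))).image (outMap (2*N) (2*N-1-c)) = T1 := by
      rw [Finset.image_image]
      have he : ∀ e ∈ T1, (outMap (2*N) (2*N-1-c) ∘ outInv (2*N) (2*N-1-c)) e = e := by
        intro e he
        exact outInv_right_inv' hd (hd1' _ he)
      rw [Finset.image_congr he, Finset.image_id']
    have hIcol : (T2.image (inInv c)).image (inMap c) = T2 := by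
      rw [Finset.image_image]
      have he : ∀ e ∈ T2, (inMap c ∘ inInv c) e = e := by
        rintro ⟨x,y⟩ he
        exact inMap_right_inv
      rw [Finset.image_congr he, Finset.image_id']
    simp only [houtFg, hinFg]
    rw [hOcol, hIcol]

lemma exists_min_class (hN : 2 ≤ N) (hk : 1 ≤ k) {T : Finset (ℕ×ℕ)} (hT : T ∈ ESet N k) :
    ∃ c, (1 ≤ c ∧ c ≤ N-2) ∧ (c, 2*N-1-c) ∈ T ∧ ∀ i, i < c → (i, 2*N-1-i) ∉ T := by
  obtain ⟨hTri, hcnt⟩ := mem_ESet.1 hT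
  have hne : (T.filter (clsP N)).Nonempty := by
    rw [← Finset.card_pos, hcnt]; omega
  obtain ⟨⟨x,y⟩, hxy⟩ := hne
  rw [Finset.mem_filter] at hxy
  obtain ⟨s1, s2, s3, s4⟩ := class_shape hN (hTri.1 _ hxy.1) hxy.2
  have hex : ∃ i, (i, 2*N-1-i) ∈ T := ⟨x, by rw [← s4]; exact hxy.1⟩
  have hspec : (Nat.find hex, 2*N-1-(Nat.find hex)) ∈ T := Nat.find_spec hex
  have hmin : ∀ i, i < Nat.find hex → (i, 2*N-1-i) ∉ T := fun i hi => Nat.find_min hex hi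
  obtain ⟨a1, a2, a3, a4⟩ := hTri.1 _ hspec
  simp only at a1 a2 a3 a4
  exact ⟨Nat.find hex, ⟨by omega, by omega⟩, hspec, hmin⟩

lemma step (hN : 2 ≤ N) (hk : 1 ≤ k) :
    (ESet N k).card = ∑ c ∈ Finset.Icc 1 (N-2),
      (ESet (c+1) 0).card * (ESet (N-c) (k-1)).card := by
  have hpart : ESet N k = (Finset.Icc 1 (N-2)).biUnion (fun c => (ESet N k).filter
      (fun T => (c, 2*N-1-c) ∈ T ∧ ∀ i, i < c → (i, 2*N-1-i) ∉ T)) := by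
    apply Finset.Subset.antisymm
    · intro T hT
      obtain ⟨c, hcb, h1, h2⟩ := exists_min_class hN hk hT
      exact Finset.mem_biUnion.2 ⟨c, Finset.mem_Icc.2 hcb, Finset.mem_filter.2 ⟨hT, h1, h2⟩⟩
    · intro T hT
      obtain ⟨c, -, hT'⟩ := Finset.mem_biUnion.1 hT
      exact (Finset.mem_filter.1 hT').1
  rw [hpart, Finset.card_biUnion]
  · apply Finset.sum_congr rfl
    intro c hc
    rw [Finset.mem_Icc] at hc
    exact fiber_card hN hc.1 hc.2 hk
  · intro c hc c' hc' hne
    rw [Function.onFun, Finset.disjoint_left]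
    intro T hT hT'
    rw [Finset.mem_filter] at hT hT'
    rcases Nat.lt_or_ge c c' with h | h
    · exact hT'.2.2 c h hT.2.1
    · exact hT.2.2 c' (by omega) hT'.2.1

end TriProof9
namespace TriProof10
open Finset TriProof TriProof2 TriProof3 TriProof4 TriProof5 TriProof6 TriProof7 TriProof8 TriProof9
open scoped Classical

variable {N k : ℕ}

lemma class_card_le (hN : 2 ≤ N) {T : Finset (ℕ×ℕ)} (hT : IsTriangulation (2*N) T) :
    (T.filter (clsP N)).card ≤ N - 2 := by
  have hsub : T.filter (clsP N) ⊆ (Finset.Icc 1 (N-2)).image (fun c => (c, 2*N-1-c)) := by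
    rintro ⟨x,y⟩ he
    rw [Finset.mem_filter] at he
    obtain ⟨s1, s2, s3, s4⟩ := class_shape hN (hT.1 _ he.1) he.2
    rw [Finset.mem_image]
    exact ⟨x, Finset.mem_Icc.2 ⟨s2, s3⟩, by rw [← s4]⟩
  calc (T.filter (clsP N)).card
      ≤ ((Finset.Icc 1 (N-2)).image (fun c => (c, 2*N-1-c))).card := Finset.card_le_card hsub
    _ ≤ (Finset.Icc 1 (N-2)).card := Finset.card_image_le
    _ = N - 2 := by rw [Nat.card_Icc]; omega

lemma Evanish (hN : 2 ≤ N) (hk : N - 1 ≤ k) : (ESet N k).card = 0 := by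
  rw [Finset.card_eq_zero, Finset.eq_empty_iff_forall_notMem]
  intro T hT
  obtain ⟨hTri, hcnt⟩ := mem_ESet.1 hT
  have := class_card_le hN hTri
  omega

lemma tot_eq (hN : 2 ≤ N) :
    (triSet (2*N)).card = ∑ k ∈ Finset.range (N-1), (ESet N k).card := by
  have hpart : triSet (2*N) = (Finset.range (N-1)).biUnion (fun k => ESet N k) := by
    apply Finset.Subset.antisymm
    · intro T hT
      refine Finset.mem_biUnion.2 ⟨(T.filter (clsP N)).card, ?_, ?_⟩
      · rw [Finset.mem_range]
        have := class_card_le hN (mem_triSet.1 hT)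
        omega
      · exact mem_ESet.2 ⟨mem_triSet.1 hT, rfl⟩
    · intro T hT
      obtain ⟨k, -, hT'⟩ := Finset.mem_biUnion.1 hT
      exact (Finset.mem_filter.1 hT').1
  rw [hpart, Finset.card_biUnion]
  intro a ha b hb hne
  rw [Function.onFun, Finset.disjoint_left]
  intro T hT hT'
  exact hne ((mem_ESet.1 hT).2 ▸ (mem_ESet.1 hT').2 ▸ rfl)

/-- parity-split Catalan identity -/
lemma catalan_parity (i : ℕ) (hi : 1 ≤ i) :
    catalan (2*i) = 2 * ∑ j ∈ Finset.Icc 1 i, catalan (2*j-1) * catalan (2*i-2*j) := by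
  have h2i : 2*i = (2*i-1) + 1 := by omega
  rw [h2i, catalan_succ']
  have hsplit := Finset.sum_filter_add_sum_filter_not (Finset.HasAntidiagonal.antidiagonal (2*i-1))
    (fun p => p.1 % 2 = 1) (fun p => catalan p.1 * catalan p.2)
  rw [← hsplit]
  have hswap : ∑ p ∈ (Finset.HasAntidiagonal.antidiagonal (2*i-1)).filter (fun p => ¬ p.1 % 2 = 1),
      catalan p.1 * catalan p.2
      = ∑ p ∈ (Finset.HasAntidiagonal.antidiagonal (2*i-1)).filter (fun p => p.1 % 2 = 1),
      catalan p.1 * catalan p.2 := by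
    refine Finset.sum_nbij' (i := fun p => (p.2, p.1)) (j := fun p => (p.2, p.1)) ?_ ?_ ?_ ?_ ?_
    · rintro ⟨p1, p2⟩ hp
      simp only [Finset.mem_filter, Finset.HasAntidiagonal.mem_antidiagonal] at hp ⊢
      omega
    · rintro ⟨p1, p2⟩ hp
      simp only [Finset.mem_filter, Finset.HasAntidiagonal.mem_antidiagonal] at hp ⊢
      omega
    · rintro ⟨p1, p2⟩ hp; rfl
    · rintro ⟨p1, p2⟩ hp; rfl
    · rintro ⟨p1, p2⟩ hp
      simp only
      ring
  rw [hswap, ← two_mul]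
  congr 1
  refine Finset.sum_nbij' (i := fun p => (p.1+1)/2) (j := fun j => (2*j-1, 2*i-2*j)) ?_ ?_ ?_ ?_ ?_
  · rintro ⟨p1, p2⟩ hp
    simp only [Finset.mem_filter, Finset.HasAntidiagonal.mem_antidiagonal] at hp
    simp only [Finset.mem_Icc]
    omega
  · intro j hj
    rw [Finset.mem_Icc] at hj
    simp only [Finset.mem_filter, Finset.HasAntidiagonal.mem_antidiagonal]
    omega
  · rintro ⟨p1, p2⟩ hp
    simp only [Finset.mem_filter, Finset.HasAntidiagonal.mem_antidiagonal] at hp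
    simp only [Prod.mk.injEq]
    omega
  · intro j hj
    rw [Finset.mem_Icc] at hj
    simp only
    omega
  · rintro ⟨p1, p2⟩ hp
    simp only [Finset.mem_filter, Finset.HasAntidiagonal.mem_antidiagonal] at hp
    simp only
    have h1 : 2*((p1+1)/2)-1 = p1 := by omega
    have h2 : 2*i-1+1-2*((p1+1)/2) = p2 := by omega
    rw [h1, h2]

lemma A_val : ∀ i, 1 ≤ i → (ESet (i+1) 0).card = 2 * catalan (2*i-1) := by
  intro i
  induction i using Nat.strong_induction_on with
  | _ i IH =>
    intro hi
    have hN : 2 ≤ i + 1 := by omega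
    have htot : catalan (2*i) = ∑ k ∈ Finset.range i, (ESet (i+1) k).card := by
      have h := tot_eq hN
      rw [triSet_card (2*(i+1)) (by omega)] at h
      have h2 : 2*(i+1) - 2 = 2*i := by omega
      rw [h2] at h
      have h3 : i + 1 - 1 = i := by omega
      rw [h3] at h
      exact h
    -- split off k = 0 and apply the step lemma for k ≥ 1
    have hsplit : ∑ k ∈ Finset.range i, (ESet (i+1) k).card
        = (ESet (i+1) 0).card + ∑ k ∈ Finset.Icc 1 (i-1), (ESet (i+1) k).card := by
      have : Finset.range i = insert 0 (Finset.Icc 1 (i-1)) := by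
        ext x
        simp only [Finset.mem_range, Finset.mem_insert, Finset.mem_Icc]
        omega
      rw [this, Finset.sum_insert (by simp)]
    have hstepk : ∀ k ∈ Finset.Icc 1 (i-1), (ESet (i+1) k).card
        = ∑ c ∈ Finset.Icc 1 (i-1), (ESet (c+1) 0).card * (ESet (i+1-c) (k-1)).card := by
      intro k hk
      rw [Finset.mem_Icc] at hk
      have h := step hN hk.1
      have h2 : i + 1 - 2 = i - 1 := by omega
      rw [h2] at h
      exact h
    have hinner : ∑ k ∈ Finset.Icc 1 (i-1), (ESet (i+1) k).card
        = ∑ c ∈ Finset.Icc 1 (i-1), (ESet (c+1) 0).card * catalan (2*(i-c)) := by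
      rw [Finset.sum_congr rfl hstepk, Finset.sum_comm]
      apply Finset.sum_congr rfl
      intro c hc
      rw [Finset.mem_Icc] at hc
      rw [← Finset.mul_sum]
      congr 1
      -- ∑ k ∈ Icc 1 (i-1), (ESet (i+1-c) (k-1)).card = catalan (2*(i-c))
      have hNc : 2 ≤ i + 1 - c := by omega
      have htot' : (triSet (2*(i+1-c))).card = ∑ k ∈ Finset.range (i-c), (ESet (i+1-c) k).card := by
        have h := tot_eq hNc
        have h2 : i + 1 - c - 1 = i - c := by omega
        rw [h2] at h
        exact h
      have hcat : (triSet (2*(i+1-c))).card = catalan (2*(i-c)) := by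
        rw [triSet_card (2*(i+1-c)) (by omega)]
        congr 1
        omega
      rw [← hcat, htot']
      -- reindex k ∈ Icc 1 (i-1) ↦ k-1 ∈ range (i-1), then drop vanishing terms
      have hre : ∑ k ∈ Finset.Icc 1 (i-1), (ESet (i+1-c) (k-1)).card
          = ∑ k ∈ Finset.range (i-1), (ESet (i+1-c) k).card := by
        refine Finset.sum_nbij' (i := fun k => k - 1) (j := fun k => k + 1) ?_ ?_ ?_ ?_ ?_
        · intro a ha; rw [Finset.mem_Icc] at ha
          show a - 1 ∈ Finset.range (i-1); rw [Finset.mem_range]; omega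
        · intro a ha; rw [Finset.mem_range] at ha
          show a + 1 ∈ Finset.Icc 1 (i-1); rw [Finset.mem_Icc]; omega
        · intro a ha; rw [Finset.mem_Icc] at ha; show a - 1 + 1 = a; omega
        · intro a ha; show a + 1 - 1 = a; omega
        · intro a ha; rfl
      rw [hre]
      refine (Finset.sum_subset (Finset.range_subset_range.2 (by omega)) ?_).symm
      intro x hx hx'
      rw [Finset.mem_range] at hx
      rw [Finset.mem_range, not_lt] at hx'
      exact Evanish hNc (by omega)
    -- assemble
    have hIH : ∑ c ∈ Finset.Icc 1 (i-1), (ESet (c+1) 0).card * catalan (2*(i-c))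
        = ∑ c ∈ Finset.Icc 1 (i-1), (2 * catalan (2*c-1)) * catalan (2*(i-c)) := by
      apply Finset.sum_congr rfl
      intro c hc
      rw [Finset.mem_Icc] at hc
      rw [IH c (by omega) hc.1]
    have hpar := catalan_parity i hi
    have hIccsplit : Finset.Icc 1 i = insert i (Finset.Icc 1 (i-1)) := by
      ext x
      simp only [Finset.mem_Icc, Finset.mem_insert]
      omega
    have hnotin : i ∉ Finset.Icc 1 (i-1) := by
      rw [Finset.mem_Icc]; omega
    rw [hIccsplit, Finset.sum_insert hnotin] at hpar
    have hterm : catalan (2*i-1) * catalan (2*i-2*i) = catalan (2*i-1) := by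
      have : 2*i-2*i = 0 := by omega
      rw [this, catalan_zero, mul_one]
    rw [hterm, Nat.mul_add] at hpar
    have hdist : 2 * ∑ j ∈ Finset.Icc 1 (i-1), catalan (2*j-1) * catalan (2*i-2*j)
        = ∑ c ∈ Finset.Icc 1 (i-1), (2 * catalan (2*c-1)) * catalan (2*(i-c)) := by
      rw [Finset.mul_sum]
      apply Finset.sum_congr rfl
      intro c hc
      rw [Finset.mem_Icc] at hc
      have : 2*i-2*c = 2*(i-c) := by omega
      rw [this]
      ring
    rw [hdist] at hpar
    -- catalan (2i) = E0 + S  and  catalan (2i) = 2*catalan(2i-1) + S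
    rw [hsplit, hinner, hIH] at htot
    omega

end TriProof10
namespace TriProof11
open Finset TriProof TriProof7
open scoped Classical

/-- the tail of a composition, as a composition -/
def tailComp {M : ℕ} (c : Composition M) : Composition (M - c.blocks.headI) where
  blocks := c.blocks.tail
  blocks_pos := fun hi => c.blocks_pos (List.mem_of_mem_tail hi)
  blocks_sum := by
    have hs := c.blocks_sum
    rcases hb : c.blocks with _ | ⟨b, bs⟩
    · rw [hb] at hs; simp at hs; simp [hs.symm]
    · rw [hb] at hs; simp only [List.sum_cons] at hs; simp [List.tail_cons]; omega

lemma comp_decomp (M K : ℕ) (hM : 1 ≤ M) (hK : 1 ≤ K) (f : ℕ → ℕ) :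
    ∑ c ∈ Finset.univ.filter (fun c : Composition M => c.length = K + 1),
      (c.blocks.map f).prod
    = ∑ j ∈ Finset.Icc 1 (M-1), f j *
        ∑ c ∈ Finset.univ.filter (fun c : Composition (M - j) => c.length = K),
          (c.blocks.map f).prod := by
  have hrw : ∀ j ∈ Finset.Icc 1 (M-1), f j *
      ∑ c ∈ Finset.univ.filter (fun c : Composition (M - j) => c.length = K),
        (c.blocks.map f).prod
      = ∑ c ∈ Finset.univ.filter (fun c : Composition (M - j) => c.length = K),
        f j * (c.blocks.map f).prod := by
    intro j hj; rw [Finset.mul_sum]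
  rw [Finset.sum_congr rfl hrw, Finset.sum_sigma' (Finset.Icc 1 (M-1))
    (fun j => Finset.univ.filter (fun c : Composition (M - j) => c.length = K))
    (fun j c => f j * (c.blocks.map f).prod)]
  refine (Finset.sum_bij'
    (i := fun (p : Σ j : ℕ, Composition (M - j)) (hp : p ∈ _) =>
      (⟨p.1 :: p.2.blocks, ?_, ?_⟩ : Composition M))
    (j := fun c _ => ⟨c.blocks.headI, tailComp c⟩) ?_ ?_ ?_ ?_ ?_).symm
  · -- blocks_pos
    intro b hb
    simp only [Finset.mem_sigma, Finset.mem_Icc, Finset.mem_filter] at hp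
    rcases List.mem_cons.1 hb with rfl | hb'
    · omega
    · exact p.2.blocks_pos hb'
  · -- blocks_sum
    simp only [Finset.mem_sigma, Finset.mem_Icc, Finset.mem_filter] at hp
    simp only [List.sum_cons, p.2.blocks_sum]
    omega
  · -- hi : maps into the filter
    rintro ⟨j, c⟩ hp
    simp only [Finset.mem_sigma, Finset.mem_Icc, Finset.mem_filter] at hp
    simp only [Finset.mem_filter, Finset.mem_univ, true_and]
    show (j :: c.blocks).length = K + 1
    have := c.blocks_length
    simp only [List.length_cons]
    omega
  · -- hj : maps back into the sigma set
    intro c hc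
    simp only [Finset.mem_filter, Finset.mem_univ, true_and] at hc
    have hlen := c.blocks_length
    rw [hc] at hlen
    obtain ⟨l, hb⟩ : ∃ l, c.blocks = l := ⟨_, rfl⟩
    rcases l with _ | ⟨b, bs⟩
    · rw [hb] at hlen; simp at hlen
    · have hbpos : 0 < b := c.blocks_pos (by rw [hb]; exact List.mem_cons_self)
      have hbs : bs ≠ [] := by
        intro h
        rw [hb, h] at hlen
        simp at hlen
        omega
      have hbs_sum : 1 ≤ bs.sum := by
        rcases hb' : bs with _ | ⟨b', bs'⟩
        · exact absurd hb' hbs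
        · have : 0 < b' := c.blocks_pos (by rw [hb, hb']; simp)
          simp only [List.sum_cons]
          omega
      have hsum := c.blocks_sum
      rw [hb] at hsum
      simp only [List.sum_cons] at hsum
      simp only [Finset.mem_sigma, Finset.mem_Icc, Finset.mem_filter, Finset.mem_univ, true_and]
      constructor
      · rw [hb]
        simp only [List.headI]
        omega
      · show (tailComp c).blocks.length = K
        simp only [tailComp, hb, List.tail_cons]
        rw [hb] at hlen
        simp only [List.length_cons] at hlen
        omega
  · -- left inverse
    rintro ⟨j, c⟩ hp
    rfl
  · -- right inverse
    intro c hc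
    ext1
    simp only [tailComp]
    rcases hb : c.blocks with _ | ⟨b, bs⟩
    · simp only [Finset.mem_filter, Finset.mem_univ, true_and] at hc
      have hlen := c.blocks_length
      rw [hc, hb] at hlen
      simp at hlen
    · simp [hb]
  · -- values agree
    rintro ⟨j, c⟩ hp
    simp only [List.map_cons, List.prod_cons]

end TriProof11
namespace TriProof12
open Finset TriProof TriProof2 TriProof5 TriProof6 TriProof7 TriProof9 TriProof10 TriProof11
open scoped Classical

lemma master : ∀ k N, 2 ≤ N → (ESet N k).card =
    ∑ c ∈ Finset.univ.filter (fun c : Composition (N-1) => c.length = k + 1),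
      (c.blocks.map (fun i => (ESet (i+1) 0).card)).prod := by
  intro k
  induction k with
  | zero =>
    intro N hN
    have h0 : 0 < N - 1 := by omega
    have hset : Finset.univ.filter (fun c : Composition (N-1) => c.length = 0 + 1)
        = {Composition.single (N-1) h0} := by
      ext c
      simp only [Finset.mem_filter, Finset.mem_univ, true_and, Finset.mem_singleton,
        Nat.zero_add]
      exact (Composition.eq_single_iff_length h0).symm
    rw [hset, Finset.sum_singleton, Composition.single_blocks]
    simp only [List.map_cons, List.map_nil, List.prod_cons, List.prod_nil, mul_one]
    have h1 : N - 1 + 1 = N := by omega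
    rw [h1]
  | succ k IHk =>
    intro N hN
    have hstep := step hN (show 1 ≤ k + 1 by omega)
    simp only [Nat.add_sub_cancel] at hstep
    rw [hstep]
    have hdec := comp_decomp (N-1) (k+1) (by omega) (by omega)
      (fun i => (ESet (i+1) 0).card)
    rw [show N - 1 - 1 = N - 2 from by omega] at hdec
    rw [hdec]
    apply Finset.sum_congr rfl
    intro j hj
    rw [Finset.mem_Icc] at hj
    congr 1
    have h := IHk (N-j) (by omega)
    rw [show N - j - 1 = N - 1 - j from by omega] at h
    exact h

/-- reflection of the polygon fixing the edge {0,1} -/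
def rmap (m : ℕ) (e : ℕ×ℕ) : ℕ×ℕ := if e.1 = 0 then (0, m - e.2) else (m - e.2, m - e.1)

lemma rmap_diag {m x y : ℕ} (hm : 4 ≤ m) (he : IsPolygonDiagonal m (x,y)) :
    IsPolygonDiagonal m (rmap m (x,y)) := by
  simp only [IsPolygonDiagonal, rmap] at *
  split_ifs <;> simp only [] <;> omega

lemma rmap_invol {m x y : ℕ} (hm : 4 ≤ m) (he : IsPolygonDiagonal m (x,y)) :
    rmap m (rmap m (x,y)) = (x,y) := by
  simp only [IsPolygonDiagonal] at he
  simp only [rmap]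
  split_ifs <;> simp only [Prod.mk.injEq] <;> omega

lemma rmap_cross {m x y u w : ℕ} (he : IsPolygonDiagonal m (x,y))
    (hf : IsPolygonDiagonal m (u,w)) :
    DiagonalsCross (rmap m (x,y)) (rmap m (u,w)) ↔ DiagonalsCross (x,y) (u,w) := by
  simp only [IsPolygonDiagonal, DiagonalsCross, rmap] at *
  split_ifs <;> simp only [] <;> omega

lemma rmap_cls {n x y : ℕ} (hn : 2 ≤ n) (he : IsPolygonDiagonal (2*n) (x,y)) :
    ((x + y) % (2*n) = 1 ↔ clsP n (rmap (2*n) (x,y))) ∧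
    (clsP n (x,y) ↔ ((rmap (2*n) (x,y)).1 + (rmap (2*n) (x,y)).2) % (2*n) = 1) := by
  obtain ⟨a1, a2, a3, a4⟩ := he
  simp only at a1 a2 a3 a4
  have hs2 : (rmap (2*n) (x,y)).1 + (rmap (2*n) (x,y)).2 < 2*(2*n) := by
    simp only [rmap]; split_ifs <;> simp only [] <;> omega
  simp only [clsP]
  rw [mod_helper (by omega) (show x + y < 2*(2*n) by omega),
    mod_helper (by omega) hs2]
  simp only [rmap] at *
  split_ifs at * <;> simp only [] at * <;> constructor <;> constructor <;> intro <;> omega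

lemma reflect {n : ℕ} (hn : 2 ≤ n) (k : ℕ) :
    ((triSet (2*n)).filter
      (fun T => (T.filter (fun e => (e.1+e.2) % (2*n) = 1)).card = k)).card
      = (ESet n k).card := by
  have hm4 : 4 ≤ 2*n := by omega
  have key : ∀ T ∈ triSet (2*n),
      T.image (rmap (2*n)) ∈ triSet (2*n) ∧
      (T.image (rmap (2*n))).image (rmap (2*n)) = T ∧
      ((T.image (rmap (2*n))).filter (clsP n)).card
        = (T.filter (fun e => (e.1+e.2) % (2*n) = 1)).card ∧
      ((T.image (rmap (2*n))).filter (fun e => (e.1+e.2) % (2*n) = 1)).card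
        = (T.filter (clsP n)).card := by
    intro T hT
    obtain ⟨hdiag, hnc, hcard⟩ := mem_triSet.1 hT
    have hinj : Set.InjOn (rmap (2*n)) ↑T := by
      intro ⟨x,y⟩ hx ⟨u,w⟩ hu hequ
      have h1 := rmap_invol hm4 (hdiag _ (by simpa using hx))
      have h2 := rmap_invol hm4 (hdiag _ (by simpa using hu))
      rw [← h1, ← h2, hequ]
    have himgdiag : ∀ e ∈ T.image (rmap (2*n)), IsPolygonDiagonal (2*n) e := by
      intro e he
      obtain ⟨⟨x,y⟩, hx, rfl⟩ := Finset.mem_image.1 he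
      exact rmap_diag hm4 (hdiag _ hx)
    have himgnc : ∀ e ∈ T.image (rmap (2*n)), ∀ f ∈ T.image (rmap (2*n)),
        ¬ DiagonalsCross e f := by
      intro e he f hf
      obtain ⟨⟨x,y⟩, hx, rfl⟩ := Finset.mem_image.1 he
      obtain ⟨⟨u,w⟩, hu, rfl⟩ := Finset.mem_image.1 hf
      rw [rmap_cross (hdiag _ hx) (hdiag _ hu)]
      exact hnc _ hx _ hu
    have himgcard : (T.image (rmap (2*n))).card = T.card := Finset.card_image_of_injOn hinj
    have hdouble : (T.image (rmap (2*n))).image (rmap (2*n)) = T := by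
      rw [Finset.image_image]
      have he : ∀ e ∈ T, (rmap (2*n) ∘ rmap (2*n)) e = e := by
        rintro ⟨x,y⟩ hx
        exact rmap_invol hm4 (hdiag _ hx)
      rw [Finset.image_congr he, Finset.image_id']
    refine ⟨mem_triSet.2 ⟨himgdiag, himgnc, by rw [himgcard]; exact hcard⟩, hdouble, ?_, ?_⟩
    · rw [Finset.filter_image]
      have hcongr : T.filter (fun e => clsP n (rmap (2*n) e))
          = T.filter (fun e => (e.1+e.2) % (2*n) = 1) := by
        apply Finset.filter_congr
        rintro ⟨x,y⟩ hx
        exact ((rmap_cls hn (hdiag _ hx)).1).symm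
      rw [hcongr, Finset.card_image_of_injOn
        (hinj.mono (Finset.coe_subset.2 (Finset.filter_subset _ _)))]
    · rw [Finset.filter_image]
      rw [show T.filter (fun e => ((rmap (2*n) e).1 + (rmap (2*n) e).2) % (2*n) = 1)
          = T.filter (clsP n) from by
        apply Finset.filter_congr
        rintro ⟨x,y⟩ hx
        exact ((rmap_cls hn (hdiag _ hx)).2).symm]
      rw [Finset.card_image_of_injOn
        (hinj.mono (Finset.coe_subset.2 (Finset.filter_subset _ _)))]
  apply Finset.card_nbij' (i := fun T => T.image (rmap (2*n)))
    (j := fun T => T.image (rmap (2*n)))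
  all_goals simp only [Set.MapsTo, Set.LeftInvOn, Set.RightInvOn, Finset.mem_coe]
  · intro T hT
    rw [Finset.mem_filter] at hT
    obtain ⟨h1, h2, h3, h4⟩ := key T hT.1
    exact mem_ESet.2 ⟨mem_triSet.1 h1, by rw [h3]; exact hT.2⟩
  · intro T hT
    rw [mem_ESet] at hT
    obtain ⟨h1, h2, h3, h4⟩ := key T (mem_triSet.2 hT.1)
    rw [Finset.mem_filter]
    exact ⟨h1, by rw [h4]; exact hT.2⟩
  · intro T hT
    rw [Finset.mem_filter] at hT
    exact (key T hT.1).2.1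
  · intro T hT
    rw [mem_ESet] at hT
    exact (key T (mem_triSet.2 hT.1)).2.1

lemma pow_prod (l : List ℕ) :
    (l.map (fun i => 2 * catalan (2*i-1))).prod
      = 2 ^ l.length * (l.map (fun i => catalan (2*i-1))).prod := by
  induction l with
  | nil => simp
  | cons a l ih =>
    simp only [List.map_cons, List.prod_cons, List.length_cons, ih, pow_succ]
    ring

end TriProof12


theorem count_triangulations_with_k_parallel_to_01 (n k : ℕ) (hn : 2 ≤ n) (hk : 1 ≤ k) :
    {T : Finset (ℕ × ℕ) | IsTriangulation (2 * n) T ∧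
        (T.filter (fun e => (e.1 + e.2) % (2 * n) = 1)).card = k}.ncard =
      ∑ c ∈ Finset.univ.filter (fun c : Composition (n - 1) => c.length = k + 1),
        2 ^ (k + 1) * (c.blocks.map (fun i => catalan (2 * i - 1))).prod := by
  classical
  open TriProof2 TriProof7 TriProof9 TriProof10 TriProof11 TriProof12 in
  have hset : {T : Finset (ℕ × ℕ) | IsTriangulation (2 * n) T ∧
        (T.filter (fun e => (e.1 + e.2) % (2 * n) = 1)).card = k}
      = ↑((triSet (2*n)).filter
          (fun T => (T.filter (fun e => (e.1+e.2) % (2*n) = 1)).card = k)) := by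
    ext T
    simp only [Set.mem_setOf_eq, Finset.coe_filter, mem_triSet]
  rw [hset, Set.ncard_coe_finset, TriProof12.reflect hn k, TriProof12.master k n hn]
  apply Finset.sum_congr rfl
  intro c hc
  rw [Finset.mem_filter] at hc
  have hblocks : ∀ i ∈ c.blocks, (TriProof7.ESet (i+1) 0).card = 2 * catalan (2*i-1) :=
    fun i hi => TriProof10.A_val i (c.blocks_pos hi)
  rw [List.map_congr_left hblocks, TriProof12.pow_prod]
  have hlen : c.blocks.length = k + 1 := by rw [c.blocks_length, hc.2]
  rw [hlen]
end
end
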